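/- arXiv:2407.08620 — 5 statements merged into one kernel-verified Lean document; each statement's English description precedes it below -/
import Mathlib

section
/- Let C be a class of LTSs over a common alphabet such that for every A ∈ C there exists a history-deterministic A' ∈ C with L(A') = L(A). Then an LTS A ∈ C is history-deterministic if and only if A is guidable with respect to C. -/
/-- A labelled transition system over alphabet `Al`; `none` labels are ε-transitions.
`Acc` is the set of accepting infinite runs (as infinite sequences of transitions). -/
structure LTS (Al : Type) where
  St : Type
  init : St
  Tr : St → Option Al → St → Prop
  Acc : (ℕ → St × Option Al × St) → Prop

namespace LTS

variable {Al : Type}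

/-- `Path M q l q'` : the list `l` of transitions is a valid path of `M` from `q` to `q'`. -/
def Path (M : LTS Al) : M.St → List (M.St × Option Al × M.St) → M.St → Prop
  | q, [], q' => q = q'
  | q, t :: l, q' => t.1 = q ∧ M.Tr t.1 t.2.1 t.2.2 ∧ Path M t.2.2 l q'

/-- The finite word read along a list of transitions (ε-labels removed). -/
def wordOf {S : Type} (l : List (S × Option Al × S)) : List Al :=
  l.filterMap (fun t => t.2.1)

/-- A transition sequence over the single letter `σ` from `q` to `q'`:
one `σ`-labelled transition together with finitely many ε-transitions. -/
def SeqOver (M : LTS Al) (q : M.St) (σ : Al) (l : List (M.St × Option Al × M.St))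
    (q' : M.St) : Prop :=
  M.Path q l q' ∧ wordOf l = [σ]

/-- An infinite run of `M` from the initial state. -/
def IsRun (M : LTS Al) (ρ : ℕ → M.St × Option Al × M.St) : Prop :=
  (ρ 0).1 = M.init ∧ ∀ n, M.Tr (ρ n).1 (ρ n).2.1 (ρ n).2.2 ∧ (ρ (n + 1)).1 = (ρ n).2.2

/-- `ρ` is a (transition-)sequence on the infinite word `w`: the subsequence of
non-ε labels of `ρ` is exactly `w`. -/
def RunOn {S : Type} (ρ : ℕ → S × Option Al × S) (w : ℕ → Al) : Prop :=
  ∃ φ : ℕ → ℕ, StrictMono φ ∧ (∀ i, (ρ (φ i)).2.1 = some (w i)) ∧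
    ∀ n, (ρ n).2.1 ≠ none → ∃ i, φ i = n

/-- The language of infinite words of `M`. -/
def Lang (M : LTS Al) : Set (ℕ → Al) :=
  { w | ∃ ρ, M.IsRun ρ ∧ RunOn ρ w ∧ M.Acc ρ }

/-- `ρ` is the concatenation of the blocks `ms`. -/
def IsFlatten {T : Type} (ms : ℕ → List T) (ρ : ℕ → T) : Prop :=
  ∃ b : ℕ → ℕ, b 0 = 0 ∧ (∀ i, b (i + 1) = b i + (ms i).length) ∧
    ∀ i j (h : j < (ms i).length), ρ (b i + j) = (ms i).get ⟨j, h⟩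

/-- The concatenation of the blocks `ms` is an accepting run-sequence of `M`. -/
def FlatAcc (M : LTS Al) (ms : ℕ → List (M.St × Option Al × M.St)) : Prop :=
  ∃ ρ, IsFlatten ms ρ ∧ M.Acc ρ

/-- The moves `em` (one transition sequence per round) form a run of `M` from the
initial state on the letters `w`. -/
def ValidMoves (M : LTS Al) (w : ℕ → Al) (em : ℕ → List (M.St × Option Al × M.St)) : Prop :=
  ∃ q : ℕ → M.St, q 0 = M.init ∧ ∀ i, M.SeqOver (q i) (w i) (em i) (q (i + 1))

/-- `B.Simulates M` : Eve (playing in `B`) has a winning strategy in the simulation game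
`Sim(B, M)` against Adam (playing in `M`): in each round Adam picks a letter and a
transition sequence in `M` over it, then Eve picks a transition sequence in `B` over it;
Eve wins if her run is accepting or Adam's run is rejecting. -/
def Simulates (B M : LTS Al) : Prop :=
  ∃ st : List (Al × List (M.St × Option Al × M.St)) → List (B.St × Option Al × B.St),
    ∀ am : ℕ → Al × List (M.St × Option Al × M.St),
      M.ValidMoves (fun i => (am i).1) (fun i => (am i).2) →
        ¬ M.FlatAcc (fun i => (am i).2) ∨
          (B.ValidMoves (fun i => (am i).1)
              (fun i => st (List.ofFn fun j : Fin (i + 1) => am j.1)) ∧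
            B.FlatAcc (fun i => st (List.ofFn fun j : Fin (i + 1) => am j.1)))

/-- `M.HD` : Eve has a winning strategy in the letter game on `M`
(history-determinism): Adam picks letters, Eve picks transition sequences, and Eve
wins if the word is not in the language of `M` or her run is accepting. -/
def HD (M : LTS Al) : Prop :=
  ∃ st : List Al → List (M.St × Option Al × M.St),
    ∀ w : ℕ → Al, w ∈ M.Lang →
      M.ValidMoves w (fun i => st (List.ofFn fun j : Fin (i + 1) => w j.1)) ∧
      M.FlatAcc (fun i => st (List.ofFn fun j : Fin (i + 1) => w j.1))

/-- `G1Win B M` : Eve (playing in `B`) has a winning strategy in the one-token game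
`G1(B, M)` against Adam (playing in `M`): in each round Adam picks a letter, Eve picks a
transition sequence in `B` over it, then Adam picks a transition sequence in `M` over it;
Eve wins if her run is accepting or Adam's run is rejecting. -/
def G1Win (B M : LTS Al) : Prop :=
  ∃ st : List (Al × List (M.St × Option Al × M.St)) → Al → List (B.St × Option Al × B.St),
    ∀ am : ℕ → Al × List (M.St × Option Al × M.St),
      M.ValidMoves (fun i => (am i).1) (fun i => (am i).2) →
        B.ValidMoves (fun i => (am i).1)
          (fun i => st (List.ofFn fun j : Fin i => am j.1) (am i).1) ∧
        (B.FlatAcc (fun i => st (List.ofFn fun j : Fin i => am j.1) (am i).1) ∨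
          ¬ M.FlatAcc (fun i => (am i).2))

/-- `B` is a 1-token ghost of `M`. -/
def Ghost1 (B M : LTS Al) : Prop := B.Lang = M.Lang ∧ G1Win B M

/-- `M` is guidable with respect to the class `C` : `M` simulates every member of `C`
whose language is contained in that of `M`. -/
def Guidable (M : LTS Al) (C : Set (LTS Al)) : Prop :=
  ∀ B ∈ C, B.Lang ⊆ M.Lang → M.Simulates B

/-- A deterministic LTS: no ε-transitions and at most one transition per state and letter. -/
def Deterministic (M : LTS Al) : Prop :=
  (∀ q q', ¬ M.Tr q none q') ∧
    ∀ q a q₁ q₂, M.Tr q (some a) q₁ → M.Tr q (some a) q₂ → q₁ = q₂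

end LTS

namespace LTS

variable {Al : Type}

lemma exists_block (b : ℕ → ℕ) (h0 : b 0 = 0) (hs : ∀ i, b i < b (i+1)) :
    ∀ n, ∃ i, b i ≤ n ∧ n < b (i+1) := by
  intro n
  induction n with
  | zero => exact ⟨0, by omega, by have := hs 0; omega⟩
  | succ n ih =>
    obtain ⟨i, h1, h2⟩ := ih
    by_cases h : n + 1 < b (i+1)
    · exact ⟨i, by omega, h⟩
    · exact ⟨i+1, by omega, by have := hs (i+1); omega⟩

lemma filterMap_eq_singleton {α β : Type*} (f : α → Option β) :
    ∀ (l : List α) (a : β), l.filterMap f = [a] →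
      ∃ j, ∃ h : j < l.length, f (l.get ⟨j, h⟩) = some a ∧
        ∀ k (h' : k < l.length), k ≠ j → f (l.get ⟨k, h'⟩) = none := by
  intro l
  induction l with
  | nil => intro a h; simp at h
  | cons t l ih =>
    intro a h
    rcases hf : f t with _ | b
    · rw [List.filterMap_cons_none hf] at h
      obtain ⟨j, hj, h1, h2⟩ := ih a h
      refine ⟨j+1, by simpa using Nat.succ_lt_succ hj, h1, ?_⟩
      intro k hk hne
      cases k with
      | zero => simpa using hf
      | succ k => exact h2 k (by simpa using hk) (by omega)
    · rw [List.filterMap_cons_some hf] at h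
      injection h with hba hnil
      subst hba
      refine ⟨0, by simp, by simpa using hf, ?_⟩
      intro k hk hne
      cases k with
      | zero => omega
      | succ k =>
        rw [List.filterMap_eq_nil_iff] at hnil
        exact hnil _ (List.get_mem l _)

lemma path_facts {M : LTS Al} : ∀ (l : List (M.St × Option Al × M.St)) (q q' : M.St),
    M.Path q l q' →
    (∀ j (h : j < l.length),
        M.Tr (l.get ⟨j,h⟩).1 (l.get ⟨j,h⟩).2.1 (l.get ⟨j,h⟩).2.2) ∧
    (∀ h : 0 < l.length, (l.get ⟨0,h⟩).1 = q) ∧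
    (∀ j (hj : j < l.length) (hj' : j+1 < l.length),
        (l.get ⟨j+1,hj'⟩).1 = (l.get ⟨j,hj⟩).2.2) ∧
    (∀ j (h : j < l.length), j+1 = l.length → (l.get ⟨j,h⟩).2.2 = q') := by
  intro l
  induction l with
  | nil =>
    intro q q' _
    exact ⟨fun j h => absurd h (by simp), fun h => absurd h (by simp),
      fun j hj hj' => absurd hj (by simp), fun j h _ => absurd h (by simp)⟩
  | cons t l ih =>
    intro q q' hp
    obtain ⟨h1, h2, h3⟩ := hp
    obtain ⟨i1, i2, i3, i4⟩ := ih t.2.2 q' h3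
    refine ⟨?_, ?_, ?_, ?_⟩
    · intro j h
      cases j with
      | zero => simpa using h2
      | succ j => exact i1 j (by simpa using h)
    · intro h; simpa using h1
    · intro j hj hj'
      cases j with
      | zero =>
        have hl : 0 < l.length := by simp at hj'; omega
        have := i2 hl
        simp only [List.get_cons_succ, List.get_cons_zero]
        exact this
      | succ j =>
        have := i3 j (by simp at hj; omega) (by simp at hj'; omega)
        simpa using this
    · intro j h hlen
      cases j with
      | zero =>
        have : l.length = 0 := by simp only [List.length_cons] at hlen; omega
        have hl : l = [] := List.length_eq_zero_iff.mp this
        subst hl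
        simpa [Path] using h3
      | succ j =>
        have := i4 j (by simp only [List.length_cons] at h; omega)
          (by simp only [List.length_cons] at hlen; omega)
        simpa using this

lemma lang_of_moves {B : LTS Al} {w : ℕ → Al} {em : ℕ → List (B.St × Option Al × B.St)}
    (hv : B.ValidMoves w em) (ha : B.FlatAcc em) : w ∈ B.Lang := by
  obtain ⟨q, hq0, hseq⟩ := hv
  obtain ⟨ρ, ⟨b, hb0, hbs, hρ⟩, hacc⟩ := ha
  have hpath : ∀ i, B.Path (q i) (em i) (q (i+1)) := fun i => (hseq i).1
  have hword : ∀ i, wordOf (em i) = [w i] := fun i => (hseq i).2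
  have hword' : ∀ i, List.filterMap (fun t => t.2.1) (em i) = [w i] := fun i => hword i
  choose pos hpos hsome hnone using fun i =>
    filterMap_eq_singleton (fun t => t.2.1) (em i) (w i) (hword' i)
  have hlen : ∀ i, 0 < (em i).length := fun i => Nat.lt_of_le_of_lt (Nat.zero_le _) (hpos i)
  have hstrict : ∀ i, b i < b (i+1) := by
    intro i; rw [hbs]; have := hlen i; omega
  have hdec : ∀ n, ∃ i, ∃ j, ∃ h : j < (em i).length, n = b i + j := by
    intro n
    obtain ⟨i, h1, h2⟩ := exists_block b hb0 hstrict n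
    rw [hbs] at h2
    exact ⟨i, n - b i, by omega, by omega⟩
  refine ⟨ρ, ⟨?_, ?_⟩, ?_, hacc⟩
  · -- (ρ 0).1 = init
    have h0 : ρ 0 = (em 0).get ⟨0, hlen 0⟩ := by
      have := hρ 0 0 (hlen 0); rw [hb0] at this; simpa using this
    rw [h0, (path_facts (em 0) (q 0) (q 1) (hpath 0)).2.1 (hlen 0), hq0]
  · -- steps
    intro n
    obtain ⟨i, j, hj, rfl⟩ := hdec n
    have hn : ρ (b i + j) = (em i).get ⟨j, hj⟩ := hρ i j hj
    obtain ⟨f1, f2, f3, f4⟩ := path_facts (em i) (q i) (q (i+1)) (hpath i)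
    refine ⟨by rw [hn]; exact f1 j hj, ?_⟩
    by_cases hlast : j + 1 < (em i).length
    · have hn' : ρ (b i + j + 1) = (em i).get ⟨j+1, hlast⟩ := by
        have := hρ i (j+1) hlast; rw [← Nat.add_assoc] at this; exact this
      rw [hn', hn]; exact f3 j hj hlast
    · have hj1 : j + 1 = (em i).length := by omega
      have hn' : ρ (b i + j + 1) = (em (i+1)).get ⟨0, hlen (i+1)⟩ := by
        have := hρ (i+1) 0 (hlen (i+1))
        rw [hbs, ← hj1] at this
        simpa [Nat.add_assoc] using this
      rw [hn', hn,
        (path_facts (em (i+1)) (q (i+1)) (q (i+2)) (hpath (i+1))).2.1 (hlen (i+1))]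
      exact (f4 j hj hj1).symm
  · -- RunOn
    refine ⟨fun i => b i + pos i, ?_, ?_, ?_⟩
    · apply strictMono_nat_of_lt_succ
      intro i
      have h1 := hpos i
      have h2 := hbs i
      omega
    · intro i
      rw [hρ i (pos i) (hpos i)]
      exact hsome i
    · intro n hne
      obtain ⟨i, j, hj, rfl⟩ := hdec n
      refine ⟨i, ?_⟩
      by_cases hje : j = pos i
      · show b i + pos i = b i + j; omega
      · exact absurd (by rw [hρ i j hj]; exact hnone i j hj hje) hne

end LTS

open LTS

/-- If every LTS in the class `C` has a language-equivalent
history-deterministic LTS in `C`, then for every `M ∈ C`, `M` is history-deterministic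
iff `M` is guidable with respect to `C`. -/
theorem hd_closure_criterion {Al : Type} (C : Set (LTS Al))
    (hC : ∀ M ∈ C, ∃ M' ∈ C, M'.HD ∧ M'.Lang = M.Lang) :
    ∀ M ∈ C, (M.HD ↔ M.Guidable C) := by
  intro M hMC
  constructor
  · rintro ⟨hdst, hhd⟩ B hBC hsub
    refine ⟨fun h => hdst (h.map Prod.fst), ?_⟩
    intro am hval
    by_cases hacc : B.FlatAcc (fun i => (am i).2)
    · right
      have hw : (fun i => (am i).1) ∈ B.Lang := lang_of_moves hval hacc
      have h2 := hhd _ (hsub hw)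
      simpa [List.map_ofFn, Function.comp_def] using h2
    · left; exact hacc
  · intro hg
    obtain ⟨M', hM'C, ⟨hdst', hhd'⟩, hLang⟩ := hC M hMC
    obtain ⟨simst, hsim⟩ := hg M' hM'C (le_of_eq hLang)
    refine ⟨fun l => simst (List.ofFn fun j : Fin l.length =>
      (l.get j, hdst' (l.take (j.1+1)))), ?_⟩
    intro w hw
    set am : ℕ → Al × List (M'.St × Option Al × M'.St) :=
      fun i => (w i, hdst' (List.ofFn fun j : Fin (i+1) => w j.1)) with ham
    have hw' : w ∈ M'.Lang := hLang ▸ hw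
    have hhd := hhd' w hw'
    have hval' : M'.ValidMoves (fun i => (am i).1) (fun i => (am i).2) := hhd.1
    have h2 := hsim am hval'
    rcases h2 with h | ⟨hv, hf⟩
    · exact absurd hhd.2 h
    · have key : ∀ i : ℕ,
        (List.ofFn fun j : Fin ((List.ofFn fun j : Fin (i+1) => w j.1).length) =>
          ((List.ofFn fun j : Fin (i+1) => w j.1).get j,
            hdst' ((List.ofFn fun j : Fin (i+1) => w j.1).take (j.1+1)))) =
          List.ofFn fun j : Fin (i+1) => am j.1 := by
        intro i
        apply List.ext_getElem
        · simp only [List.length_ofFn]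
        intro n h1 h2
        have hn : n < i + 1 := by simpa using h2
        have htake : (List.ofFn fun j : Fin (i+1) => w j.1).take (n+1) =
            List.ofFn fun j : Fin (n+1) => w j.1 := by
          apply List.ext_getElem
          · simp only [List.length_take, List.length_ofFn]; omega
          intro k hk1 hk2
          simp only [List.getElem_take, List.getElem_ofFn]
        simp only [List.getElem_ofFn, List.get_eq_getElem, htake, ham]
      have e : (fun i : ℕ =>
          simst (List.ofFn fun j : Fin ((List.ofFn fun j : Fin (i+1) => w j.1).length) =>
            ((List.ofFn fun j : Fin (i+1) => w j.1).get j,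
              hdst' ((List.ofFn fun j : Fin (i+1) => w j.1).take (j.1+1))))) =
          fun i => simst (List.ofFn fun j : Fin (i+1) => am j.1) :=
        funext fun i => congrArg simst (key i)
      exact ⟨by rw [e]; exact hv, by rw [e]; exact hf⟩
end

section
/- Let A = (Σ, Q, ι, c₀, Δ, F_Q, F_C) be a (𝒞,K,S)-automaton with safety, synchronous-reachability, or asynchronous-reachability acceptance. Then Delay(A) is a (𝒞,K,S)-automaton with the same acceptance semantics, L(Delay(A)) = L(A), and Eve has a winning strategy in the 1-token game G1(Delay(A), A); that is, Delay(A) is a 1-token ghost of A. -/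
/-- The three acceptance semantics for uniform automata classes. -/
inductive AccSem where
  | safety
  | syncReach
  | asyncReach

/-- A `(𝒞, K, S)`-automaton over alphabet `Al` with content space `C` (the constraints
relating it to `K` and `S`, and finiteness, are expressed by `UAut.WF`). Partial
functions `C ⇀ C` are modelled as functions `C → Option C`. -/
structure UAut (Al C : Type) where
  Q : Type
  init : Q
  c0 : C
  Δ : Set (Q × Option Al × (C → Option C) × Q)
  FQ : Set Q
  FC : Set C

namespace UAut

variable {Al C : Type}

/-- Wellformedness of a `(𝒞, K, S)`-automaton: finite state space, finitely many
transitions, all update functions in `K`, and accepting contents in `S`. -/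
def WF (M : UAut Al C) (K : Set (C → Option C)) (S : Set (Set C)) : Prop :=
  Finite M.Q ∧ M.Δ.Finite ∧ (∀ t ∈ M.Δ, t.2.2.1 ∈ K) ∧ M.FC ∈ S

/-- The LTS induced by a `(𝒞, K, S)`-automaton with the given acceptance semantics:
states are configurations in `Q × C`. -/
def toLTS (M : UAut Al C) (sem : AccSem) : LTS Al where
  St := M.Q × C
  init := (M.init, M.c0)
  Tr := fun s x s' => ∃ f, (s.1, x, f, s'.1) ∈ M.Δ ∧ f s.2 = some s'.2
  Acc := fun ρ =>
    match sem with
    | .safety => ∀ n, (ρ n).1.1 ∈ M.FQ ∧ (ρ n).1.2 ∈ M.FC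
    | .syncReach => ∃ n, (ρ n).1.1 ∈ M.FQ ∧ (ρ n).1.2 ∈ M.FC
    | .asyncReach => (∃ n, (ρ n).1.1 ∈ M.FQ) ∧ (∃ n, (ρ n).1.2 ∈ M.FC)

/-- The `Delay` of a `(𝒞, K, S)`-automaton: it delays every transition by one letter,
storing the previous letter in the state space (`none` is the new initial state `ι'`). -/
def Delay (M : UAut Al C) : UAut Al C where
  Q := Option (M.Q × Al)
  init := none
  c0 := M.c0
  Δ := { t |
      (∃ σ : Al, t = (none, some σ, fun c => some c, some (M.init, σ))) ∨
      (∃ q σ σ' f q', (q, some σ, f, q') ∈ M.Δ ∧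
        t = (some (q, σ), some σ', f, some (q', σ'))) ∨
      (∃ q σ f q', (q, none, f, q') ∈ M.Δ ∧
        t = (some (q, σ), none, f, some (q', σ))) }
  FQ := { x | (∃ q σ, x = some (q, σ) ∧ q ∈ M.FQ) ∨ (x = none ∧ M.init ∈ M.FQ) }
  FC := M.FC

end UAut


namespace DelayGhost


theorem decompN (b L : ℕ → ℕ) (h0 : b 0 = 0) (hs : ∀ i, b (i+1) = b i + L i)
    (hL : ∀ i, 1 ≤ L i) (n : ℕ) : ∃ i j, j < L i ∧ n = b i + j := by
  induction n with
  | zero => exact ⟨0, 0, hL 0, by omega⟩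
  | succ n ih =>
    obtain ⟨i, j, hj, rfl⟩ := ih
    by_cases h : j + 1 < L i
    · exact ⟨i, j + 1, h, by omega⟩
    · exact ⟨i + 1, 0, hL _, by have := hs i; omega⟩

theorem uniqN (b L : ℕ → ℕ) (hs : ∀ i, b (i+1) = b i + L i)
    {i j i' j' : ℕ} (hj : j < L i) (hj' : j' < L i') (he : b i + j = b i' + j') :
    i = i' ∧ j = j' := by
  have hmono : Monotone b := monotone_nat_of_le_succ (fun n => by have := hs n; omega)
  rcases lt_trichotomy i i' with h | h | h
  · have h1 : b (i+1) ≤ b i' := hmono h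
    have := hs i; omega
  · subst h; omega
  · have h1 : b (i'+1) ≤ b i := hmono h
    have := hs i'; omega

theorem get_eq_of_eq {α : Type*} {l l' : List α} (h : l = l') {j : ℕ} (hj : j < l.length) :
    l.get ⟨j, hj⟩ = l'.get ⟨j, h ▸ hj⟩ := by subst h; rfl

theorem exists_flatten {T : Type} (ms : ℕ → List T) (h : ∀ i, 1 ≤ (ms i).length) :
    ∃ (ρ : ℕ → T) (b : ℕ → ℕ), b 0 = 0 ∧ (∀ i, b (i+1) = b i + (ms i).length) ∧
      ∀ i j (hj : j < (ms i).length), ρ (b i + j) = (ms i).get ⟨j, hj⟩ := by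
  set b : ℕ → ℕ := fun i => ∑ k ∈ Finset.range i, (ms k).length with hb
  have h0 : b 0 = 0 := by simp [hb]
  have hs : ∀ i, b (i+1) = b i + (ms i).length := fun i => Finset.sum_range_succ _ i
  have hdec : ∀ n, ∃ p : ℕ × ℕ, p.2 < (ms p.1).length ∧ n = b p.1 + p.2 := by
    intro n; obtain ⟨i, j, hj, hn⟩ := decompN b _ h0 hs h n; exact ⟨(i, j), hj, hn⟩
  refine ⟨fun n => (ms ((hdec n).choose.1)).get ⟨(hdec n).choose.2, ((hdec n).choose_spec.1)⟩,
    b, h0, hs, ?_⟩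
  intro i j hj
  have hsp := (hdec (b i + j)).choose_spec
  obtain ⟨hi, hjj⟩ := uniqN b _ hs hsp.1 hj hsp.2.symm
  have aux : ∀ (p : ℕ × ℕ) (hp : p.2 < (ms p.1).length), p.1 = i → p.2 = j →
      (ms p.1).get ⟨p.2, hp⟩ = (ms i).get ⟨j, hj⟩ := by
    rintro ⟨a, a'⟩ hp rfl rfl; rfl
  exact aux _ hsp.1 hi hjj

def cnt (lab : ℕ → Option α) (n : ℕ) : ℕ :=
  ((Finset.range n).filter (fun m => (lab m).isSome)).card

theorem cnt_succ (lab : ℕ → Option α) (n : ℕ) :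
    cnt lab (n+1) = cnt lab n + (if (lab n).isSome then 1 else 0) := by
  unfold cnt
  rw [Finset.range_add_one, Finset.filter_insert]
  split
  · rw [Finset.card_insert_of_notMem (by simp)]
  · simp

theorem cnt_phi (lab : ℕ → Option α) (φ : ℕ → ℕ) (hm : StrictMono φ)
    (hl : ∀ i, (lab (φ i)).isSome) (hc : ∀ n, lab n ≠ none → ∃ i, φ i = n) (i : ℕ) :
    cnt lab (φ i) = i := by
  unfold cnt
  have he : (Finset.range (φ i)).filter (fun m => (lab m).isSome) = (Finset.range i).image φ := by
    ext m
    simp only [Finset.mem_filter, Finset.mem_range, Finset.mem_image]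
    constructor
    · rintro ⟨h1, h2⟩
      obtain ⟨j, rfl⟩ := hc m (Option.isSome_iff_ne_none.mp h2)
      exact ⟨j, hm.lt_iff_lt.mp h1, rfl⟩
    · rintro ⟨j, hj, rfl⟩
      exact ⟨hm hj, hl j⟩
  rw [he, Finset.card_image_of_injective _ hm.injective, Finset.card_range]


open LTS UAut

variable {Al C : Type} (M : UAut Al C)

/-- Transitions of the LTS induced by `M`. -/
abbrev TA (M : UAut Al C) : Type := (M.Q × C) × Option Al × (M.Q × C)
/-- Transitions of the LTS induced by `Delay M`. -/
abbrev TB (M : UAut Al C) : Type :=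
  (Option (M.Q × Al) × C) × Option Al × (Option (M.Q × Al) × C)

def liftSt (σ : Al) (s : M.Q × C) : Option (M.Q × Al) × C := (some (s.1, σ), s.2)

def nextL (σc σn : Al) (x : Option Al) : Al := match x with | none => σc | some _ => σn

def liftTr (σc σn : Al) (t : TA M) : TB M :=
  (liftSt M σc t.1, Option.map (fun _ => σn) t.2.1, liftSt M (nextL σc σn t.2.1) t.2.2)

def liftL : Al → Al → List (TA M) → List (TB M)
  | _, _, [] => []
  | σc, σn, t :: l => liftTr M σc σn t :: liftL (nextL σc σn t.2.1) σn l

theorem liftL_length : ∀ (σc σn : Al) (l : List (TA M)),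
    (liftL M σc σn l).length = l.length
  | _, _, [] => rfl
  | σc, σn, t :: l => by simp [liftL, liftL_length]

theorem liftL_get_fst : ∀ (σc σn : Al) (l : List (TA M)) (j : ℕ) (hj : j < l.length)
    (hj' : j < (liftL M σc σn l).length),
    ∃ σ, ((liftL M σc σn l).get ⟨j, hj'⟩).1 =
      (some ((l.get ⟨j, hj⟩).1.1, σ), (l.get ⟨j, hj⟩).1.2)
  | σc, σn, t :: l, 0, _, _ => ⟨σc, rfl⟩
  | σc, σn, t :: l, j+1, hj, hj' =>
      liftL_get_fst (nextL σc σn t.2.1) σn l j (by simpa using hj)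
        (by simpa [liftL] using hj')

theorem tr_init (sem : AccSem) (σ : Al) :
    (M.Delay.toLTS sem).Tr (none, M.c0) (some σ) (some (M.init, σ), M.c0) :=
  ⟨fun c => some c, Or.inl ⟨σ, rfl⟩, rfl⟩

theorem tr_lift_eps (sem : AccSem) {s u : M.Q × C} (σ : Al)
    (h : (M.toLTS sem).Tr s none u) :
    (M.Delay.toLTS sem).Tr (liftSt M σ s) none (liftSt M σ u) := by
  obtain ⟨f, hf, hfc⟩ := h
  exact ⟨f, Or.inr (Or.inr ⟨s.1, σ, f, u.1, hf, rfl⟩), hfc⟩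

theorem tr_lift_some (sem : AccSem) {s u : M.Q × C} {a : Al} (σ' : Al)
    (h : (M.toLTS sem).Tr s (some a) u) :
    (M.Delay.toLTS sem).Tr (liftSt M a s) (some σ') (liftSt M σ' u) := by
  obtain ⟨f, hf, hfc⟩ := h
  exact ⟨f, Or.inr (Or.inl ⟨s.1, a, σ', f, u.1, hf, rfl⟩), hfc⟩

theorem tr_liftTr (sem : AccSem) (σc σn : Al) (t : TA M)
    (h : (M.toLTS sem).Tr t.1 t.2.1 t.2.2)
    (hx : ∀ a, t.2.1 = some a → a = σc) :
    (M.Delay.toLTS sem).Tr (liftTr M σc σn t).1 (liftTr M σc σn t).2.1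
      (liftTr M σc σn t).2.2 := by
  obtain ⟨s, x, u⟩ := t
  cases x with
  | none => exact tr_lift_eps M sem σc h
  | some a =>
    have ha := hx a rfl
    subst ha
    exact tr_lift_some M sem σn h

theorem path_lift_eps (sem : AccSem) (σc σn : Al) (l : List (TA M)) :
    ∀ (q q' : M.Q × C), (M.toLTS sem).Path q l q' → LTS.wordOf l = [] →
      (M.Delay.toLTS sem).Path (liftSt M σc q) (liftL M σc σn l) (liftSt M σc q') := by
  induction l with
  | nil =>
    intro q q' h hw
    exact congrArg _ h
  | cons t l ih =>
    rintro q q' ⟨h1, h2, h3⟩ hw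
    obtain ⟨s, x, u⟩ := t
    dsimp at h1 h2 h3
    subst h1
    cases x with
    | some a => simp [LTS.wordOf] at hw
    | none =>
      have hw' : LTS.wordOf l = [] := by simpa [LTS.wordOf] using hw
      exact ⟨rfl, tr_lift_eps M sem σc h2, ih u q' h3 hw'⟩

theorem path_lift_word (sem : AccSem) (σc σn : Al) (l : List (TA M)) :
    ∀ (q q' : M.Q × C), (M.toLTS sem).Path q l q' → LTS.wordOf l = [σc] →
      (M.Delay.toLTS sem).Path (liftSt M σc q) (liftL M σc σn l) (liftSt M σn q') := by
  induction l with
  | nil => intro q q' h hw; simp [LTS.wordOf] at hw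
  | cons t l ih =>
    rintro q q' ⟨h1, h2, h3⟩ hw
    obtain ⟨s, x, u⟩ := t
    dsimp at h1 h2 h3
    subst h1
    cases x with
    | none =>
      have hw' : LTS.wordOf l = [σc] := by simpa [LTS.wordOf] using hw
      exact ⟨rfl, tr_lift_eps M sem σc h2, ih u q' h3 hw'⟩
    | some a =>
      have ha : a = σc ∧ LTS.wordOf l = [] := by simpa [LTS.wordOf] using hw
      obtain ⟨rfl, hw'⟩ := ha
      exact ⟨rfl, tr_lift_some M sem σn h2, path_lift_eps M sem σn σn l u q' h3 hw'⟩

theorem wordOf_liftL : ∀ (σc σn : Al) (l : List (TA M)),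
    LTS.wordOf (liftL M σc σn l) = (LTS.wordOf l).map (fun _ => σn)
  | _, _, [] => rfl
  | σc, σn, t :: l => by
    obtain ⟨s, x, u⟩ := t
    cases x <;> simp [LTS.wordOf, liftL, liftTr] <;>
      simpa [LTS.wordOf] using wordOf_liftL _ σn l

theorem seqOver_lift (sem : AccSem) (σc σn : Al) {l : List (TA M)} {q q' : M.Q × C}
    (h : (M.toLTS sem).SeqOver q σc l q') :
    (M.Delay.toLTS sem).SeqOver (liftSt M σc q) σn (liftL M σc σn l) (liftSt M σn q') :=
  ⟨path_lift_word M sem σc σn l q q' h.1 h.2, by erw [wordOf_liftL, h.2]; rfl⟩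

theorem FQ'_some (sem : AccSem) {q : M.Q} (σ : Al) (h : q ∈ M.FQ) :
    (some (q, σ) : Option (M.Q × Al)) ∈ M.Delay.FQ := Or.inl ⟨q, σ, rfl, h⟩

theorem FQ'_none (h : M.init ∈ M.FQ) :
    (none : Option (M.Q × Al)) ∈ M.Delay.FQ := Or.inr ⟨rfl, h⟩

theorem of_FQ'_some {q : M.Q} {σ : Al}
    (h : (some (q, σ) : Option (M.Q × Al)) ∈ M.Delay.FQ) : q ∈ M.FQ := by
  rcases h with ⟨q', σ', he, hq⟩ | ⟨he, _⟩
  · simp only [Option.some.injEq, Prod.mk.injEq] at he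
    rw [he.1]; exact hq
  · exact absurd he (by simp)

theorem of_FQ'_none (h : (none : Option (M.Q × Al)) ∈ M.Delay.FQ) : M.init ∈ M.FQ := by
  rcases h with ⟨q', σ', he, _⟩ | ⟨_, hι⟩
  · exact absurd he (by simp)
  · exact hι

theorem acc_transfer (sem : AccSem) (ρA : ℕ → TA M) (ρE : ℕ → TB M)
    (h0q : (ρE 0).1.1 = none) (h0c : (ρE 0).1.2 = M.c0)
    (hA0 : (ρA 0).1 = (M.init, M.c0))
    (hfwd : ∀ n, ∃ m σ, (ρE m).1 = (some ((ρA n).1.1, σ), (ρA n).1.2))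
    (hbwd : ∀ m, m = 0 ∨ ∃ n σ, (ρE m).1 = (some ((ρA n).1.1, σ), (ρA n).1.2))
    (hacc : (M.toLTS sem).Acc ρA) : (M.Delay.toLTS sem).Acc ρE := by
  cases sem with
  | safety =>
    have hacc' : ∀ n, (ρA n).1.1 ∈ M.FQ ∧ (ρA n).1.2 ∈ M.FC := hacc
    show ∀ m, (ρE m).1.1 ∈ M.Delay.FQ ∧ (ρE m).1.2 ∈ M.Delay.FC
    intro m
    rcases hbwd m with rfl | ⟨n, σ, hm⟩
    · have h0 := hacc' 0
      rw [hA0] at h0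
      exact ⟨by rw [h0q]; exact FQ'_none M h0.1, by rw [h0c]; exact h0.2⟩
    · have hn := hacc' n
      rw [show (ρE m).1.1 = some ((ρA n).1.1, σ) from by rw [hm],
        show (ρE m).1.2 = (ρA n).1.2 from by rw [hm]]
      exact ⟨FQ'_some M AccSem.safety σ hn.1, hn.2⟩
  | syncReach =>
    have hacc' : ∃ n, (ρA n).1.1 ∈ M.FQ ∧ (ρA n).1.2 ∈ M.FC := hacc
    show ∃ m, (ρE m).1.1 ∈ M.Delay.FQ ∧ (ρE m).1.2 ∈ M.Delay.FC
    obtain ⟨n, h1, h2⟩ := hacc'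
    obtain ⟨m, σ, hm⟩ := hfwd n
    refine ⟨m, ?_, ?_⟩
    · rw [show (ρE m).1.1 = some ((ρA n).1.1, σ) from by rw [hm]]
      exact FQ'_some M AccSem.syncReach σ h1
    · rw [show (ρE m).1.2 = (ρA n).1.2 from by rw [hm]]; exact h2
  | asyncReach =>
    have hacc' : (∃ n, (ρA n).1.1 ∈ M.FQ) ∧ (∃ n, (ρA n).1.2 ∈ M.FC) := hacc
    show (∃ m, (ρE m).1.1 ∈ M.Delay.FQ) ∧ (∃ m, (ρE m).1.2 ∈ M.Delay.FC)
    obtain ⟨⟨n1, h1⟩, ⟨n2, h2⟩⟩ := hacc'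
    obtain ⟨m1, σ1, hm1⟩ := hfwd n1
    obtain ⟨m2, σ2, hm2⟩ := hfwd n2
    constructor
    · refine ⟨m1, ?_⟩
      rw [show (ρE m1).1.1 = some ((ρA n1).1.1, σ1) from by rw [hm1]]
      exact FQ'_some M AccSem.asyncReach σ1 h1
    · refine ⟨m2, ?_⟩
      rw [show (ρE m2).1.2 = (ρA n2).1.2 from by rw [hm2]]; exact h2

theorem acc_transfer' (sem : AccSem) (ρB : ℕ → TB M) (ρA : ℕ → TA M)
    (hA0 : (ρA 0).1 = (M.init, M.c0))
    (hB0 : (ρB 0).1 = (none, M.c0))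
    (hsrc : ∀ n, ∃ σ, (ρB (n+1)).1 = (some ((ρA n).1.1, σ), (ρA n).1.2))
    (hacc : (M.Delay.toLTS sem).Acc ρB) : (M.toLTS sem).Acc ρA := by
  cases sem with
  | safety =>
    have hacc' : ∀ m, (ρB m).1.1 ∈ M.Delay.FQ ∧ (ρB m).1.2 ∈ M.Delay.FC := hacc
    show ∀ n, (ρA n).1.1 ∈ M.FQ ∧ (ρA n).1.2 ∈ M.FC
    intro n
    obtain ⟨σ, h⟩ := hsrc n
    have h1 := hacc' (n+1)
    rw [show (ρB (n+1)).1.1 = some ((ρA n).1.1, σ) from by rw [h],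
      show (ρB (n+1)).1.2 = (ρA n).1.2 from by rw [h]] at h1
    exact ⟨of_FQ'_some M h1.1, h1.2⟩
  | syncReach =>
    have hacc' : ∃ m, (ρB m).1.1 ∈ M.Delay.FQ ∧ (ρB m).1.2 ∈ M.Delay.FC := hacc
    show ∃ n, (ρA n).1.1 ∈ M.FQ ∧ (ρA n).1.2 ∈ M.FC
    obtain ⟨m, h1, h2⟩ := hacc'
    cases m with
    | zero =>
      rw [show (ρB 0).1.1 = none from by rw [hB0]] at h1
      rw [show (ρB 0).1.2 = M.c0 from by rw [hB0]] at h2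
      refine ⟨0, ?_, ?_⟩
      · rw [show (ρA 0).1.1 = M.init from by rw [hA0]]; exact of_FQ'_none M h1
      · rw [show (ρA 0).1.2 = M.c0 from by rw [hA0]]; exact h2
    | succ n =>
      obtain ⟨σ, h⟩ := hsrc n
      rw [show (ρB (n+1)).1.1 = some ((ρA n).1.1, σ) from by rw [h]] at h1
      rw [show (ρB (n+1)).1.2 = (ρA n).1.2 from by rw [h]] at h2
      exact ⟨n, of_FQ'_some M h1, h2⟩
  | asyncReach =>
    have hacc' : (∃ m, (ρB m).1.1 ∈ M.Delay.FQ) ∧ (∃ m, (ρB m).1.2 ∈ M.Delay.FC) := hacc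
    show (∃ n, (ρA n).1.1 ∈ M.FQ) ∧ (∃ n, (ρA n).1.2 ∈ M.FC)
    obtain ⟨⟨m1, h1⟩, ⟨m2, h2⟩⟩ := hacc'
    constructor
    · cases m1 with
      | zero =>
        rw [show (ρB 0).1.1 = none from by rw [hB0]] at h1
        exact ⟨0, by rw [show (ρA 0).1.1 = M.init from by rw [hA0]]; exact of_FQ'_none M h1⟩
      | succ n =>
        obtain ⟨σ, h⟩ := hsrc n
        rw [show (ρB (n+1)).1.1 = some ((ρA n).1.1, σ) from by rw [h]] at h1
        exact ⟨n, of_FQ'_some M h1⟩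
    · cases m2 with
      | zero =>
        rw [show (ρB 0).1.2 = M.c0 from by rw [hB0]] at h2
        exact ⟨0, by rw [show (ρA 0).1.2 = M.c0 from by rw [hA0]]; exact h2⟩
      | succ n =>
        obtain ⟨σ, h⟩ := hsrc n
        rw [show (ρB (n+1)).1.2 = (ρA n).1.2 from by rw [h]] at h2
        exact ⟨n, h2⟩

def evestrat : List (Al × List (TA M)) → Al → List (TB M) := fun h σ =>
  (h.getLast?).elim [((none, M.c0), some σ, (some (M.init, σ), M.c0))]
    (fun p => liftL M p.1 σ p.2)

theorem getLast?_ofFn {α : Type*} {n : ℕ} (f : Fin (n+1) → α) :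
    (List.ofFn f).getLast? = some (f (Fin.last n)) := by
  rw [List.ofFn_succ', List.concat_eq_append, List.getLast?_concat]

theorem g1win (sem : AccSem) : LTS.G1Win (M.Delay.toLTS sem) (M.toLTS sem) := by
  classical
  refine ⟨evestrat M, ?_⟩
  intro am hvm
  obtain ⟨qA, hqA0, hqA⟩ := hvm
  set em : ℕ → List (TB M) :=
    fun i => evestrat M (List.ofFn fun j : Fin i => am j.1) (am i).1 with hem
  have hem0 : em 0 = [((none, M.c0), some (am 0).1, (some (M.init, (am 0).1), M.c0))] := by
    rw [hem]
    show evestrat M (List.ofFn fun j : Fin 0 => am j.1) (am 0).1 = _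
    erw [List.ofFn_zero]
    rfl
  have hems : ∀ i, em (i+1) = liftL M (am i).1 (am (i+1)).1 (am i).2 := by
    intro i
    rw [hem]
    show evestrat M (List.ofFn fun j : Fin (i+1) => am j.1) (am (i+1)).1 = _
    unfold evestrat
    erw [getLast?_ofFn]
    rfl
  have hlen : ∀ i, 1 ≤ (am i).2.length := by
    intro i
    cases h : (am i).2 with
    | nil =>
      have := (hqA i).2
      dsimp only at this
      rw [h] at this
      simp [LTS.wordOf] at this
    | cons a l => simp [h]
  have hvalid : (M.Delay.toLTS sem).ValidMoves (fun i => (am i).1) em := by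
    refine ⟨fun n => Nat.casesOn n ((none, M.c0) : Option (M.Q × Al) × C)
      (fun m => liftSt M (am m).1 (qA m)), rfl, ?_⟩
    intro i
    cases i with
    | zero =>
      rw [hem0]
      refine ⟨⟨rfl, ?_, ?_⟩, rfl⟩
      · exact tr_init M sem (am 0).1
      · show (some (M.init, (am 0).1), M.c0) = liftSt M (am 0).1 (qA 0)
        rw [hqA0]
        rfl
    | succ i =>
      rw [hems i]
      exact seqOver_lift M sem _ _ (hqA i)
  refine ⟨hvalid, ?_⟩
  by_cases hFA : (M.toLTS sem).FlatAcc (fun i => (am i).2)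
  swap
  · exact Or.inr hFA
  obtain ⟨ρA, ⟨bA, hbA0, hbAs, hbAg⟩, haccA⟩ := hFA
  have hlenE : ∀ i, 1 ≤ (em i).length := by
    intro i
    cases i with
    | zero => rw [hem0]; simp
    | succ i => rw [hems i]; erw [liftL_length]; exact hlen i
  obtain ⟨ρE, bE, hbE0, hbEs, hbEg⟩ := exists_flatten em hlenE
  have key : ∀ i j (hj : j < (am i).2.length),
      ∃ σ, (ρE (bE (i+1) + j)).1 = (some ((ρA (bA i + j)).1.1, σ), (ρA (bA i + j)).1.2) := by
    intro i j hj
    have hj' : j < (em (i+1)).length := by rw [hems i]; erw [liftL_length]; exact hj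
    have hjL : j < (liftL M (am i).1 (am (i+1)).1 (am i).2).length := by
      erw [liftL_length]; exact hj
    have e1 : ρE (bE (i+1) + j) = (liftL M (am i).1 (am (i+1)).1 (am i).2).get ⟨j, hjL⟩ := by
      rw [hbEg (i+1) j hj']
      exact get_eq_of_eq (hems i) _
    obtain ⟨σ, hσ⟩ := liftL_get_fst M (am i).1 (am (i+1)).1 (am i).2 j hj hjL
    refine ⟨σ, ?_⟩
    rw [e1, hσ, hbAg i j hj]; rfl
  have hA0 : (ρA 0).1 = (M.init, M.c0) := by
    have hp := (hqA 0).1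
    dsimp only at hp
    cases h : (am 0).2 with
    | nil =>
      have := hlen 0
      rw [h] at this
      simp at this
    | cons t l =>
      rw [h] at hp
      obtain ⟨ht, _, _⟩ := hp
      have h2 := hbAg 0 0 (hlen 0)
      rw [hbA0] at h2
      have h3 : ρA 0 = t := by
        have := h2.trans ((get_eq_of_eq h _).trans rfl)
        simpa using this
      rw [h3, ht, hqA0]
      rfl
  have hE00 : ρE 0 = ((none, M.c0), some (am 0).1, (some (M.init, (am 0).1), M.c0)) := by
    have h := hbEg 0 0 (hlenE 0)
    rw [hbE0] at h
    exact h.trans ((get_eq_of_eq hem0 _).trans rfl)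
  refine Or.inl ⟨ρE, ⟨bE, hbE0, hbEs, hbEg⟩, ?_⟩
  apply acc_transfer M sem ρA ρE (by rw [hE00]) (by rw [hE00]) hA0 ?_ ?_ haccA
  · intro n
    obtain ⟨i, j, hj, rfl⟩ := decompN bA _ hbA0 hbAs hlen n
    obtain ⟨σ, h⟩ := key i j hj
    exact ⟨bE (i+1) + j, σ, h⟩
  · intro m
    obtain ⟨i, j, hj, rfl⟩ := decompN bE _ hbE0 hbEs hlenE m
    cases i with
    | zero =>
      left
      have hj1 : j = 0 := by
        rw [hem0] at hj
        simpa using hj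
      rw [hj1, hbE0]
    | succ i =>
      right
      rw [hems i] at hj; erw [liftL_length] at hj
      obtain ⟨σ, h⟩ := key i j hj
      exact ⟨bA i + j, σ, h⟩

theorem lang_sub2 (sem : AccSem) : (M.toLTS sem).Lang ⊆ (M.Delay.toLTS sem).Lang := by
  rintro w ⟨ρ, ⟨hr0, hrs⟩, ⟨φ, hφm, hφl, hφc⟩, hacc⟩
  classical
  set lab : ℕ → Option Al := fun n => (ρ n).2.1 with hlab
  set c : ℕ → ℕ := fun n => cnt lab n with hc
  have hcφ : ∀ i, c (φ i) = i := by
    intro i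
    exact cnt_phi lab φ hφm (fun j => by rw [show lab (φ j) = some (w j) from hφl j]; rfl) hφc i
  have key : ∀ n a, (ρ n).2.1 = some a → a = w (c n) := by
    intro n a h
    obtain ⟨i, rfl⟩ := hφc n (by rw [h]; simp)
    have h2 := hφl i
    rw [h] at h2
    rw [Option.some.inj h2, hcφ i]
  have hc0 : c 0 = 0 := by simp [hc, cnt]
  have hcn : ∀ n, (ρ n).2.1 = none → c (n+1) = c n := by
    intro n h
    have h' := cnt_succ lab n
    rw [show lab n = none from h] at h'
    simpa using h'
  have hcs : ∀ n a, (ρ n).2.1 = some a → c (n+1) = c n + 1 := by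
    intro n a h
    have h' := cnt_succ lab n
    rw [show lab n = some a from h] at h'
    simpa using h'
  set ρB : ℕ → TB M := fun n => Nat.casesOn n
      (((none, M.c0), some (w 0), (some ((ρ 0).1.1, w 0), (ρ 0).1.2)) : TB M)
      (fun m => liftTr M (w (c m)) (w (c m + 1)) (ρ m)) with hρB
  have h01 : (ρ 0).1.1 = M.init := by rw [hr0]; rfl
  have h02 : (ρ 0).1.2 = M.c0 := by rw [hr0]; rfl
  refine ⟨ρB, ⟨rfl, ?_⟩, ⟨fun i => Nat.casesOn i 0 (fun i' => φ i' + 1), ?_, ?_, ?_⟩, ?_⟩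
  · intro n
    cases n with
    | zero =>
      constructor
      · show (M.Delay.toLTS sem).Tr (none, M.c0) (some (w 0))
          (some ((ρ 0).1.1, w 0), (ρ 0).1.2)
        rw [h01, h02]
        exact tr_init M sem (w 0)
      · show liftSt M (w (c 0)) (ρ 0).1 = (some ((ρ 0).1.1, w 0), (ρ 0).1.2)
        rw [hc0]
        rfl
    | succ n =>
      constructor
      · exact tr_liftTr M sem _ _ (ρ n) ((hrs n).1) (fun a ha => key n a ha)
      · show liftSt M (w (c (n+1))) (ρ (n+1)).1 =
          liftSt M (nextL (w (c n)) (w (c n + 1)) (ρ n).2.1) (ρ n).2.2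
        rw [(hrs n).2]
        cases hx : (ρ n).2.1 with
        | none => rw [hcn n hx]; rfl
        | some a => rw [hcs n a hx]; rfl
  · apply strictMono_nat_of_lt_succ
    intro n
    cases n with
    | zero => exact Nat.succ_pos _
    | succ n => exact Nat.succ_lt_succ (hφm (Nat.lt_succ_self n))
  · intro i
    cases i with
    | zero => rfl
    | succ i =>
      show Option.map (fun _ => w (c (φ i) + 1)) (ρ (φ i)).2.1 = some (w (i+1))
      rw [hφl i, hcφ i]
      rfl
  · intro n hn
    cases n with
    | zero => exact ⟨0, rfl⟩
    | succ n =>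
      have h' : (ρ n).2.1 ≠ none := by
        intro h
        exact hn (by show Option.map _ (ρ n).2.1 = none; rw [h]; rfl)
      obtain ⟨i, rfl⟩ := hφc n h'
      exact ⟨i+1, rfl⟩
  · apply acc_transfer M sem ρ ρB rfl rfl hr0 ?_ ?_ hacc
    · intro n
      exact ⟨n+1, w (c n), rfl⟩
    · intro m
      cases m with
      | zero => exact Or.inl rfl
      | succ n => exact Or.inr ⟨n, w (c n), rfl⟩

theorem lang_sub1 (sem : AccSem) : (M.Delay.toLTS sem).Lang ⊆ (M.toLTS sem).Lang := by
  rintro w ⟨ρB, ⟨hr0, hrs⟩, ⟨φ, hφm, hφl, hφc⟩, hacc⟩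
  classical
  have hchain : ∀ n, (ρB (n+1)).1 = (ρB n).2.2 := fun n => (hrs n).2
  have htr : ∀ n, ∃ f, ((ρB n).1.1, (ρB n).2.1, f, (ρB n).2.2.1) ∈ M.Delay.Δ ∧
      f ((ρB n).1.2) = some ((ρB n).2.2.2) := fun n => (hrs n).1
  have h01 : (ρB 0).1.1 = none := by rw [hr0]; rfl
  have h02 : (ρB 0).1.2 = M.c0 := by rw [hr0]; rfl
  obtain ⟨f0, hm0, hf0⟩ := htr 0
  have hstep0 : ∃ σ, (ρB 0).2.1 = some σ ∧ (ρB 0).2.2.1 = some (M.init, σ) ∧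
      (ρB 0).2.2.2 = M.c0 := by
    rcases hm0 with ⟨σ, he⟩ | ⟨q, σ, σ', f, q', _, he⟩ | ⟨q, σ, f, q', _, he⟩ <;>
      simp only [Prod.mk.injEq, UAut.toLTS, UAut.Delay] at he
    · obtain ⟨he1, he2, he3, he4⟩ := he
      refine ⟨σ, he2, he4, ?_⟩
      rw [he3] at hf0
      have h5 := Option.some.inj hf0
      rw [← h5, h02]
    · exact absurd (h01.symm.trans he.1) (by simp)
    · exact absurd (h01.symm.trans he.1) (by simp)
  obtain ⟨σ0, hl0, ht0, hc0'⟩ := hstep0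
  obtain ⟨i0, hi0⟩ := hφc 0 (by rw [hl0]; simp)
  have hφ0 : φ 0 = 0 := by
    have h1 : i0 ≤ φ i0 := hφm.le_apply
    rw [hi0] at h1
    have h2 : i0 = 0 := Nat.le_zero.mp h1
    subst h2
    exact hi0
  have hw0 : σ0 = w 0 := by
    have h2 := hφl 0
    rw [hφ0, hl0] at h2
    exact Option.some.inj h2
  have hB1 : (ρB 1).1 = (some (M.init, w 0), M.c0) := by
    rw [hchain 0]
    exact Prod.ext_iff.mpr ⟨by rw [ht0, hw0], hc0'⟩
  have hsome : ∀ n, ∃ p, (ρB (n+1)).1.1 = some p := by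
    intro n
    obtain ⟨f, hm, _⟩ := htr n
    rw [hchain n]
    rcases hm with ⟨σ, he⟩ | ⟨q, σ, σ', f', q', _, he⟩ | ⟨q, σ, f', q', _, he⟩ <;>
      simp only [Prod.mk.injEq, UAut.toLTS, UAut.Delay] at he
    · exact ⟨_, he.2.2.2⟩
    · exact ⟨_, he.2.2.2⟩
    · exact ⟨_, he.2.2.2⟩
  set ρA : ℕ → TA M := fun n =>
    (((ρB (n+1)).1.1.elim M.init Prod.fst, (ρB (n+1)).1.2),
     Option.map (fun _ => (ρB (n+1)).1.1.elim (w 0) Prod.snd) (ρB (n+1)).2.1,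
     ((ρB (n+1)).2.2.1.elim M.init Prod.fst, (ρB (n+1)).2.2.2)) with hρA
  have main : ∀ n, (M.toLTS sem).Tr (ρA n).1 (ρA n).2.1 (ρA n).2.2 ∧
      ((ρB (n+1)).2.1 = none →
        (ρB (n+1)).2.2.1.elim (w 0) Prod.snd = (ρB (n+1)).1.1.elim (w 0) Prod.snd) ∧
      (∀ a, (ρB (n+1)).2.1 = some a → (ρB (n+1)).2.2.1.elim (w 0) Prod.snd = a) := by
    intro n
    obtain ⟨p, hp⟩ := hsome n
    obtain ⟨f, hm, hf⟩ := htr (n+1)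
    rcases hm with ⟨σ, he⟩ | ⟨q, σ, σ', f', q', hΔ, he⟩ | ⟨q, σ, f', q', hΔ, he⟩ <;>
      simp only [Prod.mk.injEq, UAut.toLTS, UAut.Delay] at he
    · exact absurd (hp.symm.trans he.1) (by simp)
    · obtain ⟨he1, he2, he3, he4⟩ := he
      refine ⟨⟨f', ?_, ?_⟩, ?_, ?_⟩
      · show ((ρB (n+1)).1.1.elim M.init Prod.fst,
          Option.map (fun _ => (ρB (n+1)).1.1.elim (w 0) Prod.snd) (ρB (n+1)).2.1, f',
          (ρB (n+1)).2.2.1.elim M.init Prod.fst) ∈ M.Δ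
        rw [he1, he2, he4]
        exact hΔ
      · show f' ((ρB (n+1)).1.2) = some ((ρB (n+1)).2.2.2)
        rw [← he3]; exact hf
      · intro hnone
        rw [hnone] at he2
        exact absurd he2 (by simp)
      · intro a ha
        rw [he4]
        have h5 : a = σ' := Option.some.inj (ha.symm.trans he2)
        rw [h5]
        rfl
    · obtain ⟨he1, he2, he3, he4⟩ := he
      refine ⟨⟨f', ?_, ?_⟩, ?_, ?_⟩
      · show ((ρB (n+1)).1.1.elim M.init Prod.fst,
          Option.map (fun _ => (ρB (n+1)).1.1.elim (w 0) Prod.snd) (ρB (n+1)).2.1, f',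
          (ρB (n+1)).2.2.1.elim M.init Prod.fst) ∈ M.Δ
        rw [he1, he2, he4]
        exact hΔ
      · show f' ((ρB (n+1)).1.2) = some ((ρB (n+1)).2.2.2)
        rw [← he3]; exact hf
      · intro _
        rw [he4, he1]
        rfl
      · intro a ha
        exact absurd (ha.symm.trans he2) (by simp)
  set labB : ℕ → Option Al := fun n => (ρB n).2.1 with hlabB
  have hcφB : ∀ i, cnt labB (φ i) = i :=
    fun i => cnt_phi labB φ hφm
      (fun j => by rw [show labB (φ j) = some (w j) from hφl j]; rfl) hφc i
  have hcB : ∀ n, ∃ k, cnt labB (n+1) = k + 1 ∧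
      (ρB (n+1)).1.1.elim (w 0) Prod.snd = w k := by
    intro n
    induction n with
    | zero =>
      refine ⟨0, ?_, ?_⟩
      · have h' := cnt_succ labB 0
        rw [show labB 0 = some σ0 from hl0] at h'
        simpa [cnt] using h'
      · rw [show (ρB 1).1.1 = some (M.init, w 0) from by rw [hB1]]
        rfl
    | succ n ih =>
      obtain ⟨k, hk1, hk2⟩ := ih
      have hm := main n
      cases hx : (ρB (n+1)).2.1 with
      | none =>
        refine ⟨k, ?_, ?_⟩
        · have h' := cnt_succ labB (n+1)
          rw [show labB (n+1) = none from hx] at h'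
          simp at h'
          rw [h', hk1]
        · rw [show (ρB (n+2)).1.1 = (ρB (n+1)).2.2.1 from by rw [hchain (n+1)]]
          rw [hm.2.1 hx, hk2]
      | some a =>
        obtain ⟨i, hi⟩ := hφc (n+1) (by rw [hx]; simp)
        have hia : a = w i := by
          have h2 := hφl i
          rw [hi, hx] at h2
          exact Option.some.inj h2
        have hci : cnt labB (n+1) = i := by rw [← hi]; exact hcφB i
        have hik : i = k + 1 := by omega
        refine ⟨k + 1, ?_, ?_⟩
        · have h' := cnt_succ labB (n+1)
          rw [show labB (n+1) = some a from hx] at h'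
          simp at h'
          omega
        · rw [show (ρB (n+2)).1.1 = (ρB (n+1)).2.2.1 from by rw [hchain (n+1)]]
          rw [hm.2.2 a hx, hia, hik]
  have hA0 : (ρA 0).1 = (M.init, M.c0) := by
    show ((ρB 1).1.1.elim M.init Prod.fst, (ρB 1).1.2) = (M.init, M.c0)
    rw [show (ρB 1).1.1 = some (M.init, w 0) from by rw [hB1],
      show (ρB 1).1.2 = M.c0 from by rw [hB1]]
    rfl
  refine ⟨ρA, ⟨hA0, ?_⟩, ?_, ?_⟩
  · intro n
    refine ⟨(main n).1, ?_⟩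
    show ((ρB (n+2)).1.1.elim M.init Prod.fst, (ρB (n+2)).1.2) =
      ((ρB (n+1)).2.2.1.elim M.init Prod.fst, (ρB (n+1)).2.2.2)
    rw [hchain (n+1)]
  · have hφpos : ∀ i, 1 ≤ φ (i+1) := by
      intro i
      have h0' : φ 0 < φ (i+1) := hφm (Nat.succ_pos i)
      omega
    refine ⟨fun i => φ (i+1) - 1, strictMono_nat_of_lt_succ ?_, ?_, ?_⟩
    · intro i
      have h1 : φ (i+1) < φ (i+1+1) := hφm (by omega)
      have h2 := hφpos i
      omega
    · intro i
      have hn : φ (i+1) - 1 + 1 = φ (i+1) := by have := hφpos i; omega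
      show Option.map (fun _ => (ρB (φ (i+1) - 1 + 1)).1.1.elim (w 0) Prod.snd)
        (ρB (φ (i+1) - 1 + 1)).2.1 = some (w i)
      rw [hn, hφl (i+1)]
      obtain ⟨k, hk1, hk2⟩ := hcB (φ (i+1) - 1)
      rw [hn] at hk1 hk2
      have hk : k = i := by have := hcφB (i+1); omega
      rw [Option.map_some, hk2, hk]
    · intro n hn
      have h' : (ρB (n+1)).2.1 ≠ none := by
        intro h
        apply hn
        show Option.map _ (ρB (n+1)).2.1 = none
        rw [h]; rfl
      obtain ⟨i, hi⟩ := hφc (n+1) h'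
      cases i with
      | zero => rw [hφ0] at hi; exact absurd hi (by omega)
      | succ i =>
        refine ⟨i, ?_⟩
        show φ (i+1) - 1 = n
        omega
  · apply acc_transfer' M sem ρB ρA hA0 hr0 ?_ hacc
    intro n
    obtain ⟨p, hp⟩ := hsome n
    refine ⟨p.2, Prod.ext_iff.mpr ⟨?_, rfl⟩⟩
    show (ρB (n+1)).1.1 = some ((ρB (n+1)).1.1.elim M.init Prod.fst, p.2)
    rw [hp]
    rfl

theorem delay_wf (K : Set (C → Option C)) (S : Set (Set C)) [Finite Al]
    (hid : (fun c => some c) ∈ K) (hM : M.WF K S) : M.Delay.WF K S := by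
  obtain ⟨hfin, hΔfin, hK, hS⟩ := hM
  refine ⟨?_, ?_, ?_, hS⟩
  · show Finite (Option (M.Q × Al))
    haveI : Finite M.Q := hfin
    haveI := Fintype.ofFinite M.Q
    haveI := Fintype.ofFinite Al
    infer_instance
  · set S1 : Set ((Option (M.Q × Al)) × Option Al × (C → Option C) × Option (M.Q × Al)) :=
      Set.range (fun σ : Al =>
        ((none : Option (M.Q × Al)), some σ, (fun c => some c : C → Option C),
          some (M.init, σ))) with hS1
    set S2 : Set ((Option (M.Q × Al)) × Option Al × (C → Option C) × Option (M.Q × Al)) :=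
      (fun p : (M.Q × Option Al × (C → Option C) × M.Q) × Al × Al =>
        ((some (p.1.1, p.2.1) : Option (M.Q × Al)), some p.2.2, p.1.2.2.1,
          some (p.1.2.2.2, p.2.2))) '' (M.Δ ×ˢ (Set.univ : Set (Al × Al))) with hS2
    set S3 : Set ((Option (M.Q × Al)) × Option Al × (C → Option C) × Option (M.Q × Al)) :=
      (fun p : (M.Q × Option Al × (C → Option C) × M.Q) × Al =>
        ((some (p.1.1, p.2) : Option (M.Q × Al)), (none : Option Al), p.1.2.2.1,
          some (p.1.2.2.2, p.2))) '' (M.Δ ×ˢ (Set.univ : Set Al)) with hS3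
    have hsub : M.Delay.Δ ⊆ S1 ∪ S2 ∪ S3 := by
      rintro t (⟨σ, rfl⟩ | ⟨q, σ, σ', f, q', h, rfl⟩ | ⟨q, σ, f, q', h, rfl⟩)
      · exact Or.inl (Or.inl ⟨σ, rfl⟩)
      · exact Or.inl (Or.inr ⟨((q, some σ, f, q'), σ, σ'), ⟨h, trivial⟩, rfl⟩)
      · exact Or.inr ⟨((q, none, f, q'), σ), ⟨h, trivial⟩, rfl⟩
    have h1 : S1.Finite := Set.finite_range _
    have h2 : S2.Finite := (hΔfin.prod Set.finite_univ).image _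
    have h3 : S3.Finite := (hΔfin.prod Set.finite_univ).image _
    exact ((h1.union h2).union h3).subset hsub
  · rintro t (⟨σ, rfl⟩ | ⟨q, σ, σ', f, q', h, rfl⟩ | ⟨q, σ, f, q', h, rfl⟩)
    · exact hid
    · exact hK (q, some σ, f, q') h
    · exact hK (q, none, f, q') h

end DelayGhost

/-- For a `(𝒞, K, S)`-automaton `M` with safety, synchronous-reachability or
asynchronous-reachability acceptance, `Delay M` is again a `(𝒞, K, S)`-automaton with the
same acceptance semantics, `L(Delay M) = L(M)`, and Eve wins `G1(Delay M, M)`; i.e.,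
`Delay M` is a 1-token ghost of `M`. -/
theorem delay_is_one_token_ghost {Al C : Type} [Finite Al]
    (K : Set (C → Option C)) (S : Set (Set C))
    (hid : (fun c => some c) ∈ K)
    (M : UAut Al C) (hM : M.WF K S) (sem : AccSem) :
    M.Delay.WF K S ∧
    (M.Delay.toLTS sem).Lang = (M.toLTS sem).Lang ∧
    LTS.G1Win (M.Delay.toLTS sem) (M.toLTS sem) :=
  ⟨DelayGhost.delay_wf M K S hid hM,
    Set.Subset.antisymm (DelayGhost.lang_sub1 M sem) (DelayGhost.lang_sub2 M sem),
    DelayGhost.g1win M sem⟩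
end

section
/- The classes of safety and reachability timed automata are closed under 1-token ghost: for every timed automaton T with safety (respectively, reachability) acceptance, there exists a timed automaton T' with safety (respectively, reachability) acceptance such that L(T') = L(T) and Eve has a winning strategy in the 1-token game G1(T', T). -/
/-- Safety / reachability acceptance selector. -/
inductive AccSR where
  | safety
  | reach


open scoped NNReal

/-- Comparison operators in clock constraints. -/
inductive CmpOp where
  | lt | le | eq | ge | gt

def CmpOp.holds : CmpOp → ℝ≥0 → ℕ → Prop
  | .lt, x, n => x < (n : ℝ≥0)
  | .le, x, n => x ≤ (n : ℝ≥0)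
  | .eq, x, n => x = (n : ℝ≥0)
  | .ge, x, n => (n : ℝ≥0) ≤ x
  | .gt, x, n => (n : ℝ≥0) < x

/-- Guards: Boolean combinations of clock constraints `c ⋈ n`. -/
inductive Guard (Cl : Type) where
  | tt : Guard Cl
  | cmp (c : Cl) (op : CmpOp) (n : ℕ) : Guard Cl
  | and (g₁ g₂ : Guard Cl) : Guard Cl
  | or (g₁ g₂ : Guard Cl) : Guard Cl
  | not (g : Guard Cl) : Guard Cl

/-- Satisfaction of a guard by a clock valuation. -/
def Guard.sat {Cl : Type} : Guard Cl → (Cl → ℝ≥0) → Prop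
  | .tt, _ => True
  | .cmp c op n, ν => op.holds (ν c) n
  | .and g₁ g₂, ν => g₁.sat ν ∧ g₂.sat ν
  | .or g₁ g₂, ν => g₁.sat ν ∨ g₂.sat ν
  | .not g, ν => ¬ g.sat ν

/-- A timed automaton over alphabet `Al`: a transition `(q, g, σ, X, q') ∈ Δ` is guarded
by `g` and resets the clocks in `X`. -/
structure TimedAut (Al : Type) where
  Q : Type
  Cl : Type
  init : Q
  Δ : Set (Q × Guard Cl × Al × Set Cl × Q)
  F : Set Q

namespace TimedAut

variable {Al : Type}

def WF (M : TimedAut Al) : Prop := Finite M.Q ∧ Finite M.Cl ∧ M.Δ.Finite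

/-- One step of a timed automaton on the timed letter `(σ, d)` from a configuration. -/
def Step (M : TimedAut Al) (s : M.Q × (M.Cl → ℝ≥0)) (a : Al × ℝ≥0)
    (s' : M.Q × (M.Cl → ℝ≥0)) : Prop :=
  ∃ g X, (s.1, g, a.1, X, s'.1) ∈ M.Δ ∧ g.sat (fun c => s.2 c + a.2) ∧
    (∀ c ∈ X, s'.2 c = 0) ∧ (∀ c ∉ X, s'.2 c = s.2 c + a.2)

/-- The LTS induced by a timed automaton on infinite timed words, with safety or
reachability acceptance: states are configurations, the alphabet is `Al × ℝ≥0`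
(letter paired with delay). -/
def toLTS (M : TimedAut Al) (sem : AccSR) : LTS (Al × ℝ≥0) where
  St := M.Q × (M.Cl → ℝ≥0)
  init := (M.init, fun _ => 0)
  Tr := fun s x s' => ∃ a, x = some a ∧ M.Step s a s'
  Acc := fun ρ =>
    match sem with
    | .safety => ∀ n, (ρ n).1.1 ∈ M.F
    | .reach => ∃ n, (ρ n).1.1 ∈ M.F

end TimedAut

namespace OneTok

open scoped NNReal

variable {Al : Type}

/-! ### Generic lemmas about the LTS of a timed automaton -/

lemma seqOver_iff (N : TimedAut Al) (sem : AccSR) (q q' : (N.toLTS sem).St)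
    (a : Al × ℝ≥0) (l : List ((N.toLTS sem).St × Option (Al × ℝ≥0) × (N.toLTS sem).St)) :
    (N.toLTS sem).SeqOver q a l q' ↔ l = [(q, some a, q')] ∧ N.Step q a q' := by
  constructor
  · rintro ⟨hp, hw⟩
    cases l with
    | nil => simp [LTS.wordOf] at hw
    | cons t rest =>
      rw [LTS.Path] at hp
      obtain ⟨h1, h2, h3⟩ := hp
      obtain ⟨a', ha', hstep⟩ := h2
      cases rest with
      | nil =>
        rw [LTS.Path] at h3
        simp only [LTS.wordOf, List.filterMap_cons, ha', List.filterMap_nil] at hw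
        have ha : a' = a := by simpa using hw
        subst ha
        refine ⟨?_, ?_⟩
        · have : t = (t.1, t.2.1, t.2.2) := rfl
          rw [this, h1, ha', h3]
        · rw [← h1, ← h3]; exact hstep
      | cons u rest2 =>
        rw [LTS.Path] at h3
        obtain ⟨hu1, hu2, hu3⟩ := h3
        obtain ⟨b', hb', _⟩ := hu2
        simp only [LTS.wordOf] at hw
        rw [List.filterMap_cons, ha', List.filterMap_cons, hb'] at hw
        simp at hw
  · rintro ⟨rfl, h⟩
    refine ⟨?_, ?_⟩
    · rw [LTS.Path]
      exact ⟨rfl, ⟨a, rfl, h⟩, rfl⟩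
    · simp [LTS.wordOf]

lemma validMoves_single (N : TimedAut Al) (sem : AccSR) (w : ℕ → Al × ℝ≥0)
    (em : ℕ → List ((N.toLTS sem).St × Option (Al × ℝ≥0) × (N.toLTS sem).St)) :
    (N.toLTS sem).ValidMoves w em ↔
      ∃ s : ℕ → N.Q × (N.Cl → ℝ≥0), s 0 = (N.init, fun _ => 0) ∧
        ∀ i, em i = [(s i, some (w i), s (i+1))] ∧ N.Step (s i) (w i) (s (i+1)) := by
  constructor
  · rintro ⟨q, hq0, hseq⟩
    exact ⟨q, hq0, fun i => (seqOver_iff N sem _ _ _ _).1 (hseq i)⟩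
  · rintro ⟨s, hs0, h⟩
    exact ⟨s, hs0, fun i => (seqOver_iff N sem _ _ _ _).2 (h i)⟩

lemma isFlatten_singleton {T : Type} (f ρ : ℕ → T) :
    LTS.IsFlatten (fun i => [f i]) ρ ↔ ρ = f := by
  constructor
  · rintro ⟨b, hb0, hbS, hget⟩
    have hb : ∀ i, b i = i := by
      intro i; induction i with
      | zero => exact hb0
      | succ n ih => rw [hbS, ih]; simp
    funext i
    have := hget i 0 (by simp)
    simpa [hb i] using this
  · rintro rfl
    refine ⟨fun i => i, rfl, by simp, ?_⟩
    intro i j h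
    simp only [List.length_singleton] at h
    interval_cases j
    simp

lemma flatAcc_singleton (L : LTS (Al × ℝ≥0)) (f : ℕ → L.St × Option (Al × ℝ≥0) × L.St) :
    L.FlatAcc (fun i => [f i]) ↔ L.Acc f := by
  constructor
  · rintro ⟨ρ, hfl, hacc⟩
    rwa [(isFlatten_singleton f ρ).1 hfl] at hacc
  · intro h
    exact ⟨f, (isFlatten_singleton f f).2 rfl, h⟩

lemma strictMono_surj_id (φ : ℕ → ℕ) (hs : StrictMono φ) (hsurj : ∀ n, ∃ i, φ i = n) :
    ∀ n, φ n = n := by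
  intro n
  induction n using Nat.strong_induction_on with
  | _ n ih =>
    obtain ⟨i, hi⟩ := hsurj n
    rcases lt_trichotomy i n with h | h | h
    · rw [ih i h] at hi; omega
    · rwa [h] at hi
    · have : φ n ≤ φ i := hs.monotone h.le
      have h2 : n ≤ φ n := hs.le_apply
      omega

lemma lang_iff (N : TimedAut Al) (sem : AccSR) (w : ℕ → Al × ℝ≥0) :
    w ∈ (N.toLTS sem).Lang ↔
      ∃ s : ℕ → N.Q × (N.Cl → ℝ≥0), s 0 = (N.init, fun _ => 0) ∧
        (∀ i, N.Step (s i) (w i) (s (i+1))) ∧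
        (N.toLTS sem).Acc (fun i => (s i, some (w i), s (i+1))) := by
  constructor
  · rintro ⟨ρ, ⟨hr0, hrS⟩, ⟨φ, hmono, hlab, hsurj⟩, hacc⟩
    have hall : ∀ n, ∃ i, φ i = n := by
      intro n
      obtain ⟨a, ha, _⟩ := (hrS n).1
      exact hsurj n (by simp [ha])
    have hid : ∀ n, φ n = n := strictMono_surj_id φ hmono hall
    have hlab' : ∀ n, (ρ n).2.1 = some (w n) := by
      intro n; have := hlab n; rwa [hid n] at this
    refine ⟨fun n => (ρ n).1, hr0, ?_, ?_⟩
    · intro i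
      obtain ⟨a, ha, hstep⟩ := (hrS i).1
      rw [hlab' i] at ha
      obtain rfl : w i = a := by injection ha
      show N.Step (ρ i).1 (w i) (ρ (i+1)).1
      rw [(hrS i).2]
      exact hstep
    · have : (fun i => ((ρ i).1, some (w i), (ρ (i+1)).1)) = ρ := by
        funext n
        have h1 : (ρ (n+1)).1 = (ρ n).2.2 := (hrS n).2
        have h2 : (ρ n).2.1 = some (w n) := hlab' n
        rw [h1, ← h2]
      rw [this]; exact hacc
  · rintro ⟨s, hs0, hstep, hacc⟩
    refine ⟨fun i => (s i, some (w i), s (i+1)), ⟨hs0, ?_⟩, ⟨fun i => i, strictMono_id, by simp, by simp⟩, hacc⟩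
    intro n
    exact ⟨⟨w n, rfl, hstep n⟩, rfl⟩

end OneTok
namespace OneTok

/-! ### Guard machinery -/

noncomputable def boolOf (p : Prop) : Bool := by
  classical exact if p then true else false

lemma boolOf_iff {p : Prop} : boolOf p = true ↔ p := by
  by_cases h : p <;> simp [boolOf, h]

lemma bool_not_ne (b : Bool) : (!b) ≠ b := by cases b <;> simp

def gsub {Cl : Type} (b : Cl → Bool) : Guard Cl → Guard (Cl × Bool)
  | .tt => .tt
  | .cmp c op n => .cmp (c, b c) op n
  | .and g₁ g₂ => .and (gsub b g₁) (gsub b g₂)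
  | .or g₁ g₂ => .or (gsub b g₁) (gsub b g₂)
  | .not g => .not (gsub b g)

lemma gsub_sat {Cl : Type} (b : Cl → Bool) (g : Guard Cl) (v : Cl × Bool → ℝ≥0) :
    (gsub b g).sat v ↔ g.sat (fun c => v (c, b c)) := by
  induction g <;> simp [gsub, Guard.sat, *]

def gAll {X : Type} : List (Guard X) → Guard X
  | [] => .tt
  | g :: l => .and g (gAll l)

lemma gAll_sat {X : Type} (L : List (Guard X)) (v : X → ℝ≥0) :
    (gAll L).sat v ↔ ∀ g ∈ L, g.sat v := by
  induction L with
  | nil => simp [gAll, Guard.sat]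
  | cons g l ih => simp [gAll, Guard.sat, ih]

open Classical in
noncomputable def flipOn {Cl : Type} (b : Cl → Bool) (X : Set Cl) : Cl → Bool :=
  fun c => if c ∈ X then !(b c) else b c

lemma flipOn_mem {Cl : Type} {b : Cl → Bool} {X : Set Cl} {c : Cl} (h : c ∈ X) :
    flipOn b X c = !(b c) := by simp [flipOn, h]

lemma flipOn_not_mem {Cl : Type} {b : Cl → Bool} {X : Set Cl} {c : Cl} (h : c ∉ X) :
    flipOn b X c = b c := by simp [flipOn, h]

def resetOf {Cl : Type} (b : Cl → Bool) : Set (Cl × Bool) := {x | x.2 ≠ b x.1}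

variable {Al : Type} (M : TimedAut Al)

noncomputable def guardOf (hD : M.Δ.Finite) (b : M.Cl → Bool) (β : ↥M.Δ → Bool) :
    Guard (M.Cl × Bool) :=
  haveI := hD.fintype
  gAll ((Finset.univ.filter (fun t : ↥M.Δ => β t = true)).toList.map
    (fun t => gsub b t.1.2.1))

lemma guardOf_sat (hD : M.Δ.Finite) (b : M.Cl → Bool) (β : ↥M.Δ → Bool)
    (v : M.Cl × Bool → ℝ≥0) :
    (guardOf M hD b β).sat v ↔ ∀ t : ↥M.Δ, β t = true → (gsub b t.1.2.1).sat v := by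
  rw [guardOf, gAll_sat]
  constructor
  · intro h t ht
    exact h _ (by simp only [List.mem_map, Finset.mem_toList, Finset.mem_filter,
        Finset.mem_univ, true_and]; exact ⟨t, ht, rfl⟩)
  · intro h g hg
    simp only [List.mem_map, Finset.mem_toList, Finset.mem_filter, Finset.mem_univ,
      true_and] at hg
    obtain ⟨t, ht, rfl⟩ := hg
    exact h t ht

/-! ### The ghost automaton -/

open scoped NNReal

/-- States of the ghost automaton. -/
def GQ : Type := M.Q × Option Al × (M.Cl → Bool) × (↥M.Δ → Bool)

/-- Configurations of the ghost automaton. -/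
def GCfg : Type := GQ M × (M.Cl × Bool → ℝ≥0)

def stepRel (src tgt : GQ M) (σ : Al) : Prop :=
  tgt.2.1 = some σ ∧
    ((src.2.1 = none ∧ tgt.1 = src.1 ∧ tgt.2.2.1 = src.2.2.1) ∨
     (∃ τ, src.2.1 = some τ ∧ ∃ g X, ∃ hm : (src.1, g, τ, X, tgt.1) ∈ M.Δ,
        src.2.2.2 ⟨(src.1, g, τ, X, tgt.1), hm⟩ = true ∧
        tgt.2.2.1 = flipOn src.2.2.1 X))

noncomputable def ghost (hD : M.Δ.Finite) : TimedAut Al where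
  Q := GQ M
  Cl := M.Cl × Bool
  init := (M.init, none, fun _ => false, fun _ => false)
  Δ := {tr | ∃ src σ tgt, stepRel M src tgt σ ∧
        tr = (src, guardOf M hD tgt.2.2.1 tgt.2.2.2, σ, resetOf tgt.2.2.1, tgt)}
  F := {u | u.1 ∈ M.F}

lemma ghost_wf (hD : M.Δ.Finite) [Finite Al] [Finite M.Q] [Finite M.Cl] :
    (ghost M hD).WF := by
  haveI : Finite (↥M.Δ) := hD.to_subtype
  haveI := Fintype.ofFinite Al
  haveI : Finite (Option Al) := inferInstance
  haveI : Finite (GQ M) := by unfold GQ; infer_instance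
  refine ⟨?_, ?_, ?_⟩
  · show Finite (GQ M); infer_instance
  · show Finite (M.Cl × Bool); infer_instance
  · have hsub : (ghost M hD).Δ ⊆ Set.range
        (fun x : GQ M × Al × GQ M =>
          (x.1, guardOf M hD x.2.2.2.2.1 x.2.2.2.2.2, x.2.1, resetOf x.2.2.2.2.1, x.2.2)) := by
      rintro tr ⟨src, σ, tgt, hrel, rfl⟩
      exact ⟨(src, σ, tgt), rfl⟩
    exact Set.Finite.subset (Set.finite_range _) hsub

/-- Characterization of a `Step` of the ghost automaton. -/
lemma ghost_step_iff (hD : M.Δ.Finite) (A A' : GCfg M) (a : Al × ℝ≥0) :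
    (ghost M hD).Step A a A' ↔
      stepRel M A.1 A'.1 a.1 ∧
      (guardOf M hD A'.1.2.2.1 A'.1.2.2.2).sat (fun x => A.2 x + a.2) ∧
      (∀ x : M.Cl × Bool, x.2 ≠ A'.1.2.2.1 x.1 → A'.2 x = 0) ∧
      (∀ x : M.Cl × Bool, x.2 = A'.1.2.2.1 x.1 → A'.2 x = A.2 x + a.2) := by
  constructor
  · rintro ⟨g, X, hmem, hsat, hr0, hr1⟩
    obtain ⟨src, σ, tgt, hrel, heq⟩ := hmem
    obtain ⟨e1, e2, e3, e4, e5⟩ : A.1 = src ∧ g = guardOf M hD tgt.2.2.1 tgt.2.2.2 ∧ a.1 = σ ∧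
        X = resetOf tgt.2.2.1 ∧ A'.1 = tgt := by
      exact ⟨congrArg Prod.fst heq, congrArg (fun p => p.2.1) heq, congrArg (fun p => p.2.2.1) heq,
        congrArg (fun p => p.2.2.2.1) heq, congrArg (fun p => p.2.2.2.2) heq⟩
    subst e1 e2 e3 e4 e5
    exact ⟨hrel, hsat, fun x hx => hr0 x hx, fun x hx => hr1 x (fun h => h hx)⟩
  · rintro ⟨hrel, hsat, hr0, hr1⟩
    refine ⟨guardOf M hD A'.1.2.2.1 A'.1.2.2.2, resetOf A'.1.2.2.1,
      ⟨A.1, a.1, A'.1, hrel, rfl⟩, hsat, ?_, ?_⟩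
    · intro x hx
      exact hr0 x hx
    · intro x hx
      refine hr1 x ?_
      have h2 : ¬ (x.2 ≠ A'.1.2.2.1 x.1) := hx
      exact not_not.mp h2

end OneTok
namespace OneTok

open scoped NNReal

variable {Al : Type} (M : TimedAut Al)

open Classical in
noncomputable def pickGX (c c' : M.Q × (M.Cl → ℝ≥0)) (a : Al × ℝ≥0) :
    Guard M.Cl × Set M.Cl :=
  if h : M.Step c a c' then ⟨h.choose, h.choose_spec.choose⟩ else ⟨.tt, ∅⟩

lemma pickGX_spec {c c' : M.Q × (M.Cl → ℝ≥0)} {a : Al × ℝ≥0} (h : M.Step c a c') :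
    (c.1, (pickGX M c c' a).1, a.1, (pickGX M c c' a).2, c'.1) ∈ M.Δ ∧
    (pickGX M c c' a).1.sat (fun x => c.2 x + a.2) ∧
    (∀ x ∈ (pickGX M c c' a).2, c'.2 x = 0) ∧
    (∀ x ∉ (pickGX M c c' a).2, c'.2 x = c.2 x + a.2) := by
  rw [pickGX]
  rw [dif_pos h]
  exact h.choose_spec.choose_spec

/-- Adam's moves in the one-token game. -/
abbrev Ent : Type :=
  (Al × ℝ≥0) × List ((M.Q × (M.Cl → ℝ≥0)) × Option (Al × ℝ≥0) × (M.Q × (M.Cl → ℝ≥0)))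

noncomputable def eveNext (C : GCfg M) (pb : M.Q × (M.Cl → Bool)) (a : Al × ℝ≥0) : GCfg M :=
  ((pb.1, some a.1, pb.2, fun t => boolOf ((gsub pb.2 t.1.2.1).sat (fun x => C.2 x + a.2))),
    fun x => if x.2 ≠ pb.2 x.1 then 0 else C.2 x + a.2)

noncomputable def eveStep (C : GCfg M) (prev : Option (Ent M)) (a : Al × ℝ≥0) : GCfg M :=
  match prev, C.1.2.1 with
  | some e, some _ =>
    match e.2 with
    | [tr] => eveNext M C (tr.2.2.1, flipOn C.1.2.2.1 (pickGX M tr.1 tr.2.2 e.1).2) a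
    | _ => eveNext M C (C.1.1, C.1.2.2.1) a
  | _, _ => eveNext M C (C.1.1, C.1.2.2.1) a

lemma eveStep_none (C : GCfg M) (a : Al × ℝ≥0) :
    eveStep M C none a = eveNext M C (C.1.1, C.1.2.2.1) a := rfl

lemma eveStep_some (C : GCfg M) (e : Ent M) (a : Al × ℝ≥0) (τ : Al)
    (hτ : C.1.2.1 = some τ)
    (tr : (M.Q × (M.Cl → ℝ≥0)) × Option (Al × ℝ≥0) × (M.Q × (M.Cl → ℝ≥0)))
    (he : e.2 = [tr]) :
    eveStep M C (some e) a =
      eveNext M C (tr.2.2.1, flipOn C.1.2.2.1 (pickGX M tr.1 tr.2.2 e.1).2) a := by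
  simp only [eveStep, hτ, he]

/-- The initial configuration of the ghost automaton. -/
noncomputable def initCfg : GCfg M :=
  ((M.init, none, fun _ => false, fun _ => false), fun _ => 0)

open Classical in
noncomputable def eveConf (l : List (Ent M)) : GCfg M :=
  if h : l = [] then initCfg M
  else eveStep M (eveConf l.dropLast) l.dropLast.getLast? (l.getLast h).1
termination_by l.length
decreasing_by
  rw [List.length_dropLast]
  have := List.length_pos_iff.mpr h
  omega

lemma eveConf_nil : eveConf M [] = initCfg M := by rw [eveConf]; rw [dif_pos rfl]

lemma eveConf_concat (l : List (Ent M)) (e : Ent M) :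
    eveConf M (l ++ [e]) = eveStep M (eveConf M l) l.getLast? e.1 := by
  rw [eveConf]
  have hne : l ++ [e] ≠ [] := by simp
  rw [dif_neg hne]
  congr 1
  · rw [List.dropLast_concat]
  · rw [List.dropLast_concat]
  · simp

end OneTok
namespace OneTok

open scoped NNReal

variable {Al : Type} (M : TimedAut Al)

lemma chain (hD : M.Δ.Finite) (w : ℕ → Al × ℝ≥0) (s : ℕ → M.Q × (M.Cl → ℝ≥0))
    (hs0 : s 0 = (M.init, fun _ => 0))
    (hstep : ∀ i, M.Step (s i) (w i) (s (i+1)))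
    (C : ℕ → GCfg M)
    (hC0 : C 0 = initCfg M)
    (hC1 : C 1 = eveStep M (C 0) none (w 0))
    (hCS : ∀ i, C (i+2) = eveStep M (C (i+1))
        (some (w i, [(s i, some (w i), s (i+1))])) (w (i+1))) :
    (∀ i, (ghost M hD).Step (C i) (w i) (C (i+1))) ∧ (∀ i, (C (i+1)).1.1 = (s i).1) := by
  classical
  set X : ℕ → Set M.Cl := fun i => (pickGX M (s i) (s (i+1)) (w i)).2 with hX
  set g : ℕ → Guard M.Cl := fun i => (pickGX M (s i) (s (i+1)) (w i)).1 with hg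
  obtain ⟨PB, hPB0, hPBS⟩ : ∃ PB : ℕ → M.Q × (M.Cl → Bool),
      PB 0 = (M.init, fun _ => false) ∧
      ∀ i, PB (i+1) = ((s (i+1)).1, flipOn (PB i).2 (X i)) :=
    ⟨fun n => Nat.rec (M.init, fun _ => false)
        (fun i p => ((s (i+1)).1, flipOn p.2 (X i))) n, rfl, fun i => rfl⟩
  have hPB1 : ∀ i, (PB i).1 = (s i).1 := by
    intro i
    cases i with
    | zero => rw [hPB0, hs0]
    | succ n => rw [hPBS]
  have hEN : ∀ i, C (i+1) = eveNext M (C i) (PB i) (w i) := by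
    intro i
    induction i with
    | zero =>
      rw [hC1, hC0, eveStep_none, hPB0]
      rfl
    | succ n ih =>
      rw [hCS n, ih,
        eveStep_some M _ _ _ ((w n).1) rfl ((s n, some (w n), s (n+1))) rfl,
        hPBS n]
      rfl
  have hval : ∀ i, (C (i+1)).2 =
      fun x => if x.2 ≠ (PB i).2 x.1 then 0 else (C i).2 x + (w i).2 := by
    intro i; rw [hEN i]; rfl
  have hbeta : ∀ i, (C (i+1)).1.2.2.2 = fun t =>
      boolOf ((gsub (PB i).2 t.1.2.1).sat (fun x => (C i).2 x + (w i).2)) := by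
    intro i; rw [hEN i]; rfl
  have hptr : ∀ i, (C (i+1)).1.2.2.1 = (PB i).2 := by intro i; rw [hEN i]; rfl
  have hosig : ∀ i, (C (i+1)).1.2.1 = some (w i).1 := by intro i; rw [hEN i]; rfl
  have hp : ∀ i, (C (i+1)).1.1 = (s i).1 := by
    intro i; rw [hEN i]; exact hPB1 i
  have hINV : ∀ i c, (C i).2 (c, (PB i).2 c) = (s i).2 c := by
    intro i
    induction i with
    | zero =>
      intro c
      rw [hC0, hs0]
      rfl
    | succ n ih =>
      intro c
      rw [hval n]
      simp only []
      rw [hPBS n]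
      simp only []
      by_cases hc : c ∈ X n
      · rw [flipOn_mem hc, if_pos (bool_not_ne _)]
        exact ((pickGX_spec M (hstep n)).2.2.1 c hc).symm
      · rw [flipOn_not_mem hc, if_neg (by simp), ih c]
        exact ((pickGX_spec M (hstep n)).2.2.2 c hc).symm
  have hbit : ∀ i (t : ↥M.Δ), (C (i+1)).1.2.2.2 t = true ↔
      t.1.2.1.sat (fun c => (s i).2 c + (w i).2) := by
    intro i t
    rw [hbeta i]
    simp only []
    rw [boolOf_iff, gsub_sat]
    rw [show (fun c => (C i).2 (c, (PB i).2 c) + (w i).2)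
        = fun c => (s i).2 c + (w i).2 from funext fun c => by rw [hINV]]
  refine ⟨?_, hp⟩
  intro i
  rw [ghost_step_iff]
  refine ⟨⟨hosig i, ?_⟩, ?_, ?_, ?_⟩
  · cases i with
    | zero =>
      left
      rw [hC0, hp 0, hs0, hptr 0, hPB0]
      exact ⟨rfl, rfl, rfl⟩
    | succ n =>
      right
      have hmem : ((C (n+1)).1.1, g n, (w n).1, X n, (C (n+2)).1.1) ∈ M.Δ := by
        rw [hp n, hp (n+1)]
        exact (pickGX_spec M (hstep n)).1
      refine ⟨(w n).1, hosig n, g n, X n, hmem, ?_, ?_⟩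
      · exact (hbit n _).2 ((pickGX_spec M (hstep n)).2.1)
      · rw [hptr (n+1), hptr n, hPBS n]
  · rw [guardOf_sat]
    intro t ht
    rw [hbeta i] at ht
    simp only [] at ht
    rw [hptr i]
    exact boolOf_iff.mp ht
  · intro x hx
    rw [hptr i] at hx
    rw [hval i]
    simp only []
    rw [if_pos hx]
  · intro x hx
    rw [hptr i] at hx
    rw [hval i]
    simp only []
    rw [if_neg (by simp [hx])]

end OneTok
namespace OneTok

open scoped NNReal

variable {Al : Type} (M : TimedAut Al)

lemma ghost_run_to_run (hD : M.Δ.Finite) (w : ℕ → Al × ℝ≥0) (S : ℕ → GCfg M)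
    (hS0 : S 0 = initCfg M)
    (hstep : ∀ i, (ghost M hD).Step (S i) (w i) (S (i+1))) :
    ∃ s : ℕ → M.Q × (M.Cl → ℝ≥0), s 0 = (M.init, fun _ => 0) ∧
      (∀ i, M.Step (s i) (w i) (s (i+1))) ∧ (∀ i, (s i).1 = (S (i+1)).1.1) := by
  classical
  have hdec := fun i => (ghost_step_iff M hD (S i) (S (i+1)) (w i)).1 (hstep i)
  have hosig : ∀ i, (S (i+1)).1.2.1 = some (w i).1 := fun i => (hdec i).1.1
  -- the simulated transitions, extracted from rounds i+1
  have hsim : ∀ i, ∃ g X, ∃ hm : ((S (i+1)).1.1, g, (w i).1, X, (S (i+2)).1.1) ∈ M.Δ,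
      (S (i+1)).1.2.2.2 ⟨((S (i+1)).1.1, g, (w i).1, X, (S (i+2)).1.1), hm⟩ = true ∧
      (S (i+2)).1.2.2.1 = flipOn ((S (i+1)).1.2.2.1) X := by
    intro i
    have h := (hdec (i+1)).1.2
    rcases h with ⟨hnone, _⟩ | ⟨τ, hτ, g, X, hm, hbit, hflip⟩
    · rw [hosig i] at hnone; exact absurd hnone (by simp)
    · rw [hosig i] at hτ
      obtain rfl : τ = (w i).1 := by injection hτ with h; exact h.symm
      exact ⟨g, X, hm, hbit, hflip⟩
  set g : ℕ → Guard M.Cl := fun i => (hsim i).choose with hgdef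
  set X : ℕ → Set M.Cl := fun i => (hsim i).choose_spec.choose with hXdef
  have hspec : ∀ i, ∃ hm : ((S (i+1)).1.1, g i, (w i).1, X i, (S (i+2)).1.1) ∈ M.Δ,
      (S (i+1)).1.2.2.2 ⟨((S (i+1)).1.1, g i, (w i).1, X i, (S (i+2)).1.1), hm⟩ = true ∧
      (S (i+2)).1.2.2.1 = flipOn ((S (i+1)).1.2.2.1) (X i) :=
    fun i => (hsim i).choose_spec.choose_spec
  obtain ⟨ν, hν0, hνS⟩ : ∃ ν : ℕ → M.Cl → ℝ≥0, ν 0 = (fun _ => 0) ∧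
      ∀ i, ν (i+1) = fun c => if c ∈ X i then 0 else ν i c + (w i).2 :=
    ⟨fun n => Nat.rec (fun _ => 0)
      (fun i v => fun c => if c ∈ X i then 0 else v c + (w i).2) n, rfl, fun i => rfl⟩
  -- state after round 0 is still the initial state
  have hp1 : (S 1).1.1 = M.init := by
    have h := (hdec 0).1.2
    rcases h with ⟨_, hi, _⟩ | ⟨τ, hτ, _⟩
    · rw [hi, hS0]
      rfl
    · rw [hS0] at hτ; exact absurd hτ (by simp [initCfg])
  -- the key invariant
  have hINV : ∀ i c, (S i).2 (c, (S (i+1)).1.2.2.1 c) = ν i c := by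
    intro i
    induction i with
    | zero =>
      intro c
      rw [hS0, hν0]
      rfl
    | succ n ih =>
      intro c
      rw [(hspec n).choose_spec.2, hνS n]
      simp only []
      by_cases hc : c ∈ X n
      · rw [flipOn_mem hc, if_pos hc]
        exact (hdec n).2.2.1 (c, !((S (n+1)).1.2.2.1 c)) (bool_not_ne _)
      · rw [flipOn_not_mem hc, if_neg hc]
        rw [(hdec n).2.2.2 (c, (S (n+1)).1.2.2.1 c) rfl, ih c]
  refine ⟨fun i => ((S (i+1)).1.1, ν i), ?_, ?_, fun i => rfl⟩
  · simp only [hp1, hν0]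
  · intro i
    refine ⟨g i, X i, (hspec i).choose, ?_, ?_, ?_⟩
    · -- guard satisfaction
      have hguard := (hdec i).2.1
      rw [guardOf_sat] at hguard
      have hg2 := hguard _ (hspec i).choose_spec.1
      rw [gsub_sat] at hg2
      have : (fun c => (S i).2 (c, (S (i+1)).1.2.2.1 c) + (w i).2)
          = fun c => ν i c + (w i).2 := funext fun c => by rw [hINV]
      rw [this] at hg2
      exact hg2
    · intro c hc
      simp only []
      rw [hνS i]
      simp only []
      rw [if_pos hc]
    · intro c hc
      simp only []
      rw [hνS i]
      simp only []
      rw [if_neg hc]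

end OneTok
namespace OneTok

open scoped NNReal

variable {Al : Type} (M : TimedAut Al)

lemma acc_safety (N : TimedAut Al) (f : ℕ → (N.toLTS .safety).St × Option (Al × ℝ≥0) × (N.toLTS .safety).St) :
    (N.toLTS .safety).Acc f ↔ ∀ n, (f n).1.1 ∈ N.F := Iff.rfl

lemma acc_reach (N : TimedAut Al) (f : ℕ → (N.toLTS .reach).St × Option (Al × ℝ≥0) × (N.toLTS .reach).St) :
    (N.toLTS .reach).Acc f ↔ ∃ n, (f n).1.1 ∈ N.F := Iff.rfl

lemma acc_transfer_fwd (hD : M.Δ.Finite) (sem : AccSR) (w : ℕ → Al × ℝ≥0)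
    (s : ℕ → M.Q × (M.Cl → ℝ≥0)) (C : ℕ → GCfg M)
    (hs0 : s 0 = (M.init, fun _ => 0)) (hC0 : C 0 = initCfg M)
    (hp : ∀ i, (C (i+1)).1.1 = (s i).1)
    (hacc : (M.toLTS sem).Acc (fun i => (s i, some (w i), s (i+1)))) :
    ((ghost M hD).toLTS sem).Acc (fun i => (C i, some (w i), C (i+1))) := by
  have hq0 : (C 0).1.1 = (s 0).1 := by rw [hC0, hs0]; rfl
  cases sem with
  | safety =>
    have hacc' : ∀ n, (s n).1 ∈ M.F := hacc
    show ∀ n, (C n).1 ∈ (ghost M hD).F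
    intro n
    show (C n).1.1 ∈ M.F
    cases n with
    | zero => rw [hq0]; exact hacc' 0
    | succ m => rw [hp m]; exact hacc' m
  | reach =>
    have hacc' : ∃ n, (s n).1 ∈ M.F := hacc
    obtain ⟨n, hn⟩ := hacc'
    show ∃ n, (C n).1 ∈ (ghost M hD).F
    exact ⟨n + 1, show (C (n+1)).1.1 ∈ M.F by rw [hp n]; exact hn⟩

lemma acc_transfer_bwd (hD : M.Δ.Finite) (sem : AccSR) (w : ℕ → Al × ℝ≥0)
    (s : ℕ → M.Q × (M.Cl → ℝ≥0)) (S : ℕ → GCfg M)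
    (hs0 : s 0 = (M.init, fun _ => 0)) (hS0 : S 0 = initCfg M)
    (hp : ∀ i, (s i).1 = (S (i+1)).1.1)
    (hacc : ((ghost M hD).toLTS sem).Acc (fun i => (S i, some (w i), S (i+1)))) :
    (M.toLTS sem).Acc (fun i => (s i, some (w i), s (i+1))) := by
  cases sem with
  | safety =>
    have hacc' : ∀ n, (S n).1 ∈ (ghost M hD).F := hacc
    show ∀ n, (s n).1 ∈ M.F
    intro n
    rw [hp n]
    exact hacc' (n+1)
  | reach =>
    have hacc' : ∃ n, (S n).1 ∈ (ghost M hD).F := hacc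
    show ∃ n, (s n).1 ∈ M.F
    obtain ⟨n, hn⟩ := hacc'
    cases n with
    | zero =>
      refine ⟨0, ?_⟩
      rw [hs0]
      have : (S 0).1.1 ∈ M.F := hn
      rwa [hS0] at this
    | succ m => exact ⟨m, by rw [hp m]; exact hn⟩

lemma ghost_lang (hD : M.Δ.Finite) (sem : AccSR) :
    ((ghost M hD).toLTS sem).Lang = (M.toLTS sem).Lang := by
  ext w
  rw [lang_iff, lang_iff]
  constructor
  · rintro ⟨S, hS0, hstep, hacc⟩
    obtain ⟨s, hs0, hstepM, hst⟩ := ghost_run_to_run M hD w S hS0 hstep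
    exact ⟨s, hs0, hstepM, acc_transfer_bwd M hD sem w s S hs0 hS0 hst hacc⟩
  · rintro ⟨s, hs0, hstepM, hacc⟩
    obtain ⟨C, hC0, hC1, hCS⟩ : ∃ C : ℕ → GCfg M, C 0 = initCfg M ∧
        C 1 = eveStep M (C 0) none (w 0) ∧
        ∀ i, C (i+2) = eveStep M (C (i+1))
          (some (w i, [(s i, some (w i), s (i+1))])) (w (i+1)) :=
      ⟨fun n => Nat.rec (initCfg M) (fun i Ci => eveStep M Ci
          (Nat.casesOn i none (fun j => some (w j, [(s j, some (w j), s (j+1))]))) (w i)) n,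
        rfl, rfl, fun i => rfl⟩
    obtain ⟨hgstep, hp⟩ := chain M hD w s hs0 hstepM C hC0 hC1 hCS
    exact ⟨C, hC0, hgstep, acc_transfer_fwd M hD sem w s C hs0 hC0 hp hacc⟩

lemma ghost_g1win (hD : M.Δ.Finite) (sem : AccSR) :
    LTS.G1Win ((ghost M hD).toLTS sem) (M.toLTS sem) := by
  classical
  refine ⟨fun h a => [(eveConf M h, some a, eveStep M (eveConf M h) h.getLast? a)], ?_⟩
  intro am hval
  obtain ⟨s, hs0, hforms⟩ :=
    (validMoves_single M sem (fun i => (am i).1) (fun i => (am i).2)).1 hval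
  have hsnoc : ∀ i : ℕ, (List.ofFn fun j : Fin (i+1) => am j.1)
      = (List.ofFn fun j : Fin i => am j.1) ++ [am i] := by
    intro i
    rw [List.ofFn_succ']
    simp [List.concat_eq_append]
  have hlastS : ∀ i : ℕ, (List.ofFn fun j : Fin (i+1) => am j.1).getLast? = some (am i) := by
    intro i
    rw [hsnoc i, List.getLast?_concat]
  -- Eve's configurations
  set C : ℕ → GCfg M := fun i => eveConf M (List.ofFn fun j : Fin i => am j.1) with hCdef
  have hC0 : C 0 = initCfg M := by
    rw [hCdef]
    simp only [List.ofFn_zero]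
    exact eveConf_nil M
  have hCsnoc : ∀ i, C (i+1) = eveStep M (C i)
      (List.ofFn fun j : Fin i => am j.1).getLast? (am i).1 := by
    intro i
    rw [hCdef]
    simp only []
    exact (congrArg (eveConf M) (hsnoc i)).trans (eveConf_concat M _ _)
  have hC1 : C 1 = eveStep M (C 0) none ((am 0).1) := by
    rw [hCsnoc 0]
    simp
    rfl
  have hCS : ∀ i, C (i+2) = eveStep M (C (i+1))
      (some ((am i).1, [(s i, some ((am i).1), s (i+1))])) ((am (i+1)).1) := by
    intro i
    rw [hCsnoc (i+1), hlastS i]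
    have : am i = ((am i).1, [(s i, some ((am i).1), s (i+1))]) := by
      rw [← (hforms i).1]
      rfl
    rw [← this]
    rfl
  obtain ⟨hgstep, hp⟩ := chain M hD (fun i => (am i).1) s hs0 (fun i => (hforms i).2) C hC0 hC1 hCS
  have hmoves : ∀ i, (fun h a => [(eveConf M h, some a, eveStep M (eveConf M h) h.getLast? a)])
      (List.ofFn fun j : Fin i => am j.1) ((am i).1)
      = [(C i, some ((am i).1), C (i+1))] := by
    intro i
    simp only []
    rw [hCdef]
    simp only []
    exact congrArg (fun x => [(eveConf M (List.ofFn fun j : Fin i => am j.1), some (am i).1, x)])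
      (hCsnoc i).symm
  constructor
  · rw [validMoves_single]
    refine ⟨C, hC0, fun i => ⟨hmoves i, hgstep i⟩⟩
  · by_cases hA : (M.toLTS sem).FlatAcc fun i => (am i).2
    · left
      have heq : (fun i => (fun h a => [(eveConf M h, some a, eveStep M (eveConf M h) h.getLast? a)])
          (List.ofFn fun j : Fin i => am j.1) ((am i).1))
          = fun i => [(C i, some ((am i).1), C (i+1))] := funext hmoves
      refine (congrArg (((ghost M hD).toLTS sem).FlatAcc) heq).mpr
        ((flatAcc_singleton ((ghost M hD).toLTS sem) (fun i => (C i, some ((am i).1), C (i+1)))).2 ?_)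
      have heq2 : (fun i => (am i).2) = fun i => [(s i, some ((am i).1), s (i+1))] :=
        funext fun i => (hforms i).1
      rw [heq2] at hA
      have hA := (flatAcc_singleton (M.toLTS sem) (fun i => (s i, some ((am i).1), s (i+1)))).1 hA
      exact acc_transfer_fwd M hD sem (fun i => (am i).1) s C hs0 hC0 hp hA
    · right
      exact hA

end OneTok

/-- The classes of safety and reachability timed automata are closed under
1-token ghost: for every timed automaton `M` with safety (respectively reachability)
acceptance there is a timed automaton `M'` with the same acceptance such that
`L(M') = L(M)` and Eve wins the 1-token game `G1(M', M)`. -/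
theorem timed_closed_under_one_token_ghost (Al : Type) [Finite Al]
    (M : TimedAut Al) (hM : M.WF) (sem : AccSR) :
    ∃ M' : TimedAut Al, M'.WF ∧
      (M'.toLTS sem).Lang = (M.toLTS sem).Lang ∧
      LTS.G1Win (M'.toLTS sem) (M.toLTS sem) := by
  obtain ⟨hQ, hC, hD⟩ := hM
  exact ⟨OneTok.ghost M hD, OneTok.ghost_wf M hD, OneTok.ghost_lang M hD sem,
    OneTok.ghost_g1win M hD sem⟩
end

section
/- For every n ≥ 1, there exists a Büchi automaton A over the alphabet {a, b} with at most 2n states such that A is guidable with respect to the class of Büchi automata over {a, b} with at most 2n states, but A is not history-deterministic. Hence history-determinism and guidability are distinct notions for the class of Büchi automata with at most 2n states. -/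
/-- A Büchi automaton over alphabet `Al`: no ε-transitions, accepting states `F`
(finiteness of the state space is stated separately). -/
structure Buchi (Al : Type) where
  Q : Type
  init : Q
  Tr : Q → Al → Q → Prop
  F : Set Q

namespace Buchi

variable {Al : Type}

/-- The LTS induced by a Büchi automaton: an infinite run is accepting iff it visits
accepting states infinitely often. -/
def toLTS (B : Buchi Al) : LTS Al where
  St := B.Q
  init := B.init
  Tr := fun q x q' => ∃ σ, x = some σ ∧ B.Tr q σ q'
  Acc := fun ρ => ∀ N, ∃ n ≥ N, (ρ n).1 ∈ B.F

/-- `BPath B q l q'` : the list `l` of letter-labelled transitions is a path from `q` to `q'`. -/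
def BPath (B : Buchi Al) : B.Q → List (B.Q × Al × B.Q) → B.Q → Prop
  | q, [], q' => q = q'
  | q, t :: l, q' => t.1 = q ∧ B.Tr t.1 t.2.1 t.2.2 ∧ BPath B t.2.2 l q'

/-- A linear (very weak) automaton: every cycle is a self-loop. -/
def IsLinear (B : Buchi Al) : Prop :=
  ∀ q l, l ≠ [] → B.BPath q l q → ∀ t ∈ l, t.1 = q ∧ t.2.2 = q

end Buchi

namespace GNHD
open LTS

attribute [reducible] Buchi.toLTS

variable {Al : Type}

lemma strictMono_surj_id {φ : ℕ → ℕ} (hm : StrictMono φ)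
    (hs : ∀ n, ∃ i, φ i = n) : ∀ n, φ n = n := by
  intro n
  induction n using Nat.strong_induction_on with
  | _ n ih =>
    obtain ⟨i, hi⟩ := hs n
    have hge : i ≤ φ i := hm.le_apply
    have hin : i ≤ n := by omega
    rcases lt_or_eq_of_le hin with h | h
    · have := ih i h
      omega
    · subst h; exact hi

lemma wordOf_nil_of_path {B : Buchi Al} :
    ∀ (l : List (B.Q × Option Al × B.Q)) (q q' : B.Q), B.toLTS.Path q l q' →
      LTS.wordOf l = ([] : List Al) → l = [] := by
  intro l
  cases l with
  | nil => intro _ _ _ _; rfl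
  | cons t l' =>
    intro q q' hp hw
    obtain ⟨h1, h2, h3⟩ := hp
    obtain ⟨σ, hσ, htr⟩ := h2
    simp [LTS.wordOf, List.filterMap_cons, hσ] at hw

lemma seqOver_singleton {B : Buchi Al} {q q' : B.Q} {σ : Al}
    {l : List (B.Q × Option Al × B.Q)} (h : B.toLTS.SeqOver q σ l q') :
    l = [(q, some σ, q')] ∧ B.Tr q σ q' := by
  obtain ⟨hp, hw⟩ := h
  cases l with
  | nil => simp [LTS.wordOf] at hw
  | cons t l' =>
    obtain ⟨h1, h2, h3⟩ := hp
    obtain ⟨σ', hσ', htr⟩ := h2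
    have hw' : σ' :: LTS.wordOf l' = [σ] := by
      simpa [LTS.wordOf, List.filterMap_cons, hσ'] using hw
    have hσσ : σ' = σ := by simpa using congrArg List.head? hw'
    have hl' : LTS.wordOf l' = ([] : List Al) := by
      have := congrArg List.tail hw'; simpa using this
    have hnil : l' = [] := wordOf_nil_of_path l' _ _ h3 hl'
    subst hnil
    have hq' : t.2.2 = q' := h3
    subst hσσ
    constructor
    · have : t = (q, some σ', q') := by
        obtain ⟨ta, tb, tc⟩ := t
        simp only [Prod.mk.injEq]
        exact ⟨h1, hσ', hq'⟩
      rw [this]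
    · rw [← h1, ← hq']
      exact htr

lemma validMoves_elim {B : Buchi Al} {w : ℕ → Al}
    {em : ℕ → List (B.Q × Option Al × B.Q)}
    (h : B.toLTS.ValidMoves w em) :
    ∃ qs : ℕ → B.Q, qs 0 = B.init ∧
      ∀ i, em i = [(qs i, some (w i), qs (i+1))] ∧ B.Tr (qs i) (w i) (qs (i+1)) := by
  obtain ⟨qs, h0, hs⟩ := h
  exact ⟨qs, h0, fun i => seqOver_singleton (hs i)⟩

lemma flatAcc_singleton_iff {B : Buchi Al} {em : ℕ → List (B.Q × Option Al × B.Q)}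
    {t : ℕ → B.Q × Option Al × B.Q} (hem : ∀ i, em i = [t i]) :
    B.toLTS.FlatAcc em ↔ ∀ N, ∃ m, N ≤ m ∧ (t m).1 ∈ B.F := by
  constructor
  · rintro ⟨ρ, ⟨bs, hb0, hbs, hget⟩, hacc⟩
    have hbid : ∀ i, bs i = i := by
      intro i; induction i with
      | zero => exact hb0
      | succ i ih => rw [hbs, ih, hem]; simp
    have hρ : ∀ i, ρ i = t i := by
      intro i
      have h0 : (0:ℕ) < (em i).length := by rw [hem]; simp
      have := hget i 0 h0
      rw [hbid] at this
      simpa [hem] using this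
    intro N; obtain ⟨m, hm, hF⟩ := hacc N; exact ⟨m, hm, by rwa [hρ] at hF⟩
  · intro h
    refine ⟨t, ⟨id, rfl, fun i => by rw [hem]; simp, fun i j hj => ?_⟩, fun N => ?_⟩
    · rw [hem] at hj
      simp at hj
      subst hj
      simp [hem]
    · obtain ⟨m, hm, hF⟩ := h N; exact ⟨m, hm, hF⟩

lemma lang_intro (B : Buchi Al) (g : ℕ → B.Q) (w : ℕ → Al)
    (h0 : g 0 = B.init) (hTr : ∀ i, B.Tr (g i) (w i) (g (i+1)))
    (hF : ∀ N, ∃ m, N ≤ m ∧ g m ∈ B.F) : w ∈ B.toLTS.Lang := by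
  refine ⟨fun i => (g i, some (w i), g (i+1)), ⟨h0, fun n => ⟨⟨w n, rfl, hTr n⟩, rfl⟩⟩,
    ⟨id, strictMono_id, fun i => rfl, fun n _ => ⟨n, rfl⟩⟩, fun N => ?_⟩
  obtain ⟨m, hm, h⟩ := hF N; exact ⟨m, hm, h⟩

lemma lang_elim (B : Buchi Al) {w : ℕ → Al} (hw : w ∈ B.toLTS.Lang) :
    ∃ g : ℕ → B.Q, g 0 = B.init ∧ (∀ i, B.Tr (g i) (w i) (g (i+1))) ∧
      ∀ N, ∃ m, N ≤ m ∧ g m ∈ B.F := by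
  obtain ⟨ρ, ⟨h0, hstep⟩, ⟨φ, hmono, hlab, hcover⟩, hacc⟩ := hw
  have hsome : ∀ m, (ρ m).2.1 ≠ none := by
    intro m
    obtain ⟨σ, hσ, _⟩ := (hstep m).1
    simp [hσ]
  have hφ : ∀ m, φ m = m := strictMono_surj_id hmono (fun m => hcover m (hsome m))
  have hlab' : ∀ m, (ρ m).2.1 = some (w m) := by
    intro m; have := hlab m; rwa [hφ] at this
  refine ⟨fun m => (ρ m).1, h0, ?_, ?_⟩
  · intro i
    obtain ⟨σ, hσ, htr⟩ := (hstep i).1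
    have hσw : σ = w i := by
      rw [hlab'] at hσ
      exact (Option.some_inj.mp hσ).symm
    have h2 := (hstep i).2
    simp only [h2]
    rw [← hσw]
    exact htr
  · intro N; obtain ⟨m, hm, hF⟩ := hacc N; exact ⟨m, hm, hF⟩

end GNHD
namespace GNHD

/-- The witness automaton: a deterministic `a`-chain `0 → 1 → ⋯ → 2n-2`, where the
state `2n-2` has an `a`-self-loop and a nondeterministic `a`-transition to the
`b`-self-loop state `2n-1`.  All states accepting.  Its language is
`{a^ω} ∪ {a^k b^ω : k ≥ 2n-1}`. -/
def mkA (n : ℕ) (hn : 0 < n) : Buchi Bool where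
  Q := Fin (2*n)
  init := ⟨0, by omega⟩
  Tr q σ q' :=
    if σ then
      (q.1 < 2*n - 2 ∧ q'.1 = q.1 + 1) ∨
      (q.1 = 2*n - 2 ∧ (q'.1 = 2*n - 2 ∨ q'.1 = 2*n - 1))
    else (q.1 = 2*n - 1 ∧ q'.1 = 2*n - 1)
  F := Set.univ

attribute [reducible] mkA

variable {n : ℕ} {hn : 0 < n}

lemma mkA_tr_true {q q' : Fin (2*n)} :
    (mkA n hn).Tr q true q' ↔
      ((q.1 < 2*n - 2 ∧ q'.1 = q.1 + 1) ∨
        (q.1 = 2*n - 2 ∧ (q'.1 = 2*n - 2 ∨ q'.1 = 2*n - 1))) := by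
  simp [mkA]

lemma mkA_tr_false {q q' : Fin (2*n)} :
    (mkA n hn).Tr q false q' ↔ (q.1 = 2*n - 1 ∧ q'.1 = 2*n - 1) := by
  simp [mkA]

lemma mkA_mem_aomega : (fun _ : ℕ => true) ∈ (mkA n hn).toLTS.Lang := by
  refine lang_intro (mkA n hn) (fun i => ⟨min i (2*n-2), by omega⟩) _ ?_ ?_ ?_
  · apply Fin.ext
    show min 0 (2*n-2) = ((mkA n hn).init).1
    simp [mkA]
  · intro i
    rw [mkA_tr_true]
    by_cases h : i < 2*n - 2
    · left
      refine ⟨?_, ?_⟩ <;> (simp only [Fin.val_mk]; omega)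
    · right
      refine ⟨?_, ?_⟩
      · simp only [Fin.val_mk]; omega
      · left; simp only [Fin.val_mk]; omega
  · intro N; exact ⟨N, le_refl N, trivial⟩

lemma mkA_mem_kword {k : ℕ} (hk : 2*n - 1 ≤ k) :
    (fun i : ℕ => decide (i < k)) ∈ (mkA n hn).toLTS.Lang := by
  refine lang_intro (mkA n hn)
    (fun i => if i < k then ⟨min i (2*n-2), by omega⟩ else ⟨2*n-1, by omega⟩) _ ?_ ?_ ?_
  · have h0 : 0 < k := by omega
    apply Fin.ext
    simp only [if_pos h0, Fin.val_mk]
    show min 0 (2*n-2) = ((mkA n hn).init).1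
    simp [mkA]
  · intro i
    by_cases hik : i < k
    · have hw : (decide (i < k)) = true := by simp [hik]
      rw [hw, mkA_tr_true]
      by_cases hik1 : i + 1 < k
      · simp only [if_pos hik, if_pos hik1, Fin.val_mk]
        by_cases h : i < 2*n - 2
        · left; omega
        · right; refine ⟨by omega, Or.inl (by omega)⟩
      · simp only [if_pos hik, if_neg hik1, Fin.val_mk]
        right
        exact ⟨by omega, Or.inr trivial⟩
    · have hw : (decide (i < k)) = false := by simp [hik]
      have hik1 : ¬ (i + 1 < k) := by omega
      rw [hw, mkA_tr_false]
      simp only [if_neg hik, if_neg hik1, Fin.val_mk]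
      exact ⟨trivial, trivial⟩
  · intro N; exact ⟨N, le_refl N, trivial⟩

lemma mkA_lang_shape {w : ℕ → Bool} (hw : w ∈ (mkA n hn).toLTS.Lang) :
    (∀ i, w i = true) ∨
      ∃ k, 2*n - 1 ≤ k ∧ (∀ i, i < k → w i = true) ∧ ∀ i, k ≤ i → w i = false := by
  obtain ⟨g, hg0, hgt, _⟩ := lang_elim _ hw
  have hgrow : ∀ i, (g i).1 ≤ i := by
    intro i
    induction i with
    | zero =>
      rw [hg0]
    | succ i ih =>
      have htr := hgt i
      cases hwi : w i with
      | true =>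
        rw [hwi, mkA_tr_true] at htr
        rcases htr with ⟨_, h⟩ | ⟨h1, h2 | h2⟩ <;> omega
      | false =>
        rw [hwi, mkA_tr_false] at htr
        omega
  by_cases hall : ∀ i, w i = true
  · left; exact hall
  · right
    have hex : ∃ k, w k = false := by
      push_neg at hall
      obtain ⟨k, hk⟩ := hall
      exact ⟨k, by simpa using hk⟩
    set k := Nat.find hex with hkdef
    have hkf : w k = false := Nat.find_spec hex
    have hklt : ∀ i, i < k → w i = true := by
      intro i hi
      have := Nat.find_min hex hi
      simpa using this
    have hgk : (g k).1 = 2*n - 1 := by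
      have htr := hgt k
      rw [hkf, mkA_tr_false] at htr
      exact htr.1
    have hky : 2*n - 1 ≤ k := by have := hgrow k; omega
    refine ⟨k, hky, hklt, ?_⟩
    have hstay : ∀ i, k ≤ i → (g i).1 = 2*n - 1 ∧ w i = false := by
      intro i hi
      induction i with
      | zero =>
        have hk0 : k = 0 := by omega
        rw [← hk0]
        exact ⟨hgk, hkf⟩
      | succ i ih =>
        by_cases hik : k ≤ i
        · obtain ⟨hgi, hwi⟩ := ih hik
          have htr := hgt i
          rw [hwi, mkA_tr_false] at htr
          refine ⟨htr.2, ?_⟩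
          cases hwc : w (i+1) with
          | false => rfl
          | true =>
            have htr1 := hgt (i+1)
            rw [hwc, mkA_tr_true] at htr1
            rcases htr1 with ⟨h, _⟩ | ⟨h, _⟩ <;> omega
        · have : i + 1 = k := by omega
          rw [this]
          exact ⟨hgk, hkf⟩
    intro i hi; exact (hstay i hi).2

end GNHD
namespace GNHD

variable {n : ℕ} {hn : 0 < n}

lemma mkA_not_HD (n : ℕ) (hn : 0 < n) : ¬ (mkA n hn).toLTS.HD := by
  rintro ⟨st, hst⟩
  -- play 1 : the word a^ω
  have h1 := hst (fun _ => true) mkA_mem_aomega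
  obtain ⟨q1, hq10, hs1⟩ := h1.1
  have hm1 : ∀ i, st (List.ofFn fun j : Fin (i+1) => true) =
      [(q1 i, some true, q1 (i+1))] ∧ (mkA n hn).Tr (q1 i) true (q1 (i+1)) := by
    intro i
    have := seqOver_singleton (hs1 i)
    simpa using this
  -- play 2 : the word a^(2n-1) b^ω
  set k := 2*n - 1 with hkdef
  set w2 : ℕ → Bool := fun i => decide (i < k) with hw2def
  have h2 := hst w2 (mkA_mem_kword (le_refl k))
  obtain ⟨q2, hq20, hs2⟩ := h2.1
  have hm2 : ∀ i, st (List.ofFn fun j : Fin (i+1) => w2 j.1) =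
      [(q2 i, some (w2 i), q2 (i+1))] ∧ (mkA n hn).Tr (q2 i) (w2 i) (q2 (i+1)) :=
    fun i => seqOver_singleton (hs2 i)
  -- the two plays agree up to round k-1
  have hagree : ∀ i, i ≤ k → q2 i = q1 i := by
    intro i hi
    induction i with
    | zero => rw [hq10, hq20]
    | succ i ih =>
      have hi' : i ≤ k := by omega
      have hlists : (List.ofFn fun j : Fin (i+1) => w2 j.1) =
          (List.ofFn fun j : Fin (i+1) => true) := by
        congr 1
        funext j
        have : (j : ℕ) < k := by omega
        simp [hw2def, this]
      have e2 := (hm2 i).1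
      rw [hlists, (hm1 i).1] at e2
      have := List.head_eq_of_cons_eq e2.symm
      have h22 : q2 (i+1) = q1 (i+1) := by
        have := congrArg (fun t => t.2.2) this
        simpa using this
      exact h22
  -- round k of play 2 reads letter b from a state that cannot read b
  have hb := (hm2 k).2
  have hwk : w2 k = false := by simp [hw2def]
  rw [hwk, mkA_tr_false] at hb
  have ha := (hm1 k).2
  rw [mkA_tr_true] at ha
  have := hagree k (le_refl k)
  rw [this] at hb
  rcases ha with ⟨h, _⟩ | ⟨h, _⟩ <;> omega

end GNHD
namespace GNHD

section Guid

variable {n : ℕ} (hn : 0 < n) (A' : Buchi Bool)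

/-- From `q`, reading `b^ω`, there is an accepting run. -/
def advP (q : A'.Q) : Prop :=
  ∃ g : ℕ → A'.Q, g 0 = q ∧ (∀ i, A'.Tr (g i) false (g (i+1))) ∧
    ∀ N, ∃ m, N ≤ m ∧ g m ∈ A'.F

/-- From `q` there is an accepting run whose first letter is `a` (= `true`). -/
def advA (q : A'.Q) : Prop :=
  ∃ (g : ℕ → A'.Q) (w : ℕ → Bool), w 0 = true ∧ g 0 = q ∧
    (∀ i, A'.Tr (g i) (w i) (g (i+1))) ∧ ∀ N, ∃ m, N ≤ m ∧ g m ∈ A'.F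

/-- Key combinatorial lemma: in an automaton with at most `2n` states whose language is
contained in `{a^ω} ∪ {a^k b^ω : k ≥ 2n-1}`, no state reachable by a run on a word of
`a`s admits both an accepting `b^ω`-run and an accepting run starting with `a`. -/
lemma KL [Finite A'.Q] (hcard : Nat.card A'.Q ≤ 2*n)
    (hSub : A'.toLTS.Lang ⊆ (mkA n hn).toLTS.Lang) (q : A'.Q) (j : ℕ)
    (g0 : ℕ → A'.Q) (hg00 : g0 0 = A'.init) (hg0j : g0 j = q)
    (hg0t : ∀ i, i < j → A'.Tr (g0 i) true (g0 (i+1)))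
    (hAdv : advP A' q) (hAdvA : advA A' q) : False := by
  classical
  set Pm : ℕ → Prop := fun m => ∃ g : ℕ → A'.Q, g 0 = A'.init ∧ g m = q ∧
    ∀ i, i < m → A'.Tr (g i) true (g (i+1)) with hPmdef
  have hex : ∃ m, Pm m := ⟨j, g0, hg00, hg0j, hg0t⟩
  set m0 := Nat.find hex with hm0def
  obtain ⟨g, hg0', hgm, hgt⟩ : Pm m0 := Nat.find_spec hex
  obtain ⟨h, hh0, hhTr, hhio⟩ := hAdv
  -- the minimal a-path has no repetitions
  have hsplice : ∀ t1 t2, t1 < t2 → t2 ≤ m0 → g t1 = g t2 → False := by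
    intro t1 t2 hlt hle heq
    have hP : Pm (m0 - (t2 - t1)) := by
      refine ⟨fun u => if u ≤ t1 then g u else g (u + (t2 - t1)), by simp [hg0'], ?_, ?_⟩
      · by_cases hc : m0 - (t2 - t1) ≤ t1
        · have h1 : m0 = t2 := by omega
          have h2 : m0 - (t2 - t1) = t1 := by omega
          simp only [if_pos hc]
          rw [h2, heq, ← h1, hgm]
        · simp only [if_neg hc]
          have : m0 - (t2 - t1) + (t2 - t1) = m0 := by omega
          rw [this, hgm]
      · intro i hi
        rcases Nat.lt_or_ge i t1 with h1 | h1
        · simp only [if_pos (by omega : i ≤ t1), if_pos (by omega : i + 1 ≤ t1)]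
          exact hgt i (by omega)
        · rcases Nat.eq_or_lt_of_le h1 with h2 | h2
          · simp only [if_pos (by omega : i ≤ t1), if_neg (by omega : ¬ i + 1 ≤ t1)]
            rw [← h2, heq, show t1 + 1 + (t2 - t1) = t2 + 1 from by omega]
            exact hgt t2 (by omega)
          · simp only [if_neg (by omega : ¬ i ≤ t1), if_neg (by omega : ¬ i + 1 ≤ t1)]
            have : i + 1 + (t2 - t1) = i + (t2 - t1) + 1 := by omega
            rw [this]
            exact hgt _ (by omega)
    have := Nat.find_min hex (show m0 - (t2 - t1) < m0 by omega)
    exact this hP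
  have hinj : Function.Injective (fun t : Fin (m0 + 1) => g t.1) := by
    intro t1 t2 heq
    by_contra hne
    have hne' : t1.1 ≠ t2.1 := fun h => hne (Fin.ext h)
    rcases Nat.lt_or_ge t1.1 t2.1 with h | h
    · exact hsplice t1.1 t2.1 h (by omega) heq
    · exact hsplice t2.1 t1.1 (by omega) (by omega) heq.symm
  have hle : m0 + 1 ≤ Nat.card A'.Q := by
    have := Nat.card_le_card_of_injective _ hinj
    simpa using this
  have hm0le : m0 ≤ 2*n - 1 := by omega
  rcases Nat.lt_or_ge m0 (2*n - 1) with hcase | hcase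
  · -- small case : the word a^(m0) b^ω is accepted, contradicting the language shape
    set W : ℕ → Bool := fun u => decide (u < m0) with hWdef
    set G : ℕ → A'.Q := fun u => if u < m0 then g u else h (u - m0) with hGdef
    have hmem : W ∈ A'.toLTS.Lang := by
      refine lang_intro A' G W ?_ ?_ ?_
      · by_cases h0 : 0 < m0
        · simp only [hGdef, if_pos h0]; exact hg0'
        · have hm00 : m0 = 0 := by omega
          simp only [hGdef, if_neg (by omega : ¬ (0:ℕ) < m0)]
          rw [show (0:ℕ) - m0 = 0 from by omega, hh0, ← hgm, hm00, hg0']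
      · intro u
        rcases Nat.lt_or_ge u m0 with hu | hu
        · have hW : W u = true := by simp [hWdef, hu]
          rw [hW]
          rcases Nat.lt_or_ge (u+1) m0 with hu1 | hu1
          · simp only [hGdef, if_pos hu, if_pos hu1]
            exact hgt u hu
          · have hu1' : u + 1 = m0 := by omega
            simp only [hGdef, if_pos hu, if_neg (by omega : ¬ u + 1 < m0)]
            rw [show u + 1 - m0 = 0 from by omega, hh0, ← hgm, ← hu1']
            exact hgt u hu
        · have hW : W u = false := by simp [hWdef]; omega
          rw [hW]
          simp only [hGdef, if_neg (by omega : ¬ u < m0), if_neg (by omega : ¬ u + 1 < m0)]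
          rw [show u + 1 - m0 = (u - m0) + 1 from by omega]
          exact hhTr (u - m0)
      · intro N
        obtain ⟨m, hm, hF⟩ := hhio N
        refine ⟨m + m0, by omega, ?_⟩
        simp only [hGdef, if_neg (by omega : ¬ m + m0 < m0)]
        rw [show m + m0 - m0 = m from by omega]
        exact hF
    have hshape := mkA_lang_shape (hSub hmem)
    rcases hshape with hall | ⟨k, hk, htr, hfl⟩
    · have := hall m0
      simp [hWdef] at this
    · have h1 : ¬ (m0 < k) := by
        intro hc
        have := htr m0 hc
        simp [hWdef] at this
      omega
  · have hm0 : m0 = 2*n - 1 := by omega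
    -- all states lie on the minimal a-path
    have hcards : Nat.card A'.Q = 2*n := by omega
    have hbij : Function.Bijective (fun t : Fin (m0 + 1) => g t.1) := by
      rw [Nat.bijective_iff_injective_and_card]
      refine ⟨hinj, ?_⟩
      rw [hcards]
      rw [Nat.card_eq_fintype_card, Fintype.card_fin]
      omega
    -- a repetition on the b^ω-run
    obtain ⟨u1, u2, hune, hueq⟩ :
        ∃ u1 u2 : Fin (2*n + 1), u1 ≠ u2 ∧ h u1.1 = h u2.1 := by
      have : Fintype A'.Q := Fintype.ofFinite _
      have hlt : Fintype.card A'.Q < Fintype.card (Fin (2*n+1)) := by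
        have h1 : Fintype.card A'.Q = Nat.card A'.Q := (Nat.card_eq_fintype_card).symm
        rw [Fintype.card_fin, h1, hcards]
        omega
      obtain ⟨u1, u2, hne, heq⟩ := Fintype.exists_ne_map_eq_of_card_lt
        (fun t : Fin (2*n+1) => h t.1) hlt
      exact ⟨u1, u2, hne, heq⟩
    -- order the repetition
    obtain ⟨s1, s2, hs12, hcyc⟩ : ∃ s1 s2 : ℕ, s1 < s2 ∧ h s1 = h s2 := by
      rcases Nat.lt_or_ge u1.1 u2.1 with hlt | hge
      · exact ⟨u1.1, u2.1, hlt, hueq⟩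
      · refine ⟨u2.1, u1.1, ?_, hueq.symm⟩
        have : u1.1 ≠ u2.1 := fun hc => hune (Fin.ext hc)
        omega
    set c := s2 - s1 with hcdef
    clear_value c
    have hc1 : 1 ≤ c := by omega
    have hs2c : s2 = s1 + c := by omega
    -- position of the repeated state on the a-path
    obtain ⟨post, hpost0⟩ := hbij.2 (h s1)
    have hpost : g post.1 = h s1 := hpost0
    set pos := post.1 with hposdef
    have hposle : pos ≤ 2*n - 1 := by
      have h2 := post.2; omega
    obtain ⟨aG, aW, haW0, haG0, haTr, haio⟩ := hAdvA
    set D := 2*n - 1 + c with hDdef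
    clear_value D
    set W : ℕ → Bool := fun u =>
      if u < pos then true else if u < pos + c then false
      else if u < D then true else aW (u - D) with hWdef
    set G : ℕ → A'.Q := fun u =>
      if u ≤ pos then g u else if u ≤ pos + c then h (s1 + (u - pos))
      else if u ≤ D then g (u - c) else aG (u - D) with hGdef
    have hGpath : ∀ u, u ≤ pos → G u = g u := by
      intro u hu; simp only [hGdef, if_pos hu]
    have hGcyc : ∀ u, pos ≤ u → u ≤ pos + c → G u = h (s1 + (u - pos)) := by
      intro u h1 h2
      rcases Nat.eq_or_lt_of_le h1 with h3 | h3
      · simp only [hGdef, if_pos (by omega : u ≤ pos)]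
        rw [← h3, hpost]
        congr 1
        omega
      · simp only [hGdef, if_neg (by omega : ¬ u ≤ pos), if_pos h2]
    have hGsuf : ∀ u, pos + c ≤ u → u ≤ D → G u = g (u - c) := by
      intro u h1 h2
      rcases Nat.eq_or_lt_of_le h1 with h3 | h3
      · rw [hGcyc u (by omega) (by omega)]
        rw [show s1 + (u - pos) = s2 from by omega, ← hcyc, ← hpost]
        congr 1
        omega
      · simp only [hGdef, if_neg (by omega : ¬ u ≤ pos), if_neg (by omega : ¬ u ≤ pos + c),
          if_pos h2]
    have hGtail : ∀ u, D ≤ u → G u = aG (u - D) := by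
      intro u hu
      rcases Nat.eq_or_lt_of_le hu with h3 | h3
      · rw [← h3]
        rw [hGsuf D (by omega) (le_refl D)]
        rw [show D - c = 2*n - 1 from by omega, show D - D = 0 from by omega, haG0, ← hgm, hm0]
      · simp only [hGdef, if_neg (by omega : ¬ u ≤ pos), if_neg (by omega : ¬ u ≤ pos + c),
          if_neg (by omega : ¬ u ≤ D)]
    have hmem : W ∈ A'.toLTS.Lang := by
      refine lang_intro A' G W ?_ ?_ ?_
      · rw [hGpath 0 (by omega)]; exact hg0'
      · intro u
        rcases Nat.lt_or_ge u pos with hu | hu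
        · rw [show W u = true from by
            simp only [hWdef]
            rw [if_pos hu]]
          rw [hGpath u (by omega), hGpath (u+1) (by omega)]
          exact hgt u (by omega)
        rcases Nat.lt_or_ge u (pos + c) with hu2 | hu2
        · rw [show W u = false from by
            simp only [hWdef]
            rw [if_neg (by omega : ¬ u < pos), if_pos (by omega : u < pos + c)]]
          rw [hGcyc u (by omega) (by omega), hGcyc (u+1) (by omega) (by omega)]
          rw [show s1 + (u + 1 - pos) = s1 + (u - pos) + 1 from by omega]
          exact hhTr _
        rcases Nat.lt_or_ge u D with hu3 | hu3
        · rw [show W u = true from by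
            simp only [hWdef]
            rw [if_neg (by omega : ¬ u < pos), if_neg (by omega : ¬ u < pos + c),
              if_pos (by omega : u < D)]]
          rw [hGsuf u (by omega) (by omega), hGsuf (u+1) (by omega) (by omega)]
          rw [show u + 1 - c = (u - c) + 1 from by omega]
          exact hgt _ (by omega)
        · rw [show W u = aW (u - D) from by
            simp only [hWdef]
            rw [if_neg (by omega : ¬ u < pos), if_neg (by omega : ¬ u < pos + c),
              if_neg (by omega : ¬ u < D)]]
          rw [hGtail u (by omega), hGtail (u+1) (by omega)]
          rw [show u + 1 - D = (u - D) + 1 from by omega]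
          exact haTr _
      · intro N
        obtain ⟨m, hm, hF⟩ := haio N
        refine ⟨m + D, by omega, ?_⟩
        rw [hGtail (m + D) (by omega), show m + D - D = m from by omega]
        exact hF
    have hshape := mkA_lang_shape (hSub hmem)
    have hWpos : W pos = false := by
      simp only [hWdef]
      rw [if_neg (by omega : ¬ pos < pos), if_pos (by omega : pos < pos + c)]
    have hWD : W D = true := by
      simp only [hWdef]
      rw [if_neg (by omega : ¬ D < pos), if_neg (by omega : ¬ D < pos + c),
        if_neg (by omega : ¬ D < D), show D - D = 0 from by omega]
      exact haW0
    rcases hshape with hall | ⟨k, hk, htr, hfl⟩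
    · rw [hall pos] at hWpos; exact Bool.noConfusion hWpos
    · have h1 : k ≤ pos := by
        by_contra hc
        rw [htr pos (by omega)] at hWpos
        exact Bool.noConfusion hWpos
      have h2 := hfl D (by omega)
      rw [hWD] at h2
      exact Bool.noConfusion h2

end Guid

end GNHD
namespace GNHD

section Strat

variable {n : ℕ} (hn : 0 < n) (A' : Buchi Bool)

open Classical in
/-- One step of Eve's strategy automaton-with-memory. -/
noncomputable def stepF :
    Option (Fin (2*n)) → Bool × List (A'.Q × Option Bool × A'.Q) → Option (Fin (2*n)) :=
  fun e? p =>
    match e? with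
    | none => none
    | some e =>
      if p.1 = true then
        if hlt : e.1 < 2*n - 2 then some ⟨e.1 + 1, by omega⟩
        else if e.1 = 2*n - 2 then
          if ∃ t, p.2.getLast? = some t ∧ advP A' t.2.2 then some ⟨2*n - 1, by omega⟩
          else some ⟨2*n - 2, by omega⟩
        else none
      else
        if e.1 = 2*n - 1 then some ⟨2*n - 1, by omega⟩ else none

/-- Eve's memory after processing a history. -/
noncomputable def estate (hs : List (Bool × List (A'.Q × Option Bool × A'.Q))) :
    Option (Fin (2*n)) :=
  hs.foldl (stepF hn A') (some ⟨0, by omega⟩)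

/-- Eve's strategy in the simulation game. -/
noncomputable def stratF (hs : List (Bool × List (A'.Q × Option Bool × A'.Q))) :
    List (Fin (2*n) × Option Bool × Fin (2*n)) :=
  match hs.getLast? with
  | none => []
  | some p =>
    match estate hn A' hs.dropLast, estate hn A' hs with
    | some e1, some e2 => [(e1, some p.1, e2)]
    | _, _ => []

/-- The history of the play after round `i`. -/
def histL (am : ℕ → Bool × List (A'.Q × Option Bool × A'.Q)) (i : ℕ) :
    List (Bool × List (A'.Q × Option Bool × A'.Q)) :=
  List.ofFn (fun j : Fin (i+1) => am j.1)

variable (am : ℕ → Bool × List (A'.Q × Option Bool × A'.Q))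

lemma histL_zero : histL A' am 0 = [am 0] := by
  simp [histL, List.ofFn_succ]

lemma histL_succ (i : ℕ) : histL A' am (i+1) = (histL A' am i).concat (am (i+1)) := by
  simp only [histL]
  rw [List.ofFn_succ']
  rfl

lemma histL_last (i : ℕ) : (histL A' am i).getLast? = some (am i) := by
  cases i with
  | zero => rw [histL_zero]; rfl
  | succ i =>
    rw [histL_succ, List.concat_eq_append, List.getLast?_concat]

lemma histL_dropLast_succ (i : ℕ) : (histL A' am (i+1)).dropLast = histL A' am i := by
  rw [histL_succ, List.concat_eq_append, List.dropLast_concat]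

lemma histL_dropLast_zero : (histL A' am 0).dropLast = [] := by
  rw [histL_zero]; rfl

lemma estate_zero : estate hn A' (histL A' am 0) = stepF hn A' (some ⟨0, by omega⟩) (am 0) := by
  rw [histL_zero]; rfl

lemma estate_succ (i : ℕ) :
    estate hn A' (histL A' am (i+1)) = stepF hn A' (estate hn A' (histL A' am i)) (am (i+1)) := by
  rw [histL_succ]
  simp [estate, List.concat_eq_append, List.foldl_append]

end Strat

end GNHD
namespace GNHD

section Strat2

variable {n : ℕ} (hn : 0 < n) (A' : Buchi Bool)

lemma stepF_true_lt (e : Fin (2*n)) (p : Bool × List (A'.Q × Option Bool × A'.Q))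
    (hp : p.1 = true) (hlt : e.1 < 2*n - 2) :
    stepF hn A' (some e) p = some ⟨e.1 + 1, by omega⟩ := by
  simp only [stepF, hp, if_true, dif_pos hlt]

lemma stepF_true_commit (e : Fin (2*n)) (p : Bool × List (A'.Q × Option Bool × A'.Q))
    (hp : p.1 = true) (he : e.1 = 2*n - 2)
    (hc : ∃ t, p.2.getLast? = some t ∧ advP A' t.2.2) :
    stepF hn A' (some e) p = some ⟨2*n - 1, by omega⟩ := by
  simp only [stepF, hp, if_true, dif_neg (by omega : ¬ e.1 < 2*n - 2), if_pos he, if_pos hc]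

lemma stepF_true_stay (e : Fin (2*n)) (p : Bool × List (A'.Q × Option Bool × A'.Q))
    (hp : p.1 = true) (he : e.1 = 2*n - 2)
    (hc : ¬ ∃ t, p.2.getLast? = some t ∧ advP A' t.2.2) :
    stepF hn A' (some e) p = some ⟨2*n - 2, by omega⟩ := by
  simp only [stepF, hp, if_true, dif_neg (by omega : ¬ e.1 < 2*n - 2), if_pos he, if_neg hc]

lemma stepF_false_y (e : Fin (2*n)) (p : Bool × List (A'.Q × Option Bool × A'.Q))
    (hp : p.1 = false) (he : e.1 = 2*n - 1) :
    stepF hn A' (some e) p = some ⟨2*n - 1, by omega⟩ := by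
  simp only [stepF, hp, Bool.false_eq_true, if_false, if_pos he]

end Strat2

section Main

variable {n : ℕ} (hn : 0 < n) (A' : Buchi Bool) [Finite A'.Q]

lemma mkA_simulates (hcard : Nat.card A'.Q ≤ 2*n)
    (hSub : A'.toLTS.Lang ⊆ (mkA n hn).toLTS.Lang) :
    (mkA n hn).toLTS.Simulates A'.toLTS := by
  classical
  refine ⟨stratF hn A', ?_⟩
  intro am hValid
  by_cases hFA : A'.toLTS.FlatAcc fun i => (am i).2
  swap
  · exact Or.inl hFA
  refine Or.inr ?_
  -- Adam's run data
  obtain ⟨qs, hqs0, hqs⟩ := validMoves_elim hValid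
  have hmv : ∀ i, (am i).2 = [(qs i, some ((am i).1), qs (i+1))] := fun i => (hqs i).1
  have htr : ∀ i, A'.Tr (qs i) ((am i).1) (qs (i+1)) := fun i => (hqs i).2
  have hio : ∀ N, ∃ m, N ≤ m ∧ qs m ∈ A'.F :=
    (flatAcc_singleton_iff
      (t := fun i => (qs i, some ((am i).1), qs (i+1))) hmv).mp hFA
  have hwL : (fun i => (am i).1) ∈ A'.toLTS.Lang := lang_intro A' qs _ hqs0 htr hio
  -- criterion evaluation
  have hcrit : ∀ i, (∃ t, ((am i).2).getLast? = some t ∧ advP A' t.2.2) ↔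
      advP A' (qs (i+1)) := by
    intro i
    rw [hmv i]
    simp
  -- KL applied along the play
  have hKLgen : ∀ r, (∀ i, i ≤ r → (am i).1 = true) → (am (r+1)).1 = true →
      ¬ advP A' (qs (r+1)) := by
    intro r hpre hnext hadv
    refine KL hn A' hcard hSub (qs (r+1)) (r+1) qs hqs0 rfl (fun i hi => ?_) hadv ?_
    · have h := htr i
      rwa [hpre i (by omega)] at h
    · refine ⟨fun m => qs (r+1+m), fun m => (am (r+1+m)).1, hnext, rfl,
        fun m => htr _, ?_⟩
      intro N
      obtain ⟨m, hm, hF⟩ := hio (N + (r+1))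
      refine ⟨m - (r+1), by omega, ?_⟩
      show qs (r+1+(m-(r+1))) ∈ A'.F
      rw [show r+1+(m-(r+1)) = m from by omega]
      exact hF
  -- case analysis on the shape of Adam's word
  rcases mkA_lang_shape (hSub hwL) with hall0 | ⟨k, hk, hktr0, hkfl0⟩
  · -- CASE : the word is a^ω
    have hall : ∀ i, (am i).1 = true := hall0
    set eSt : ℕ → Fin (2*n) := fun j => ⟨min j (2*n-2), by omega⟩ with heSt
    have hstepAll : ∀ i (e : Fin (2*n)), e.1 = min i (2*n-2) →
        stepF hn A' (some e) (am i) = some (eSt (i+1)) := by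
      intro i e he
      have hnoadv : ¬ advP A' (qs (i+1)) :=
        hKLgen i (fun j _ => hall j) (hall (i+1))
      by_cases hlt : e.1 < 2*n - 2
      · rw [stepF_true_lt hn A' _ _ (hall i) hlt]
        congr 1
        apply Fin.ext
        simp only [Fin.val_mk, heSt]
        omega
      · rw [stepF_true_stay hn A' _ _ (hall i) (by omega)
          (fun hc => hnoadv ((hcrit i).mp hc))]
        congr 1
        apply Fin.ext
        simp only [Fin.val_mk, heSt]
        omega
    have hES : ∀ i, estate hn A' (histL A' am i) = some (eSt (i+1)) := by
      intro i
      induction i with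
      | zero =>
        rw [estate_zero hn A' am]
        exact hstepAll 0 _ (by simp)
      | succ i ih =>
        rw [estate_succ hn A' am, ih]
        exact hstepAll (i+1) _ (by simp [heSt])
    have hmoveH : ∀ i, stratF hn A' (histL A' am i) =
        [(eSt i, some ((am i).1), eSt (i+1))] := by
      intro i
      cases i with
      | zero =>
        have h0 : estate hn A' (([]) : List (Bool × List (A'.Q × Option Bool × A'.Q))) =
            some (eSt 0) := by
          simp only [estate, List.foldl_nil]
          congr 1
        simp only [stratF, histL_last A' am 0, histL_dropLast_zero A' am, hES 0, h0]
      | succ i =>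
        simp only [stratF, histL_last A' am (i+1), histL_dropLast_succ A' am i,
          hES i, hES (i+1)]
    have hmove : ∀ i, stratF hn A' (List.ofFn fun j : Fin (i+1) => am j.1) =
        [(eSt i, some ((am i).1), eSt (i+1))] := hmoveH
    constructor
    · refine ⟨eSt, ?_, ?_⟩
      · apply Fin.ext
        show min 0 (2*n-2) = ((mkA n hn).init).1
        simp [mkA]
      · intro i
        simp only [hmove]
        refine ⟨⟨rfl, ⟨(am i).1, rfl, ?_⟩, rfl⟩, by simp [LTS.wordOf]⟩
        rw [hall i, mkA_tr_true]
        simp only [heSt, Fin.val_mk]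
        by_cases hlt : i < 2*n-2
        · left; omega
        · right; exact ⟨by omega, Or.inl (by omega)⟩
    · refine ⟨fun i => (eSt i, some ((am i).1), eSt (i+1)), ⟨id, rfl, ?_, ?_⟩, ?_⟩
      · intro i
        simp only [hmove]
        simp
      · intro i j hj
        have hj2 : j < (stratF hn A' (List.ofFn fun j : Fin (i+1) => am j.1)).length := hj
        rw [hmove i] at hj2
        simp only [List.length_singleton] at hj2
        have hj0 : j = 0 := by omega
        subst hj0
        show (eSt (i+0), some ((am (i+0)).1), eSt (i+0+1)) =
          (stratF hn A' (List.ofFn fun j : Fin (i+1) => am j.1)).get ⟨0, hj⟩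
        rw [List.get_of_eq (hmove i)]
        simp
      · intro N
        exact ⟨N, le_refl N, trivial⟩
  · -- CASE : the word is a^k b^ω with k ≥ 2n-1
    have hktr : ∀ i, i < k → (am i).1 = true := hktr0
    have hkfl : ∀ i, k ≤ i → (am i).1 = false := hkfl0
    have hadvk : advP A' (qs k) := by
      refine ⟨fun m => qs (k+m), rfl, fun m => ?_, ?_⟩
      · have h := htr (k+m)
        rwa [hkfl (k+m) (by omega)] at h
      · intro N
        obtain ⟨m, hm, hF⟩ := hio (N + k)
        refine ⟨m - k, by omega, ?_⟩
        show qs (k+(m-k)) ∈ A'.F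
        rw [show k+(m-k) = m from by omega]
        exact hF
    set eSt : ℕ → Fin (2*n) :=
      fun j => if j < k then ⟨min j (2*n-2), by omega⟩ else ⟨2*n-1, by omega⟩ with heSt
    have heStval : ∀ j, (eSt j).1 = if j < k then min j (2*n-2) else 2*n-1 := by
      intro j
      by_cases hj : j < k
      · simp only [heSt, if_pos hj, Fin.val_mk]
      · simp only [heSt, if_neg hj, Fin.val_mk]
    have hstepK : ∀ i (e : Fin (2*n)), e.1 = (if i < k then min i (2*n-2) else 2*n-1) →
        stepF hn A' (some e) (am i) = some (eSt (i+1)) := by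
      intro i e he
      rcases Nat.lt_or_ge (i+1) k with hik | hik
      · have hi : i < k := by omega
        rw [if_pos hi] at he
        have hnoadv : ¬ advP A' (qs (i+1)) :=
          hKLgen i (fun j hj => hktr j (by omega)) (hktr (i+1) hik)
        by_cases hlt : e.1 < 2*n - 2
        · rw [stepF_true_lt hn A' _ _ (hktr i hi) hlt]
          congr 1
          apply Fin.ext
          rw [heStval, if_pos hik]
          simp only [Fin.val_mk]
          omega
        · rw [stepF_true_stay hn A' _ _ (hktr i hi) (by omega)
            (fun hc => hnoadv ((hcrit i).mp hc))]
          congr 1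
          apply Fin.ext
          rw [heStval, if_pos hik]
          simp only [Fin.val_mk]
          omega
      rcases Nat.eq_or_lt_of_le hik with hik2 | hik2
      · -- i + 1 = k : commit round
        have hi : i < k := by omega
        rw [if_pos hi] at he
        have he' : e.1 = 2*n - 2 := by omega
        have hadv : advP A' (qs (i+1)) := by rw [← hik2]; exact hadvk
        rw [stepF_true_commit hn A' _ _ (hktr i hi) he' ((hcrit i).mpr hadv)]
        congr 1
        apply Fin.ext
        rw [heStval, if_neg (by omega : ¬ i + 1 < k)]
        try simp only [Fin.val_mk]
      · -- i ≥ k : b round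
        have hi : ¬ i < k := by omega
        rw [if_neg hi] at he
        rw [stepF_false_y hn A' _ _ (hkfl i (by omega)) he]
        congr 1
        apply Fin.ext
        rw [heStval, if_neg (by omega : ¬ i + 1 < k)]
        try simp only [Fin.val_mk]
    have hES : ∀ i, estate hn A' (histL A' am i) = some (eSt (i+1)) := by
      intro i
      induction i with
      | zero =>
        rw [estate_zero hn A' am]
        refine hstepK 0 _ ?_
        rw [if_pos (by omega : 0 < k)]
        simp
      | succ i ih =>
        rw [estate_succ hn A' am, ih]
        exact hstepK (i+1) _ (heStval (i+1))
    have hmoveH : ∀ i, stratF hn A' (histL A' am i) =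
        [(eSt i, some ((am i).1), eSt (i+1))] := by
      intro i
      cases i with
      | zero =>
        have h0 : estate hn A' (([]) : List (Bool × List (A'.Q × Option Bool × A'.Q))) =
            some (eSt 0) := by
          simp only [estate, List.foldl_nil]
          congr 1
          apply Fin.ext
          rw [heStval, if_pos (by omega : 0 < k)]
          simp
        simp only [stratF, histL_last A' am 0, histL_dropLast_zero A' am, hES 0, h0]
      | succ i =>
        simp only [stratF, histL_last A' am (i+1), histL_dropLast_succ A' am i,
          hES i, hES (i+1)]
    have hmove : ∀ i, stratF hn A' (List.ofFn fun j : Fin (i+1) => am j.1) =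
        [(eSt i, some ((am i).1), eSt (i+1))] := hmoveH
    constructor
    · refine ⟨eSt, ?_, ?_⟩
      · apply Fin.ext
        rw [heStval, if_pos (by omega : 0 < k)]
        show min 0 (2*n-2) = ((mkA n hn).init).1
        simp [mkA]
      · intro i
        simp only [hmove]
        refine ⟨⟨rfl, ⟨(am i).1, rfl, ?_⟩, rfl⟩, by simp [LTS.wordOf]⟩
        rcases Nat.lt_or_ge (i+1) k with hik | hik
        · rw [hktr i (by omega), mkA_tr_true]
          rw [heStval, heStval, if_pos (by omega : i < k), if_pos hik]
          by_cases hlt : i < 2*n-2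
          · left; omega
          · right; exact ⟨by omega, Or.inl (by omega)⟩
        rcases Nat.eq_or_lt_of_le hik with hik2 | hik2
        · rw [hktr i (by omega), mkA_tr_true]
          rw [heStval, heStval, if_pos (by omega : i < k), if_neg (by omega : ¬ i+1 < k)]
          right
          exact ⟨by omega, Or.inr (by omega)⟩
        · rw [hkfl i (by omega), mkA_tr_false]
          rw [heStval, heStval, if_neg (by omega : ¬ i < k), if_neg (by omega : ¬ i+1 < k)]
          exact ⟨rfl, rfl⟩
    · refine ⟨fun i => (eSt i, some ((am i).1), eSt (i+1)), ⟨id, rfl, ?_, ?_⟩, ?_⟩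
      · intro i
        simp only [hmove]
        simp
      · intro i j hj
        have hj2 : j < (stratF hn A' (List.ofFn fun j : Fin (i+1) => am j.1)).length := hj
        rw [hmove i] at hj2
        simp only [List.length_singleton] at hj2
        have hj0 : j = 0 := by omega
        subst hj0
        show (eSt (i+0), some ((am (i+0)).1), eSt (i+0+1)) =
          (stratF hn A' (List.ofFn fun j : Fin (i+1) => am j.1)).get ⟨0, hj⟩
        rw [List.get_of_eq (hmove i)]
        simp
      · intro N
        exact ⟨N, le_refl N, trivial⟩

end Main

end GNHD
/-- For every `n ≥ 1` there is a Büchi automaton over `{a, b}` (here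
`Bool`) with at most `2n` states that is guidable with respect to the class of Büchi
automata over `{a, b}` with at most `2n` states, but is not history-deterministic; hence
history-determinism and guidability are distinct for this class. -/
theorem buchi_bounded_states_guidable_not_hd (n : ℕ) (hn : 1 ≤ n) :
    ∃ A : Buchi Bool, Finite A.Q ∧ Nat.card A.Q ≤ 2 * n ∧
      A.toLTS.Guidable
        {L | ∃ A' : Buchi Bool, Finite A'.Q ∧ Nat.card A'.Q ≤ 2 * n ∧ A'.toLTS = L} ∧
      ¬ A.toLTS.HD := by
  have hn' : 0 < n := hn
  refine ⟨GNHD.mkA n hn', ?_, ?_, ?_, GNHD.mkA_not_HD n hn'⟩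
  · show Finite (Fin (2*n))
    infer_instance
  · show Nat.card (Fin (2*n)) ≤ 2*n
    simp [Nat.card_eq_fintype_card]
  · intro B hB hsub
    obtain ⟨A', hfin, hcard, hEq⟩ := hB
    subst hEq
    haveI := hfin
    exact GNHD.mkA_simulates hn' A' hcard hsub
end

section
/- For every k ≥ 1, there exists a timed automaton T over finite timed words with exactly k clocks such that T is guidable with respect to the class T_k of timed automata over finite timed words with at most k clocks, but T is not history-deterministic. Hence history-determinism and guidability are distinct notions for T_k. -/
open scoped NNReal

namespace TimedAut

variable {Al : Type}

/-- The initial configuration: initial state, all clocks at `0`. -/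
def initCfg (M : TimedAut Al) : M.Q × (M.Cl → ℝ≥0) := (M.init, fun _ => 0)

/-- A run of `M` on a finite timed word, from configuration `s` to configuration `s'`. -/
def RunFin (M : TimedAut Al) :
    (M.Q × (M.Cl → ℝ≥0)) → List (Al × ℝ≥0) → (M.Q × (M.Cl → ℝ≥0)) → Prop
  | s, [], s' => s = s'
  | s, a :: w, s'' => ∃ s', M.Step s a s' ∧ RunFin M s' w s''

/-- The language of finite timed words of `M`: those on which some run from the initial
configuration ends in an accepting state. -/
def LangFin (M : TimedAut Al) : Set (List (Al × ℝ≥0)) :=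
  { w | ∃ s, M.RunFin M.initCfg w s ∧ s.1 ∈ M.F }

/-- `M` is history-deterministic over finite timed words: Eve has a strategy in the letter
game (resolving the nondeterminism based only on the timed letters played so far, moving
along transitions of `M` from the initial configuration) such that at every finite stage
of every play, if the timed word played so far is in `L(M)`, then the state of Eve's
current configuration is accepting. -/
def HDFin (M : TimedAut Al) : Prop :=
  ∃ st : List (Al × ℝ≥0) → Option (M.Q × (M.Cl → ℝ≥0)),
    st [] = some M.initCfg ∧
    (∀ w a s', st (w ++ [a]) = some s' → ∃ s, st w = some s ∧ M.Step s a s') ∧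
    ∀ w ∈ M.LangFin, ∃ s, st w = some s ∧ s.1 ∈ M.F

/-- A history of Adam's moves (timed letters paired with Adam's resulting configurations)
is a valid play of Adam in `M'` from the configuration `s`. -/
def ValidFrom (M' : TimedAut Al) :
    (M'.Q × (M'.Cl → ℝ≥0)) → List ((Al × ℝ≥0) × (M'.Q × (M'.Cl → ℝ≥0))) → Prop
  | _, [] => True
  | s, (a, s') :: h => M'.Step s a s' ∧ ValidFrom M' s' h

/-- The configuration reached at the end of a history starting at `s`. -/
def endCfg (M' : TimedAut Al) :
    (M'.Q × (M'.Cl → ℝ≥0)) → List ((Al × ℝ≥0) × (M'.Q × (M'.Cl → ℝ≥0))) →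
      (M'.Q × (M'.Cl → ℝ≥0))
  | s, [] => s
  | _, (_, s') :: h => endCfg M' s' h

/-- `M` simulates `M'` over finite timed words: Eve has a strategy (reacting to Adam's
timed letters and transitions in `M'`, moving along transitions of `M` from the initial
configuration) such that at every finite stage of every play, Eve has a configuration,
and if the state of Adam's current configuration is accepting in `M'`, then the state of
Eve's current configuration is accepting in `M`. -/
def SimFin (M M' : TimedAut Al) : Prop :=
  ∃ st : List ((Al × ℝ≥0) × (M'.Q × (M'.Cl → ℝ≥0))) → Option (M.Q × (M.Cl → ℝ≥0)),
    st [] = some M.initCfg ∧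
    (∀ h x s', st (h ++ [x]) = some s' → ∃ s, st h = some s ∧ M.Step s x.1 s') ∧
    ∀ h, M'.ValidFrom M'.initCfg h →
      ∃ s, st h = some s ∧ ((M'.endCfg M'.initCfg h).1 ∈ M'.F → s.1 ∈ M.F)

end TimedAut

namespace Proof

open TimedAut

/-! ### Generic list / run lemmas -/

def total (w : List (Unit × ℝ≥0)) : ℝ≥0 := (w.map Prod.snd).sum

lemma total_append (w : List (Unit × ℝ≥0)) (x : Unit × ℝ≥0) :
    total (w ++ [x]) = total w + x.2 := by
  simp [total]

lemma total_app2 (u v : List (Unit × ℝ≥0)) : total (u ++ v) = total u + total v := by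
  simp [total]

lemma total_take_le (w : List (Unit × ℝ≥0)) (j : ℕ) : total (w.take j) ≤ total w := by
  conv_rhs => rw [← List.take_append_drop j w]
  rw [total_app2]
  exact le_self_add

lemma total_take_mono (w : List (Unit × ℝ≥0)) {i j : ℕ} (h : i ≤ j) :
    total (w.take i) ≤ total (w.take j) := by
  have : w.take i = (w.take j).take i := by
    rw [List.take_take, min_eq_left h]
  rw [this]
  exact total_take_le _ _

def tms0 (w : List (Unit × ℝ≥0)) : Set ℝ≥0 := {τ | ∃ j ≤ w.length, τ = total (w.take j)}

lemma tms0_finite (w : List (Unit × ℝ≥0)) : (tms0 w).Finite := by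
  apply Set.Finite.subset ((Set.finite_Iic w.length).image (fun j => total (w.take j)))
  rintro τ ⟨j, hj, rfl⟩
  exact ⟨j, hj, rfl⟩

lemma tms0_zero (w : List (Unit × ℝ≥0)) : 0 ∈ tms0 w :=
  ⟨0, Nat.zero_le _, by simp [total]⟩

lemma tms0_le (w : List (Unit × ℝ≥0)) {τ : ℝ≥0} (h : τ ∈ tms0 w) : τ ≤ total w := by
  obtain ⟨j, hj, rfl⟩ := h; exact total_take_le _ _

lemma tms0_mono_append (w : List (Unit × ℝ≥0)) (x : Unit × ℝ≥0) {τ : ℝ≥0}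
    (h : τ ∈ tms0 w) : τ ∈ tms0 (w ++ [x]) := by
  obtain ⟨j, hj, rfl⟩ := h
  exact ⟨j, by simpa using le_trans hj (by simp), by
    rw [List.take_append_of_le_length hj]⟩

lemma tms0_last (w : List (Unit × ℝ≥0)) (x : Unit × ℝ≥0) :
    total (w ++ [x]) ∈ tms0 (w ++ [x]) :=
  ⟨(w ++ [x]).length, le_refl _, by rw [List.take_length]⟩

lemma tms0_append_elim (w : List (Unit × ℝ≥0)) (x : Unit × ℝ≥0) {τ : ℝ≥0}
    (h : τ ∈ tms0 (w ++ [x])) : τ ∈ tms0 w ∨ τ = total (w ++ [x]) := by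
  obtain ⟨j, hj, rfl⟩ := h
  rcases Nat.lt_or_ge j (w.length + 1) with hlt | hge
  · have hj' : j ≤ w.length := Nat.lt_succ_iff.mp hlt
    left; exact ⟨j, hj', by rw [List.take_append_of_le_length hj']⟩
  · right
    have : (w ++ [x]).length ≤ j := by simpa using hge
    rw [List.take_of_length_le this]

lemma run_snoc {Al : Type} (M : TimedAut Al) (s s'' : M.Q × (M.Cl → ℝ≥0))
    (w : List (Al × ℝ≥0)) (a : Al × ℝ≥0) :
    M.RunFin s (w ++ [a]) s'' ↔ ∃ s', M.RunFin s w s' ∧ M.Step s' a s'' := by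
  induction w generalizing s with
  | nil =>
    constructor
    · rintro ⟨s', hst, h⟩
      exact ⟨s, rfl, by rwa [show s'' = s' from (h : RunFin M s' [] s'').symm] ⟩
    · rintro ⟨s', (rfl : s = s'), hst⟩
      exact ⟨s'', hst, rfl⟩
  | cons b w ih =>
    constructor
    · rintro ⟨s₁, hst, h⟩
      obtain ⟨s', hrun, hstep⟩ := (ih s₁).mp h
      exact ⟨s', ⟨s₁, hst, hrun⟩, hstep⟩
    · rintro ⟨s', ⟨s₁, hst, hrun⟩, hstep⟩
      exact ⟨s₁, hst, (ih s₁).mpr ⟨s', hrun, hstep⟩⟩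

lemma validFrom_append {Al : Type} (M' : TimedAut Al) (s : M'.Q × (M'.Cl → ℝ≥0))
    (h : List ((Al × ℝ≥0) × (M'.Q × (M'.Cl → ℝ≥0)))) (x) :
    M'.ValidFrom s (h ++ [x]) ↔ M'.ValidFrom s h ∧ M'.Step (M'.endCfg s h) x.1 x.2 := by
  induction h generalizing s with
  | nil => simp [ValidFrom, endCfg]
  | cons y t ih =>
    obtain ⟨a, s'⟩ := y
    simp only [List.cons_append, ValidFrom, endCfg, List.append_eq, ih, and_assoc]

lemma endCfg_append {Al : Type} (M' : TimedAut Al) (s : M'.Q × (M'.Cl → ℝ≥0))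
    (h : List ((Al × ℝ≥0) × (M'.Q × (M'.Cl → ℝ≥0)))) (x) :
    M'.endCfg s (h ++ [x]) = x.2 := by
  induction h generalizing s with
  | nil => simp [endCfg]
  | cons y t ih => obtain ⟨a, s'⟩ := y; simpa [endCfg] using ih _

lemma validRun {Al : Type} (M' : TimedAut Al) (s : M'.Q × (M'.Cl → ℝ≥0))
    (h : List ((Al × ℝ≥0) × (M'.Q × (M'.Cl → ℝ≥0)))) (hv : M'.ValidFrom s h) :
    M'.RunFin s (h.map Prod.fst) (M'.endCfg s h) := by
  induction h generalizing s with
  | nil => rfl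
  | cons y t ih =>
    obtain ⟨a, s'⟩ := y
    obtain ⟨hst, hv'⟩ := hv
    exact ⟨s', hst, ih s' hv'⟩


/-! ### The automaton `Mk` -/

def andList {Cl : Type} : List (Guard Cl) → Guard Cl
  | [] => .tt
  | g :: l => .and g (andList l)

lemma sat_andList {Cl : Type} (l : List (Guard Cl)) (ν : Cl → ℝ≥0) :
    (andList l).sat ν ↔ ∀ g ∈ l, g.sat ν := by
  induction l with
  | nil => simp [andList, Guard.sat]
  | cons g l ih => simp [andList, Guard.sat, ih]

noncomputable def guardKeep {k : ℕ} (X : Finset (Fin k)) : Guard (Fin k) :=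
  andList (((Finset.univ \ X).toList).map fun c => Guard.cmp c .lt 1)

lemma sat_guardKeep {k : ℕ} (X : Finset (Fin k)) (ν : Fin k → ℝ≥0) :
    (guardKeep X).sat ν ↔ ∀ c ∉ X, ν c < 1 := by
  unfold guardKeep
  rw [sat_andList]
  constructor
  · intro h c hc
    have := h (Guard.cmp c .lt 1)
      (by simp only [List.mem_map, Finset.mem_toList, Finset.mem_sdiff]
          exact ⟨c, ⟨Finset.mem_univ c, hc⟩, rfl⟩)
    simpa [Guard.sat, CmpOp.holds] using this
  · rintro h g hg
    simp only [List.mem_map, Finset.mem_toList, Finset.mem_sdiff] at hg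
    obtain ⟨c, ⟨-, hc⟩, rfl⟩ := hg
    simpa [Guard.sat, CmpOp.holds] using h c hc

noncomputable abbrev Mk (k : ℕ) : TimedAut Unit where
  Q := Bool
  Cl := Fin k
  init := false
  Δ := (Set.range fun p : Bool × Finset (Fin k) =>
          (p.1, guardKeep p.2, (), (↑p.2 : Set (Fin k)), false))
       ∪ ((fun p : (Bool × Finset (Fin k)) × Fin k =>
            (p.1.1, Guard.and (Guard.cmp p.2 .eq 1) (guardKeep p.1.2), (),
              (↑p.1.2 : Set (Fin k)), true)) '' {p | p.2 ∈ p.1.2})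
  F := {true}

lemma memΔ₁ {k : ℕ} (q : Bool) (X : Finset (Fin k)) :
    (q, guardKeep X, (), (↑X : Set (Fin k)), false) ∈ (Mk k).Δ :=
  Or.inl ⟨(q, X), rfl⟩

lemma memΔ₂ {k : ℕ} (q : Bool) (X : Finset (Fin k)) (c : Fin k) (hc : c ∈ X) :
    (q, Guard.and (Guard.cmp c .eq 1) (guardKeep X), (), (↑X : Set (Fin k)), true)
      ∈ (Mk k).Δ :=
  Or.inr ⟨((q, X), c), hc, rfl⟩

lemma Δ_elim {k : ℕ} {t} (ht : t ∈ (Mk k).Δ) :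
    (∃ q X, t = (q, guardKeep X, (), (↑X : Set (Fin k)), false)) ∨
    (∃ q X c, c ∈ X ∧
      t = (q, Guard.and (Guard.cmp c .eq 1) (guardKeep X), (), (↑X : Set (Fin k)), true)) := by
  rcases ht with ⟨p, rfl⟩ | ⟨p, hp, rfl⟩
  · exact Or.inl ⟨p.1, p.2, rfl⟩
  · exact Or.inr ⟨p.1.1, p.1.2, p.2, hp, rfl⟩

lemma Mk_WF (k : ℕ) : (Mk k).WF := by
  refine ⟨inferInstanceAs (Finite Bool), inferInstanceAs (Finite (Fin k)), ?_⟩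
  apply Set.Finite.union
  · exact Set.finite_range _
  · exact Set.Finite.image _ (Set.toFinite _)

/-- Clock-value invariant along runs of `Mk k`. -/
lemma runInv {k : ℕ} (w : List (Unit × ℝ≥0)) (s : Bool × (Fin k → ℝ≥0))
    (hrun : (Mk k).RunFin (Mk k).initCfg w s) :
    ∀ c, (∃ τ ∈ tms0 w, s.2 c + τ = total w) ∧ s.2 c < 1 := by
  induction w using List.reverseRecOn generalizing s with
  | nil =>
    have h0 : (Mk k).initCfg = s := hrun
    subst h0
    intro c
    exact ⟨⟨0, tms0_zero _, by simp [TimedAut.initCfg, total]⟩, by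
      simp [TimedAut.initCfg]⟩
  | append_singleton w x ih =>
    obtain ⟨s', hrun', hstep⟩ := (run_snoc _ _ _ _ _).mp hrun
    obtain ⟨g, X, htr, hg, hres, hkeep⟩ := hstep
    obtain ⟨Xf, hXeq, hlt⟩ : ∃ Xf : Finset (Fin k), X = (↑Xf : Set (Fin k)) ∧
        ∀ c' ∉ Xf, s'.2 c' + x.2 < 1 := by
      rcases Δ_elim htr with ⟨q, Xf, he⟩ | ⟨q, Xf, c₀, hc₀, he⟩ <;>
        simp only [Prod.mk.injEq] at he
      · obtain ⟨-, hgeq, -, hXeq, -⟩ := he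
        exact ⟨Xf, hXeq, fun c' hc' => (sat_guardKeep Xf _).mp (hgeq ▸ hg) c' hc'⟩
      · obtain ⟨-, hgeq, -, hXeq, -⟩ := he
        exact ⟨Xf, hXeq, fun c' hc' => (sat_guardKeep Xf _).mp (hgeq ▸ hg).2 c' hc'⟩
    subst hXeq
    intro c
    by_cases hc : c ∈ Xf
    · have h0 : s.2 c = 0 := hres c hc
      refine ⟨⟨total (w ++ [x]), tms0_last w x, by rw [h0, zero_add]⟩, ?_⟩
      rw [h0]; exact zero_lt_one
    · have hv : s.2 c = s'.2 c + x.2 := hkeep c hc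
      obtain ⟨⟨τ, hτ, heq⟩, -⟩ := ih s' hrun' c
      refine ⟨⟨τ, tms0_mono_append w x hτ, ?_⟩, by rw [hv]; exact hlt c hc⟩
      rw [hv, total_append, add_right_comm, heq]

/-- Language upper bound: every accepted word decomposes with a witness. -/
lemma langA {k : ℕ} (w : List (Unit × ℝ≥0)) (hw : w ∈ (Mk k).LangFin) :
    ∃ w' x, w = w' ++ [x] ∧ ∃ τ ∈ tms0 w', total w = τ + 1 ∧ total w' < τ + 1 := by
  obtain ⟨s, hrun, hF⟩ := hw
  have hs1 : s.1 = true := hF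
  induction w using List.reverseRecOn with
  | nil =>
    have h0 : (Mk k).initCfg = s := hrun
    rw [← h0] at hs1
    simp [TimedAut.initCfg, Mk] at hs1
  | append_singleton w x _ =>
    obtain ⟨s', hrun', hstep⟩ := (run_snoc _ _ _ _ _).mp hrun
    obtain ⟨g, X, htr, hg, hres, hkeep⟩ := hstep
    rcases Δ_elim htr with ⟨q, Xf, he⟩ | ⟨q, Xf, c₀, hc₀, he⟩ <;>
      simp only [Prod.mk.injEq] at he
    · exact absurd (he.2.2.2.2 ▸ hs1) (by simp)
    · obtain ⟨-, hgeq, -, hXeq, -⟩ := he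
      have hsat := hgeq ▸ hg
      have h1 : s'.2 c₀ + x.2 = 1 := by
        have := hsat.1
        simpa [Guard.sat, CmpOp.holds] using this
      obtain ⟨⟨τ, hτ, heq⟩, hlt1⟩ := runInv w s' hrun' c₀
      refine ⟨w, x, rfl, τ, hτ, ?_, ?_⟩
      · rw [total_append, ← heq, add_right_comm, h1, add_comm]
      · calc total w = s'.2 c₀ + τ := heq.symm
          _ < 1 + τ := by exact add_lt_add_left hlt1 τ
          _ = τ + 1 := add_comm _ _

/-- Constructive membership: a run keeping the anchor `total (w'.take j)`. -/
lemma runB {k : ℕ} (hk : 1 ≤ k) (w' : List (Unit × ℝ≥0)) (j : ℕ)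
    (hvia : total w' < total (w'.take j) + 1) :
    ∀ m, m ≤ w'.length →
      (Mk k).RunFin (Mk k).initCfg (w'.take m)
        (false, fun _ => total (w'.take m) - total (w'.take j)) := by
  intro m
  induction m with
  | zero =>
    intro _
    show (Mk k).initCfg = _
    simp only [List.take_zero]
    refine Prod.ext rfl ?_
    funext c
    simp [TimedAut.initCfg, total, zero_tsub]
  | succ m ih =>
    intro hm1
    have hm : m ≤ w'.length := Nat.le_of_succ_le hm1
    have hmlt : m < w'.length := hm1
    have htk : w'.take (m+1) = w'.take m ++ [w'[m]] := by
      rw [List.take_succ]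
      simp [List.getElem?_eq_getElem hmlt]
    set d : ℝ≥0 := (w'[m]).2 with hd
    have htot : total (w'.take (m+1)) = total (w'.take m) + d := by
      rw [htk, total_append]
    rw [htk]
    refine (run_snoc _ _ _ _ _).mpr ⟨_, ih hm, ?_⟩
    by_cases hmj : m + 1 ≤ j
    · -- reset all clocks
      refine ⟨guardKeep Finset.univ, (↑(Finset.univ : Finset (Fin k)) : Set (Fin k)),
        memΔ₁ false Finset.univ, ?_, ?_, ?_⟩
      · rw [sat_guardKeep]; intro c hc; exact absurd (Finset.mem_univ c) hc
      · intro c _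
        show total (w'.take m ++ [w'[m]]) - total (w'.take j) = 0
        rw [← htk]
        exact tsub_eq_zero_of_le (total_take_mono w' hmj)
      · intro c hc; exact absurd (by simp) hc
    · -- keep all clocks
      push_neg at hmj
      have hjm : j ≤ m := Nat.lt_succ_iff.mp hmj
      have hle : total (w'.take j) ≤ total (w'.take m) := total_take_mono w' hjm
      have hval : (total (w'.take m) - total (w'.take j)) + d
          = total (w'.take (m+1)) - total (w'.take j) := by
        rw [tsub_add_eq_add_tsub hle, ← htot]
      have hlt : total (w'.take (m+1)) - total (w'.take j) < 1 := by
        rw [tsub_lt_iff_left (le_trans hle (by rw [htot]; exact le_self_add))]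
        calc total (w'.take (m+1)) ≤ total w' := total_take_le _ _
          _ < total (w'.take j) + 1 := hvia
      refine ⟨guardKeep (∅ : Finset (Fin k)), (↑(∅ : Finset (Fin k)) : Set (Fin k)),
        memΔ₁ false ∅, ?_, ?_, ?_⟩
      · rw [sat_guardKeep]
        intro c _
        show (total (w'.take m) - total (w'.take j)) + d < 1
        rw [hval]; exact hlt
      · intro c hc; exact absurd hc (by simp)
      · intro c _
        show total (w'.take m ++ [w'[m]]) - total (w'.take j)
            = (total (w'.take m) - total (w'.take j)) + w'[m].2
        rw [← htk, ← hd, ← hval]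

/-- Constructive membership in the language. -/
lemma mem_lang {k : ℕ} (hk : 1 ≤ k) (w' : List (Unit × ℝ≥0)) (x : Unit × ℝ≥0) (j : ℕ)
    (hj : j ≤ w'.length)
    (htot : total (w' ++ [x]) = total (w'.take j) + 1)
    (hvia : total w' < total (w'.take j) + 1) :
    (w' ++ [x]) ∈ (Mk k).LangFin := by
  have hrun := runB hk w' j hvia w'.length (le_refl _)
  rw [List.take_length] at hrun
  set τ := total (w'.take j) with hτ
  have hτle : τ ≤ total w' := total_take_le _ _
  have c₀ : Fin k := ⟨0, hk⟩
  refine ⟨(true, fun _ => 0), (run_snoc _ _ _ _ _).mpr ⟨_, hrun, ?_⟩, rfl⟩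
  refine ⟨Guard.and (Guard.cmp c₀ .eq 1) (guardKeep Finset.univ),
    (↑(Finset.univ : Finset (Fin k)) : Set (Fin k)),
    memΔ₂ false Finset.univ c₀ (Finset.mem_univ _), ?_, ?_, ?_⟩
  · constructor
    · show (total w' - τ) + x.2 = ((1:ℕ) : ℝ≥0)
      rw [tsub_add_eq_add_tsub hτle, ← total_append, htot]
      simp
    · rw [sat_guardKeep]; intro c hc; exact absurd (Finset.mem_univ c) hc
  · intro c _; rfl
  · intro c hc; exact absurd (by simp) hc

lemma hd_run {k : ℕ} (st : List (Unit × ℝ≥0) → Option (Bool × (Fin k → ℝ≥0)))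
    (h0 : st [] = some (Mk k).initCfg)
    (hstep : ∀ w a s', st (w ++ [a]) = some s' →
      ∃ s, st w = some s ∧ (Mk k).Step s a s') :
    ∀ w s, st w = some s → (Mk k).RunFin (Mk k).initCfg w s := by
  intro w
  induction w using List.reverseRecOn with
  | nil =>
    intro s hs
    rw [h0] at hs
    exact (Option.some_inj.mp hs : _ = s)
  | append_singleton w a ih =>
    intro s hs
    obtain ⟨s₀, hs₀, hstp⟩ := hstep w a s hs
    exact (run_snoc _ _ _ _ _).mpr ⟨s₀, ih s₀ hs₀, hstp⟩

lemma Mk_not_HD (k : ℕ) (hk : 1 ≤ k) : ¬ (Mk k).HDFin := by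
  rintro ⟨st, h0, hstep, hacc⟩
  classical
  set δ : ℝ≥0 := ((2 * (k + 2) : ℕ) : ℝ≥0)⁻¹ with hδdef
  have hδpos : 0 < δ := by
    rw [hδdef]
    exact inv_pos.mpr (by exact_mod_cast Nat.pos_of_ne_zero (by omega))
  have hδne : δ ≠ 0 := ne_of_gt hδpos
  have hδk : ((k + 1 : ℕ) : ℝ≥0) * δ < 1 := by
    rw [hδdef, ← div_eq_mul_inv,
      div_lt_one (by exact_mod_cast Nat.pos_of_ne_zero (by omega) : (0:ℝ≥0) < _)]
    exact_mod_cast (by omega : k + 1 < 2 * (k + 2))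
  have hcast : ∀ r : ℕ, r ≤ k + 1 → ((r : ℕ) : ℝ≥0) * δ < 1 := by
    intro r hr
    exact lt_of_le_of_lt (mul_le_mul_left (by exact_mod_cast hr) δ) hδk
  set base : List (Unit × ℝ≥0) := List.replicate (k+1) (((), δ)) with hbase
  have hlen : base.length = k + 1 := by simp [hbase]
  have htb : ∀ j, j ≤ k + 1 → total (base.take j) = (j : ℝ≥0) * δ := by
    intro j hj
    rw [hbase, List.take_replicate, min_eq_left hj]
    simp [total, List.map_replicate, List.sum_replicate, nsmul_eq_mul]
  have htotb : total base = ((k + 1 : ℕ) : ℝ≥0) * δ := by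
    have h := htb (k+1) le_rfl
    rwa [List.take_of_length_le (le_of_eq hlen)] at h
  have memW : ∀ i, i ≤ k + 1 →
      (base ++ [((), (1 : ℝ≥0) - ((k + 1 - i : ℕ) : ℝ≥0) * δ)]) ∈ (Mk k).LangFin := by
    intro i hik
    have hrle : ((k + 1 - i : ℕ) : ℝ≥0) * δ ≤ 1 := le_of_lt (hcast _ (by omega))
    have hsplit : ((k + 1 : ℕ) : ℝ≥0) * δ
        = ((i : ℕ) : ℝ≥0) * δ + ((k + 1 - i : ℕ) : ℝ≥0) * δ := by
      have hir : (i + (k + 1 - i) : ℕ) = k + 1 := by omega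
      conv_lhs => rw [← hir]
      rw [Nat.cast_add, add_mul]
    refine mem_lang hk base _ i (by rw [hlen]; exact hik) ?_ ?_
    · rw [total_append, htotb, htb i hik, hsplit, add_assoc,
        add_tsub_cancel_of_le hrle]
    · rw [htotb, htb i hik, hsplit]
      exact add_lt_add_right (hcast _ (by omega)) _
  cases hsb : st base with
  | none =>
    obtain ⟨s, hsW, -⟩ := hacc _ (memW (k+1) le_rfl)
    obtain ⟨s₀, hs₀, -⟩ := hstep base _ s hsW
    rw [hsb] at hs₀
    exact Option.noConfusion rfl (heq_of_eq hs₀)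
  | some sE =>
    have hrun := hd_run st h0 hstep base sE hsb
    have hcov : ∀ c : Fin k, ∃ j, j ≤ k + 1 ∧
        sE.2 c + (j : ℝ≥0) * δ = ((k+1:ℕ) : ℝ≥0) * δ := by
      intro c
      obtain ⟨⟨τ, ⟨j, hj, rfl⟩, heq⟩, -⟩ := runInv base sE hrun c
      have hj' : j ≤ k + 1 := by rwa [hlen] at hj
      exact ⟨j, hj', by rw [← htb j hj', ← htotb]; exact heq⟩
    choose jf hjle hjeq using hcov
    obtain ⟨i, hi, hinot⟩ : ∃ i ∈ Finset.range (k + 2), i ∉ Finset.univ.image jf := by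
      by_contra hcon
      push_neg at hcon
      have hsub : Finset.range (k + 2) ⊆ Finset.univ.image jf := fun i hi => hcon i hi
      have h1 : k + 2 ≤ (Finset.univ.image jf).card := by
        simpa using Finset.card_le_card hsub
      have h2 : (Finset.univ.image jf).card ≤ k := by
        refine le_trans (Finset.card_image_le) ?_
        simp
      omega
    have hik : i ≤ k + 1 := by
      have := Finset.mem_range.mp hi
      omega
    have hrle : ((k + 1 - i : ℕ) : ℝ≥0) * δ ≤ 1 := le_of_lt (hcast _ (by omega))
    obtain ⟨s, hsW, hsF⟩ := hacc _ (memW i hik)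
    obtain ⟨s₀, hs₀, hstp⟩ := hstep base _ s hsW
    rw [hsb] at hs₀
    have hsE : sE = s₀ := Option.some_inj.mp hs₀
    obtain ⟨g, X, htr, hg, -, -⟩ := hstp
    have hs1 : s.1 = true := hsF
    rcases Δ_elim htr with ⟨q, Xf, he⟩ | ⟨q, Xf, c₀, hc₀, he⟩ <;>
      simp only [Prod.mk.injEq] at he
    · exact absurd (he.2.2.2.2 ▸ hs1) (by simp)
    · obtain ⟨-, hgeq, -, -, -⟩ := he
      have h1 : s₀.2 c₀ + ((1 : ℝ≥0) - ((k + 1 - i : ℕ) : ℝ≥0) * δ) = ((1:ℕ) : ℝ≥0) :=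
        (hgeq ▸ hg).1
      rw [Nat.cast_one] at h1
      have hsplit : ((k + 1 : ℕ) : ℝ≥0) * δ
          = ((i : ℕ) : ℝ≥0) * δ + ((k + 1 - i : ℕ) : ℝ≥0) * δ := by
        have hir : (i + (k + 1 - i) : ℕ) = k + 1 := by omega
        conv_lhs => rw [← hir]
        rw [Nat.cast_add, add_mul]
      have h2 : s₀.2 c₀ = ((k + 1 - i : ℕ) : ℝ≥0) * δ := by
        have h3 : s₀.2 c₀ + (((1 : ℝ≥0) - ((k + 1 - i : ℕ) : ℝ≥0) * δ)
            + ((k + 1 - i : ℕ) : ℝ≥0) * δ) = 1 + ((k + 1 - i : ℕ) : ℝ≥0) * δ := by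
          rw [← add_assoc, h1]
        rw [tsub_add_cancel_of_le hrle, add_comm (s₀.2 c₀) 1] at h3
        exact add_left_cancel h3
      have h4 : s₀.2 c₀ + ((jf c₀ : ℕ) : ℝ≥0) * δ = ((k + 1 : ℕ) : ℝ≥0) * δ := by
        rw [← hsE]; exact hjeq c₀
      rw [h2, hsplit, add_comm (((i:ℕ):ℝ≥0) * δ)] at h4
      have h5 : ((k + 1 - i + jf c₀ : ℕ) : ℝ≥0) * δ
          = ((k + 1 - i + i : ℕ) : ℝ≥0) * δ := by
        rw [Nat.cast_add, Nat.cast_add, add_mul, add_mul]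
        exact h4
      have h6 : k + 1 - i + jf c₀ = k + 1 - i + i := by
        exact_mod_cast mul_right_cancel₀ hδne h5
      exact hinot (Finset.mem_image.mpr ⟨c₀, Finset.mem_univ _, by omega⟩)

/-! ### Stability of guards away from integer points -/

lemma guard_stable {Cl : Type} (g : Guard Cl) (ν : Cl → ℝ≥0) (d : ℝ≥0)
    (hno : ∀ (c : Cl) (n : ℕ), ν c + d ≠ (n : ℝ≥0)) :
    ∃ ε : ℝ≥0, 0 < ε ∧ ∀ d', d ≤ d' → d' < d + ε →
      (Guard.sat g (fun c => ν c + d') ↔ Guard.sat g (fun c => ν c + d)) := by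
  induction g with
  | tt => exact ⟨1, one_pos, fun _ _ _ => Iff.rfl⟩
  | cmp c op n =>
    rcases lt_or_gt_of_ne (hno c n) with hlt | hgt
    · refine ⟨(n : ℝ≥0) - (ν c + d), tsub_pos_of_lt hlt, ?_⟩
      intro d' h1 h2
      have hub : ν c + d' < n :=
        calc ν c + d' < ν c + (d + ((n : ℝ≥0) - (ν c + d))) := add_lt_add_right h2 _
          _ = (ν c + d) + ((n : ℝ≥0) - (ν c + d)) := by rw [add_assoc]
          _ = n := add_tsub_cancel_of_le (le_of_lt hlt)
      cases op <;> simp only [Guard.sat, CmpOp.holds]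
      · exact iff_of_true hub hlt
      · exact iff_of_true (le_of_lt hub) (le_of_lt hlt)
      · exact iff_of_false (ne_of_lt hub) (ne_of_lt hlt)
      · exact iff_of_false (not_le.mpr hub) (not_le.mpr hlt)
      · exact iff_of_false (not_lt.mpr (le_of_lt hub)) (not_lt.mpr (le_of_lt hlt))
    · refine ⟨1, one_pos, ?_⟩
      intro d' h1 _
      have hlb : (n : ℝ≥0) < ν c + d' := lt_of_lt_of_le hgt (add_le_add_right h1 _)
      cases op <;> simp only [Guard.sat, CmpOp.holds]
      · exact iff_of_false (not_lt.mpr (le_of_lt hlb)) (not_lt.mpr (le_of_lt hgt))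
      · exact iff_of_false (not_le.mpr hlb) (not_le.mpr hgt)
      · exact iff_of_false (ne_of_gt hlb) (ne_of_gt hgt)
      · exact iff_of_true (le_of_lt hlb) (le_of_lt hgt)
      · exact iff_of_true hlb hgt
  | and g₁ g₂ ih₁ ih₂ =>
    obtain ⟨ε₁, hp₁, hs₁⟩ := ih₁
    obtain ⟨ε₂, hp₂, hs₂⟩ := ih₂
    refine ⟨min ε₁ ε₂, lt_min hp₁ hp₂, fun d' hd1 hd2 => ?_⟩
    have ha : d' < d + ε₁ := lt_of_lt_of_le hd2 (add_le_add_right (min_le_left _ _) _)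
    have hb : d' < d + ε₂ := lt_of_lt_of_le hd2 (add_le_add_right (min_le_right _ _) _)
    exact and_congr (hs₁ d' hd1 ha) (hs₂ d' hd1 hb)
  | or g₁ g₂ ih₁ ih₂ =>
    obtain ⟨ε₁, hp₁, hs₁⟩ := ih₁
    obtain ⟨ε₂, hp₂, hs₂⟩ := ih₂
    refine ⟨min ε₁ ε₂, lt_min hp₁ hp₂, fun d' hd1 hd2 => ?_⟩
    have ha : d' < d + ε₁ := lt_of_lt_of_le hd2 (add_le_add_right (min_le_left _ _) _)
    have hb : d' < d + ε₂ := lt_of_lt_of_le hd2 (add_le_add_right (min_le_right _ _) _)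
    exact or_congr (hs₁ d' hd1 ha) (hs₂ d' hd1 hb)
  | not g ih =>
    obtain ⟨ε, hp, hs⟩ := ih
    exact ⟨ε, hp, fun d' hd1 hd2 => not_congr (hs d' hd1 hd2)⟩

/-! ### Eve's strategy in the simulation game -/

section Sim

variable {k : ℕ} (M' : TimedAut Unit)

/-- Eve's candidate clock values after reading the next letter. -/
def uE (s : Bool × (Fin k → ℝ≥0)) (x : (Unit × ℝ≥0) × (M'.Q × (M'.Cl → ℝ≥0)))
    (c : Fin k) : ℝ≥0 := s.2 c + x.1.2

/-- a value is matched to one of Adam's clocks (same class mod 1). -/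
def matchedE (x : (Unit × ℝ≥0) × (M'.Q × (M'.Cl → ℝ≥0))) (v : ℝ≥0) : Prop :=
  ∃ (c' : M'.Cl) (m : ℤ), ((x.2.2 c' : ℝ)) = (v : ℝ) + m

/-- The set of clocks Eve keeps. -/
def KEve (s : Bool × (Fin k → ℝ≥0)) (x : (Unit × ℝ≥0) × (M'.Q × (M'.Cl → ℝ≥0))) :
    Set (Fin k) :=
  {c | uE M' s x c < 1 ∧ matchedE M' x (uE M' s x c) ∧
    ∀ c₂, uE M' s x c₂ = uE M' s x c → c ≤ c₂}

open Classical in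
/-- Eve's strategy: one step. -/
noncomputable def fEve (s : Bool × (Fin k → ℝ≥0))
    (x : (Unit × ℝ≥0) × (M'.Q × (M'.Cl → ℝ≥0))) : Bool × (Fin k → ℝ≥0) :=
  (if ∃ c, uE M' s x c = 1 then true else false,
    fun c => if c ∈ KEve M' s x then uE M' s x c else 0)

lemma fEve_step (s : Bool × (Fin k → ℝ≥0))
    (x : (Unit × ℝ≥0) × (M'.Q × (M'.Cl → ℝ≥0))) :
    (Mk k).Step s x.1 (fEve M' s x) := by
  classical
  set Fs : Finset (Fin k) := Finset.univ.filter (fun c => c ∉ KEve M' s x) with hFs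
  have hFsm : ∀ c : Fin k, c ∈ (↑Fs : Set (Fin k)) ↔ c ∉ KEve M' s x := by
    intro c
    simp [hFs]
  have hguard : (guardKeep Fs).sat (fun c => s.2 c + x.1.2) := by
    rw [sat_guardKeep]
    intro c hc
    have hcK : c ∈ KEve M' s x := by
      by_contra hno
      exact hc (by simp [hFs, hno])
    exact hcK.1
  have hres : ∀ c ∈ (↑Fs : Set (Fin k)), (fEve M' s x).2 c = 0 := by
    intro c hc
    have : c ∉ KEve M' s x := (hFsm c).mp hc
    simp [fEve, this]
  have hkeep : ∀ c ∉ (↑Fs : Set (Fin k)), (fEve M' s x).2 c = s.2 c + x.1.2 := by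
    intro c hc
    have hcK : c ∈ KEve M' s x := not_not.mp (fun hn => hc ((hFsm c).mpr hn))
    simp [fEve, hcK, uE]
  by_cases hex : ∃ c, uE M' s x c = 1
  · obtain ⟨c₀, hc₀⟩ := hex
    have hc₀F : c₀ ∈ Fs := by
      simp only [hFs, Finset.mem_filter, Finset.mem_univ, true_and]
      intro hK
      exact absurd (hc₀ ▸ hK.1) (lt_irrefl 1)
    have h1 : (fEve M' s x).1 = true := if_pos ⟨c₀, hc₀⟩
    refine ⟨Guard.and (Guard.cmp c₀ .eq 1) (guardKeep Fs), (↑Fs : Set (Fin k)),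
      ?_, ⟨?_, hguard⟩, hres, hkeep⟩
    · rw [h1]
      exact memΔ₂ s.1 Fs c₀ hc₀F
    · show s.2 c₀ + x.1.2 = ((1:ℕ) : ℝ≥0)
      rw [Nat.cast_one]
      exact hc₀
  · have h1 : (fEve M' s x).1 = false := if_neg hex
    refine ⟨guardKeep Fs, (↑Fs : Set (Fin k)), ?_, hguard, hres, hkeep⟩
    rw [h1]
    exact memΔ₁ s.1 Fs

end Sim

/-- An NNReal which is an integer and `< 1` is zero. -/
lemma int_lt_one_eq_zero {v : ℝ≥0} {m : ℤ} (h : (v : ℝ) = m) (hlt : v < 1) : v = 0 := by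
  have h0 : (0 : ℝ) ≤ (m : ℝ) := h ▸ v.coe_nonneg
  have h1 : (m : ℝ) < 1 := by
    rw [← h]
    exact_mod_cast hlt
  have hm : m = 0 := by
    have hb : (0 : ℤ) ≤ m := by exact_mod_cast h0
    have hc : m < 1 := by exact_mod_cast h1
    omega
  have : (v : ℝ) = 0 := by rw [h, hm]; norm_num
  exact_mod_cast this

/-- Two values in [0,1) differing by an integer are equal. -/
lemma eq_of_int_diff {u v : ℝ≥0} {m₁ m₂ : ℤ} {w : ℝ}
    (h₁ : w = (u : ℝ) + m₁) (h₂ : w = (v : ℝ) + m₂)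
    (hu : u < 1) (hv : v < 1) : u = v := by
  have hu1 : (u : ℝ) < 1 := by exact_mod_cast hu
  have hv1 : (v : ℝ) < 1 := by exact_mod_cast hv
  have hu0 : (0 : ℝ) ≤ (u : ℝ) := u.coe_nonneg
  have hv0 : (0 : ℝ) ≤ (v : ℝ) := v.coe_nonneg
  have hdiff : (u : ℝ) - (v : ℝ) = ((m₂ - m₁ : ℤ) : ℝ) := by
    push_cast
    linarith
  have hmb : m₂ - m₁ = 0 := by
    have hl : (-1 : ℝ) < ((m₂ - m₁ : ℤ) : ℝ) := by rw [← hdiff]; linarith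
    have hr : ((m₂ - m₁ : ℤ) : ℝ) < 1 := by rw [← hdiff]; linarith
    have hl' : (-1 : ℤ) < m₂ - m₁ := by exact_mod_cast hl
    have hr' : m₂ - m₁ < 1 := by exact_mod_cast hr
    omega
  have h3 : (u : ℝ) - (v : ℝ) = 0 := by rw [hdiff, hmb]; norm_num
  have h4 : (u : ℝ) = (v : ℝ) := by linarith
  exact_mod_cast h4

section Sim2

variable {k : ℕ} (M' : TimedAut Unit)

/-- Capacity: if Adam has an integer clock then Eve has a zero clock. -/
lemma zero_kept (hk : 1 ≤ k) (hfin : Finite M'.Cl) (hcard : Nat.card M'.Cl ≤ k)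
    (s : Bool × (Fin k → ℝ≥0)) (x : (Unit × ℝ≥0) × (M'.Q × (M'.Cl → ℝ≥0)))
    (hint : ∃ (c'' : M'.Cl) (m : ℤ), ((x.2.2 c'' : ℝ)) = m) :
    ∃ c : Fin k, (fEve M' s x).2 c = 0 := by
  classical
  by_contra hno
  push_neg at hno
  have hK : ∀ c : Fin k, c ∈ KEve M' s x ∧ uE M' s x c ≠ 0 := by
    intro c
    by_cases hc : c ∈ KEve M' s x
    · refine ⟨hc, fun h0 => hno c ?_⟩
      simp [fEve, hc, h0]
    · exact absurd (by simp [fEve, hc] : (fEve M' s x).2 c = 0) (hno c)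
  obtain ⟨c'', m'', h''⟩ := hint
  haveI := Fintype.ofFinite M'.Cl
  have hm : ∀ c : Fin k, ∃ (c' : M'.Cl) (m : ℤ),
      ((x.2.2 c' : ℝ)) = (uE M' s x c : ℝ) + m := fun c => (hK c).1.2.1
  choose A mA hA using hm
  have hinj : Function.Injective (fun o : Option (Fin k) => o.elim c'' A) := by
    intro o₁ o₂ heq
    match o₁, o₂ with
    | none, none => rfl
    | some c, none =>
      exfalso
      have hAc : A c = c'' := heq
      have h1 : ((x.2.2 c'' : ℝ)) = (uE M' s x c : ℝ) + mA c := hAc ▸ hA c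
      have : (uE M' s x c : ℝ) = ((m'' - mA c : ℤ) : ℝ) := by
        push_cast
        linarith [h'', h1]
      exact (hK c).2 (int_lt_one_eq_zero this (hK c).1.1)
    | none, some c =>
      exfalso
      have hAc : c'' = A c := heq
      have h1 : ((x.2.2 c'' : ℝ)) = (uE M' s x c : ℝ) + mA c := by rw [hAc]; exact hA c
      have : (uE M' s x c : ℝ) = ((m'' - mA c : ℤ) : ℝ) := by
        push_cast
        linarith [h'', h1]
      exact (hK c).2 (int_lt_one_eq_zero this (hK c).1.1)
    | some c₁, some c₂ =>
      have hAc : A c₁ = A c₂ := heq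
      have h1 := hA c₁
      have h2 := hA c₂
      rw [hAc] at h1
      have hequ : uE M' s x c₁ = uE M' s x c₂ :=
        (eq_of_int_diff h1 h2 (hK c₁).1.1 (hK c₂).1.1).symm ▸ rfl
      have h21 : c₂ ≤ c₁ := (hK c₂).1.2.2 c₁ hequ
      have h12 : c₁ ≤ c₂ := (hK c₁).1.2.2 c₂ hequ.symm
      rw [le_antisymm h12 h21]
  have hcle : Fintype.card (Option (Fin k)) ≤ Fintype.card M'.Cl :=
    Fintype.card_le_of_injective _ hinj
  rw [Fintype.card_option, Fintype.card_fin] at hcle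
  rw [Nat.card_eq_fintype_card] at hcard
  omega

/-- Eve's invariant along valid histories. -/
def INVp (kk : ℕ) (M' : TimedAut Unit)
    (h : List ((Unit × ℝ≥0) × (M'.Q × (M'.Cl → ℝ≥0)))) : Prop :=
  ∀ (c' : M'.Cl) (τ : ℝ≥0), τ ∈ tms0 (h.map Prod.fst) →
    ((total (h.map Prod.fst) : ℝ) < (τ : ℝ) + 1) →
    (∃ m : ℤ, (((M'.endCfg M'.initCfg h).2 c' : ℝ)) + (τ : ℝ)
        = ((total (h.map Prod.fst) : ℝ)) + m) →
    ∃ c : Fin kk, (h.foldl (fEve M') (Mk kk).initCfg).2 c + τ = total (h.map Prod.fst)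

lemma INV_valid (hk : 1 ≤ k) (hfin : Finite M'.Cl) (hcard : Nat.card M'.Cl ≤ k) :
    ∀ h, M'.ValidFrom M'.initCfg h → INVp k M' h := by
  intro h
  induction h using List.reverseRecOn with
  | nil =>
    intro _ c' τ hτ _ _
    obtain ⟨j, hj, rfl⟩ := hτ
    refine ⟨⟨0, hk⟩, ?_⟩
    simp [TimedAut.initCfg, total]
  | append_singleton h x ih =>
    intro hvalid c' τ hτ hvia hclass
    rw [validFrom_append] at hvalid
    obtain ⟨vh, stepA⟩ := hvalid
    have ihh := ih vh
    have hmap : ((h ++ [x]).map Prod.fst) = h.map Prod.fst ++ [x.1] := by simp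
    have hend : M'.endCfg M'.initCfg (h ++ [x]) = x.2 := endCfg_append M' _ h x
    have hfold : ((h ++ [x]).foldl (fEve M') (Mk k).initCfg)
        = fEve M' (h.foldl (fEve M') (Mk k).initCfg) x := by
      rw [List.foldl_append]
      rfl
    set w : List (Unit × ℝ≥0) := h.map Prod.fst with hw
    set e' := h.foldl (fEve M') (Mk k).initCfg with he'
    set d : ℝ≥0 := x.1.2 with hd
    have htpr : total (w ++ [x.1]) = total w + d := total_append w x.1
    rw [hmap] at hτ hvia ⊢
    rw [hend, hmap] at hclass
    rw [hfold]
    by_cases hτnew : τ = total (w ++ [x.1])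
    · subst hτnew
      obtain ⟨m, hm⟩ := hclass
      have hint : ∃ (c'' : M'.Cl) (m : ℤ), ((x.2.2 c'' : ℝ)) = m :=
        ⟨c', m, by linarith⟩
      obtain ⟨c, hc⟩ := zero_kept M' hk hfin hcard e' x hint
      exact ⟨c, by rw [hc, zero_add]⟩
    · have hτold : τ ∈ tms0 w := (tms0_append_elim w x.1 hτ).resolve_right hτnew
      obtain ⟨g', X', htr', hg', hres', hkeep'⟩ := stepA
      have hτle' : τ ≤ total (w ++ [x.1]) := tms0_le _ hτ
      by_cases hcX : c' ∈ X'
      · exfalso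
        have h0 : x.2.2 c' = 0 := hres' c' hcX
        obtain ⟨m, hm⟩ := hclass
        rw [h0] at hm
        have hvd : ((total (w ++ [x.1]) - τ : ℝ≥0) : ℝ) = ((-m : ℤ) : ℝ) := by
          rw [NNReal.coe_sub hτle']
          push_cast at hm ⊢
          linarith
        have hvd1 : total (w ++ [x.1]) - τ < 1 := by
          have h2 : ((total (w ++ [x.1]) - τ : ℝ≥0) : ℝ) < 1 := by
            rw [NNReal.coe_sub hτle']
            linarith [hvia]
          exact_mod_cast h2
        have hvd0 := int_lt_one_eq_zero hvd hvd1
        exact hτnew (le_antisymm hτle' (tsub_eq_zero_iff_le.mp hvd0))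
      · have hvc : x.2.2 c' = (M'.endCfg M'.initCfg h).2 c' + d := hkeep' c' hcX
        obtain ⟨m, hm⟩ := hclass
        have htpr' : ((total (w ++ [x.1]) : ℝ)) = (total w : ℝ) + (d : ℝ) := by
          exact_mod_cast htpr
        have hclass' : ∃ m : ℤ, (((M'.endCfg M'.initCfg h).2 c' : ℝ)) + (τ : ℝ)
            = ((total w : ℝ)) + m := by
          refine ⟨m, ?_⟩
          rw [hvc] at hm
          push_cast at hm ⊢
          linarith
        have hviaw : ((total w : ℝ)) < (τ : ℝ) + 1 := by
          have hle : (total w : ℝ) ≤ (total (w ++ [x.1]) : ℝ) := by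
            rw [htpr']
            exact le_add_of_nonneg_right d.coe_nonneg
          linarith [hvia]
        obtain ⟨c, hc⟩ := ihh c' τ hτold hviaw hclass'
        have huval : uE M' e' x c + τ = total (w ++ [x.1]) := by
          show (e'.2 c + d) + τ = total (w ++ [x.1])
          rw [add_right_comm, hc, htpr]
        have h1r : (uE M' e' x c : ℝ) + τ = (total (w ++ [x.1]) : ℝ) := by
          exact_mod_cast huval
        have hult : uE M' e' x c < 1 := by
          have h2 : (uE M' e' x c : ℝ) < 1 := by linarith [hvia]
          exact_mod_cast h2
        have humat : matchedE M' x (uE M' e' x c) := by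
          refine ⟨c', m, ?_⟩
          push_cast at hm ⊢
          linarith
        classical
        have hne : (Finset.univ.filter
            (fun c₂ => uE M' e' x c₂ = uE M' e' x c)).Nonempty := ⟨c, by simp⟩
        set c₂ := Finset.min' _ hne with hc₂def
        have hc₂v : uE M' e' x c₂ = uE M' e' x c := by
          have := Finset.min'_mem _ hne
          simpa using this
        have hc₂K : c₂ ∈ KEve M' e' x := by
          refine ⟨by rw [hc₂v]; exact hult, by rw [hc₂v]; exact humat, ?_⟩
          intro c₃ h₃
          exact Finset.min'_le _ _ (by simp [h₃.trans hc₂v])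
        refine ⟨c₂, ?_⟩
        have hval2 : (fEve M' e' x).2 c₂ = uE M' e' x c₂ := by
          simp [fEve, hc₂K]
        rw [hval2, hc₂v]
        exact huval

lemma Mk_sim (hk : 1 ≤ k) (hWF' : M'.WF)
    (hcard : Nat.card M'.Cl ≤ k) (hsub : M'.LangFin ⊆ (Mk k).LangFin) :
    (Mk k).SimFin M' := by
  classical
  have hfin : Finite M'.Cl := hWF'.2.1
  refine ⟨fun h => some (h.foldl (fEve M') (Mk k).initCfg), rfl, ?_, ?_⟩
  · intro h x s' hs'
    refine ⟨h.foldl (fEve M') (Mk k).initCfg, rfl, ?_⟩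
    have hfold : ((h ++ [x]).foldl (fEve M') (Mk k).initCfg)
        = fEve M' (h.foldl (fEve M') (Mk k).initCfg) x := by
      rw [List.foldl_append]; rfl
    have hs2 : some (List.foldl (fEve M') (Mk k).initCfg (h ++ [x])) = some s' := hs'
    rw [hfold] at hs2
    have heq : s' = fEve M' (h.foldl (fEve M') (Mk k).initCfg) x :=
      (Option.some_inj.mp hs2).symm
    rw [heq]
    exact fEve_step M' _ x
  · intro h hvalid
    refine ⟨_, rfl, ?_⟩
    intro hF'
    have hwlang : (h.map Prod.fst) ∈ M'.LangFin :=
      ⟨_, validRun M' _ h hvalid, hF'⟩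
    obtain ⟨w', xx, hdec, τ, hτ, htot, hvia⟩ := langA _ (hsub hwlang)
    obtain ⟨h', x, hh⟩ : ∃ h' x, h = h' ++ [x] := by
      rcases List.eq_nil_or_concat h with rfl | ⟨h', x, hh⟩
      · exfalso
        simp at hdec
      · exact ⟨h', x, by rw [hh, List.concat_eq_append]⟩
    subst hh
    have hmap : ((h' ++ [x]).map Prod.fst) = h'.map Prod.fst ++ [x.1] := by simp
    rw [hmap] at hdec
    obtain ⟨hw', -⟩ := List.append_inj' hdec rfl
    subst hw'
    rw [validFrom_append] at hvalid
    obtain ⟨vh', stepA⟩ := hvalid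
    have hend : M'.endCfg M'.initCfg (h' ++ [x]) = x.2 := endCfg_append M' _ h' x
    set w : List (Unit × ℝ≥0) := h'.map Prod.fst with hwdef
    set d : ℝ≥0 := x.1.2 with hd
    set α' := M'.endCfg M'.initCfg h' with hα'
    obtain ⟨g', X', htr', hg', hres', hkeep'⟩ := stepA
    rw [hmap] at htot
    have htpr : total (w ++ [x.1]) = total w + d := total_append w x.1
    have htd : total w + d = τ + 1 := by rw [← htpr]; exact htot
    have hiso : ∃ (ca : M'.Cl) (n : ℕ), α'.2 ca + d = (n : ℝ≥0) := by
      by_contra hno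
      push_neg at hno
      obtain ⟨ε, hεpos, hstab⟩ := guard_stable g' α'.2 d hno
      have hmemall : ∀ d'' ∈ Set.Ico d (d + ε),
          (total w + d'') ∈ (fun τ' => τ' + 1) '' tms0 w := by
        rintro d'' ⟨hd1, hd2⟩
        have hsat'' : g'.sat (fun c => α'.2 c + d'') := (hstab d'' hd1 hd2).mpr hg'
        have hstep'' : M'.Step α' ((), d'')
            (x.2.1, fun c => if c ∈ X' then 0 else α'.2 c + d'') := by
          refine ⟨g', X', htr', hsat'', fun c hc => by simp [hc],
            fun c hc => by simp [hc]⟩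
        have hrun'' := (run_snoc M' M'.initCfg _ w (((), d''))).mpr
          ⟨α', validRun M' _ h' vh', hstep''⟩
        have hacc'' : (x.2.1 : M'.Q) ∈ M'.F := by rw [hend] at hF'; exact hF'
        obtain ⟨w₀, x₀, hdec'', τ'', hτ'', htot'', -⟩ :=
          langA _ (hsub ⟨_, hrun'', hacc''⟩)
        obtain ⟨hw₀, -⟩ := List.append_inj' hdec'' rfl
        refine ⟨τ'', by rw [hw₀]; exact hτ'', ?_⟩
        show τ'' + 1 = total w + d''
        rw [← htot'']
        exact total_append w _
      have hinf : (Set.Ico d (d + ε)).Infinite :=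
        Set.Ico_infinite (lt_add_of_pos_right d hεpos)
      have himg : ((fun d'' => total w + d'') '' Set.Ico d (d + ε)).Infinite :=
        hinf.image (fun a _ b _ hab => add_left_cancel hab)
      refine himg (Set.Finite.subset ((tms0_finite w).image (fun τ' => τ' + 1)) ?_)
      rintro y ⟨d'', hd'', rfl⟩
      exact hmemall d'' hd''
    obtain ⟨ca, n, hca⟩ := hiso
    have hviaw : ((total w : ℝ)) < (τ : ℝ) + 1 := by exact_mod_cast hvia
    have hclass : ∃ m : ℤ, ((α'.2 ca : ℝ)) + (τ : ℝ) = ((total w : ℝ)) + m := by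
      refine ⟨(n : ℤ) - 1, ?_⟩
      have h1 : (α'.2 ca : ℝ) + (d : ℝ) = (n : ℝ) := by exact_mod_cast hca
      have h2 : (total w : ℝ) + (d : ℝ) = (τ : ℝ) + 1 := by exact_mod_cast htd
      push_cast
      linarith
    obtain ⟨c, hc⟩ := INV_valid M' hk hfin hcard h' vh' ca τ hτ hviaw hclass
    have hu1 : uE M' (h'.foldl (fEve M') (Mk k).initCfg) x c = 1 := by
      have h1 : uE M' (h'.foldl (fEve M') (Mk k).initCfg) x c + τ = 1 + τ := by
        show ((h'.foldl (fEve M') (Mk k).initCfg).2 c + d) + τ = 1 + τ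
        rw [add_right_comm, hc, htd, add_comm]
      exact add_right_cancel h1
    show ((h' ++ [x]).foldl (fEve M') (Mk k).initCfg).1 ∈ (Mk k).F
    have hfold : ((h' ++ [x]).foldl (fEve M') (Mk k).initCfg)
        = fEve M' (h'.foldl (fEve M') (Mk k).initCfg) x := by
      rw [List.foldl_append]; rfl
    rw [hfold]
    have h1 : (fEve M' (h'.foldl (fEve M') (Mk k).initCfg) x).1 = true :=
      if_pos ⟨c, hu1⟩
    rw [h1]
    rfl

end Sim2

end Proof

/-- For every `k ≥ 1` there is a timed automaton `M` over finite timed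
words with exactly `k` clocks that is guidable with respect to the class `T_k` of timed
automata over finite timed words with at most `k` clocks (over its alphabet), but that is
not history-deterministic; hence history-determinism and guidability are distinct
notions for `T_k`. -/
theorem timed_bounded_clocks_guidable_not_hd (k : ℕ) (hk : 1 ≤ k) :
    ∃ (Al : Type) (_ : Finite Al) (M : TimedAut Al),
      M.WF ∧ Nat.card M.Cl = k ∧
      (∀ M' : TimedAut Al, M'.WF → Nat.card M'.Cl ≤ k →
        M'.LangFin ⊆ M.LangFin → M.SimFin M') ∧
      ¬ M.HDFin := by
  refine ⟨Unit, inferInstance, Proof.Mk k, Proof.Mk_WF k, ?_, ?_, Proof.Mk_not_HD k hk⟩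
  · show Nat.card (Fin k) = k
    simp
  · intro M' hWF' hcard hsub
    exact Proof.Mk_sim M' hk hWF' hcard hsub
end
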